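/- arXiv:0812.1938 — 6 statements merged into one kernel-verified Lean document; each statement's English description precedes it below -/
import Mathlib

section
/- Let $G$ be a topologically ordered directed acyclic graph on $[m]$, $\Lambda = I - L$ with $L$ the upper-triangular matrix of edge parameters $\lambda_{ij}$, and $\Phi = \mathrm{diag}(\phi_1,\dots,\phi_m)$. Define $\Sigma = \Lambda^{-\top}\Phi\Lambda^{-1}$. Then for all $i,j \in [m]$, $\sigma_{ij} = \sum_{(P_1,P_2) \in \mathcal{T}(i,j)} \phi_{\mathrm{top}(P_1,P_2)}\, \lambda^{P_1}\lambda^{P_2}$, where $\mathcal{T}(i,j)$ is the set of treks from $i$ to $j$ in $G$ (the trek rule). -/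
set_option linter.unusedSectionVars false


open Matrix MvPolynomial

/-- A directed path, as the list of its vertices, from `i` to `j`. -/
def IsPath {V : Type*} (E : V → V → Prop) (p : List V) (i j : V) : Prop :=
  p.head? = some i ∧ p.getLast? = some j ∧ p.Chain' E

/-- The path monomial: product of edge weights along a path. -/
noncomputable def pathMonomial {V : Type*} {R : Type*} [CommRing R]
    (w : V × V → R) (p : List V) : R :=
  ((p.zip p.tail).map w).prod

/-- A trek from `i` to `j`: an ordered pair of directed paths with a common source
(the top), the first ending at `i` and the second ending at `j`. -/
def IsTrek {V : Type*} (E : V → V → Prop) (P₁ P₂ : List V) (i j : V) : Prop :=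
  ∃ k, IsPath E P₁ k i ∧ IsPath E P₂ k j

/-- `Λ = I - L`, with `L` the matrix of edge indeterminates of the graph, over the
polynomial ring with a variable `λ_e` for each edge `e` and `φ_v` for each vertex. -/
noncomputable def LamMat (m : ℕ) (E : Fin m → Fin m → Prop) [DecidableRel E] :
    Matrix (Fin m) (Fin m) (MvPolynomial ((Fin m × Fin m) ⊕ Fin m) ℝ) :=
  1 - Matrix.of (fun a b => if E a b then X (Sum.inl (a, b)) else 0)

/-- The generic covariance matrix `Σ = Λ⁻ᵀ Φ Λ⁻¹` of the DAG. -/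
noncomputable def SigMat (m : ℕ) (E : Fin m → Fin m → Prop) [DecidableRel E] :
    Matrix (Fin m) (Fin m) (MvPolynomial ((Fin m × Fin m) ⊕ Fin m) ℝ) :=
  ((LamMat m E)⁻¹)ᵀ * Matrix.diagonal (fun v => X (Sum.inr v)) * (LamMat m E)⁻¹

section Aux

variable {m : ℕ} (E : Fin m → Fin m → Prop) [DecidableRel E]

abbrev TrekPoly (m : ℕ) := MvPolynomial ((Fin m × Fin m) ⊕ Fin m) ℝ

noncomputable def pmon {m : ℕ} : List (Fin m) → TrekPoly m :=
  pathMonomial (fun e => X (Sum.inl e))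

def pathSet (a b : Fin m) : Set (List (Fin m)) := {p | IsPath E p a b}

variable {E}

lemma isPath_singleton {x a b : Fin m} : IsPath E [x] a b ↔ a = x ∧ b = x := by
  simp [IsPath, eq_comm, List.Chain', List.isChain_singleton]

lemma isPath_cons {x y a b : Fin m} {r : List (Fin m)} :
    IsPath E (x :: y :: r) a b ↔ a = x ∧ E x y ∧ IsPath E (y :: r) y b := by
  simp [IsPath, List.Chain', List.isChain_cons_cons, eq_comm]
  tauto

lemma path_length_le (hE : ∀ i j : Fin m, E i j → i < j) {p : List (Fin m)} {a b : Fin m}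
    (hp : IsPath E p a b) : p.length ≤ m := by
  have hc : p.Chain' (· < ·) := hp.2.2.imp fun a b h => hE a b h
  have hn : p.Nodup := (List.isChain_iff_pairwise.mp hc).imp ne_of_lt
  simpa using hn.length_le_card

lemma pathSet_finite (hE : ∀ i j : Fin m, E i j → i < j) (a b : Fin m) :
    (pathSet E a b).Finite :=
  (List.finite_length_le (Fin m) m).subset fun _ hp => path_length_le hE hp

lemma head?_of_mem_pathSet {p : List (Fin m)} {a b : Fin m} (hp : p ∈ pathSet E a b) :
    p.head? = some a := hp.1

end Aux

section Rec
variable {m : ℕ} {E : Fin m → Fin m → Prop} [DecidableRel E]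

noncomputable def pSum (E : Fin m → Fin m → Prop) (a b : Fin m) : TrekPoly m :=
  ∑ᶠ p ∈ pathSet E a b, pmon p

lemma pmon_single (a : Fin m) : pmon ([a] : List (Fin m)) = 1 := by
  simp [pmon, pathMonomial]

lemma pmon_cons {a c : Fin m} {q : List (Fin m)} (hq : q.head? = some c) :
    pmon (a :: q) = X (Sum.inl (a, c)) * pmon q := by
  cases q with
  | nil => simp at hq
  | cons y r =>
    obtain rfl : y = c := by simpa using hq
    simp [pmon, pathMonomial]

lemma pathSet_decomp (a b : Fin m) :
    pathSet E a b = (if a = b then {[a]} else (∅ : Set (List (Fin m)))) ∪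
      ⋃ c, {p | E a c ∧ ∃ q ∈ pathSet E c b, p = a :: q} := by
  ext p
  simp only [Set.mem_union, Set.mem_iUnion, Set.mem_setOf_eq]
  constructor
  · intro hp
    match p with
    | [] => exact absurd hp.1 (by simp)
    | [x] =>
      obtain ⟨rfl, rfl⟩ := isPath_singleton.mp hp
      left; simp
    | x :: y :: r =>
      obtain ⟨rfl, hxy, hrest⟩ := isPath_cons.mp hp
      exact Or.inr ⟨y, hxy, y :: r, hrest, rfl⟩
  · rintro (h | ⟨c, hac, q, hq, rfl⟩)
    · by_cases hab : a = b
      · rw [if_pos hab] at h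
        obtain rfl : p = [a] := h
        exact isPath_singleton.mpr ⟨rfl, hab.symm⟩
      · rw [if_neg hab] at h; exact absurd h (Set.notMem_empty p)
    · cases q with
      | nil => exact absurd (head?_of_mem_pathSet hq) (by simp)
      | cons y r =>
        obtain rfl : y = c := by simpa using head?_of_mem_pathSet hq
        exact isPath_cons.mpr ⟨rfl, hac, hq⟩

lemma sum_T (hE : ∀ i j : Fin m, E i j → i < j) (a b c : Fin m) :
    ∑ᶠ p ∈ {p : List (Fin m) | E a c ∧ ∃ q ∈ pathSet E c b, p = a :: q}, pmon p
    = (if E a c then X (Sum.inl (a, c)) else 0) * pSum E c b := by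
  by_cases h : E a c
  · rw [if_pos h]
    have hset : {p : List (Fin m) | E a c ∧ ∃ q ∈ pathSet E c b, p = a :: q}
        = (a :: ·) '' pathSet E c b := by
      ext p; simp [h, eq_comm]
    rw [hset, finsum_mem_image (fun q₁ _ q₂ _ hh => by simpa using hh),
      finsum_mem_congr rfl (fun q hq => pmon_cons (head?_of_mem_pathSet hq)),
      finsum_mem_eq_finite_toFinset_sum _ (pathSet_finite hE c b),
      pSum, finsum_mem_eq_finite_toFinset_sum _ (pathSet_finite hE c b), Finset.mul_sum]
  · rw [if_neg h]
    have hset : {p : List (Fin m) | E a c ∧ ∃ q ∈ pathSet E c b, p = a :: q} = ∅ := by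
      ext p; simp [h]
    simp [hset]

lemma pSum_rec (hE : ∀ i j : Fin m, E i j → i < j) (a b : Fin m) :
    pSum E a b = (if a = b then 1 else 0)
      + ∑ c, (if E a c then X (Sum.inl (a, c)) else 0) * pSum E c b := by
  classical
  have hfin1 : (if a = b then ({[a]} : Set (List (Fin m))) else ∅).Finite := by
    split_ifs
    exacts [Set.finite_singleton _, Set.finite_empty]
  have hfinT : ∀ c, {p : List (Fin m) | E a c ∧ ∃ q ∈ pathSet E c b, p = a :: q}.Finite := by
    intro c
    refine ((pathSet_finite hE c b).image (a :: ·)).subset ?_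
    rintro p ⟨-, q, hq, rfl⟩
    exact Set.mem_image_of_mem _ hq
  have hdisj : Disjoint (if a = b then ({[a]} : Set (List (Fin m))) else ∅)
      (⋃ c, {p : List (Fin m) | E a c ∧ ∃ q ∈ pathSet E c b, p = a :: q}) := by
    rw [Set.disjoint_left]
    intro p hp hp2
    have hp1 : p = [a] := by
      split_ifs at hp with hab
      · exact hp
      · exact absurd hp (Set.notMem_empty p)
    obtain ⟨c, hc⟩ := Set.mem_iUnion.mp hp2
    obtain ⟨-, q, hq, rfl⟩ := hc
    have := head?_of_mem_pathSet hq
    obtain rfl : q = [] := by injection hp1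
    simp at this
  have hpair : Pairwise (Function.onFun Disjoint
      (fun c => {p : List (Fin m) | E a c ∧ ∃ q ∈ pathSet E c b, p = a :: q})) := by
    intro c c' hcc'
    rw [Function.onFun, Set.disjoint_left]
    rintro p ⟨-, q, hq, rfl⟩ ⟨-, q', hq', heq⟩
    obtain rfl : q = q' := by injection heq
    have h1 := head?_of_mem_pathSet hq
    have h2 := head?_of_mem_pathSet hq'
    rw [h1] at h2
    exact hcc' (by injection h2)
  rw [pSum, pathSet_decomp a b, finsum_mem_union hdisj hfin1 (Set.finite_iUnion hfinT),
    finsum_mem_iUnion hpair hfinT]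
  congr 1
  · split_ifs with hab
    · subst hab; rw [finsum_mem_singleton, pmon_single]
    · exact finsum_mem_empty
  · rw [finsum_eq_sum_of_fintype]
    exact Finset.sum_congr rfl fun c _ => sum_T hE a b c

end Rec

section Inv
variable {m : ℕ} {E : Fin m → Fin m → Prop} [DecidableRel E]

lemma lam_inv (hE : ∀ i j : Fin m, E i j → i < j) :
    (LamMat m E)⁻¹ = Matrix.of (fun a b => pSum E a b) := by
  apply Matrix.inv_eq_right_inv
  ext a b
  rw [Matrix.mul_apply, Matrix.one_apply]
  simp only [LamMat, Matrix.sub_apply, Matrix.one_apply, Matrix.of_apply, sub_mul, ite_mul,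
    one_mul, zero_mul]
  rw [Finset.sum_sub_distrib, Finset.sum_ite_eq]
  simp only [Finset.mem_univ, if_true]
  rw [pSum_rec hE a b]
  simp only [ite_mul, zero_mul]
  rw [add_sub_cancel_right]

lemma key_prod (hE : ∀ i j : Fin m, E i j → i < j) (i j k : Fin m) :
    ∑ᶠ t ∈ (pathSet E k i) ×ˢ (pathSet E k j),
      (X (Sum.inr (t.1.head?.getD i)) * pmon t.1 * pmon t.2 : TrekPoly m)
    = X (Sum.inr k) * pSum E k i * pSum E k j := by
  have h1 : ∀ t ∈ (pathSet E k i) ×ˢ (pathSet E k j),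
      (X (Sum.inr (t.1.head?.getD i)) * pmon t.1 * pmon t.2 : TrekPoly m)
      = X (Sum.inr k) * pmon t.1 * pmon t.2 := by
    rintro ⟨p₁, p₂⟩ ⟨hp₁, hp₂⟩
    rw [head?_of_mem_pathSet hp₁]
    rfl
  rw [finsum_mem_congr rfl h1,
    finsum_mem_eq_finite_toFinset_sum _ ((pathSet_finite hE k i).prod (pathSet_finite hE k j)),
    ← Set.Finite.toFinset_prod (pathSet_finite hE k i) (pathSet_finite hE k j),
    Finset.sum_product, pSum, pSum,
    finsum_mem_eq_finite_toFinset_sum _ (pathSet_finite hE k i),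
    finsum_mem_eq_finite_toFinset_sum _ (pathSet_finite hE k j),
    mul_assoc, Finset.sum_mul_sum, Finset.mul_sum]
  refine Finset.sum_congr rfl fun p₁ _ => ?_
  rw [Finset.mul_sum]
  exact Finset.sum_congr rfl fun p₂ _ => by ring


end Inv

/-- **The trek rule.** For a topologically ordered DAG `G` on `[m]`, with
`Λ = I - L` (edge indeterminates `λ`) and `Φ = diag(φ₁,…,φ_m)`, the entries of
`Σ = Λ⁻ᵀ Φ Λ⁻¹` satisfy `σ_{ij} = ∑_{(P₁,P₂) ∈ 𝒯(i,j)} φ_top λ^{P₁} λ^{P₂}`. -/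
theorem stmt1 (m : ℕ) (E : Fin m → Fin m → Prop) [DecidableRel E]
    (hE : ∀ i j : Fin m, E i j → i < j) (i j : Fin m) :
    SigMat m E i j
    = ∑ᶠ t : {t : List (Fin m) × List (Fin m) // IsTrek E t.1 t.2 i j},
        X (Sum.inr (t.1.1.head?.getD i))
          * pathMonomial (fun e => X (Sum.inl e)) t.1.1
          * pathMonomial (fun e => X (Sum.inl e)) t.1.2 := by
  classical
  have hsub : (∑ᶠ t : {t : List (Fin m) × List (Fin m) // IsTrek E t.1 t.2 i j},
        (X (Sum.inr (t.1.1.head?.getD i)) * pmon t.1.1 * pmon t.1.2 : TrekPoly m))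
      = ∑ᶠ t ∈ {t : List (Fin m) × List (Fin m) | IsTrek E t.1 t.2 i j},
          (X (Sum.inr (t.1.head?.getD i)) * pmon t.1 * pmon t.2 : TrekPoly m) :=
    finsum_set_coe_eq_finsum_mem
      (f := fun t : List (Fin m) × List (Fin m) =>
        X (Sum.inr (t.1.head?.getD i)) * pmon t.1 * pmon t.2)
      {t : List (Fin m) × List (Fin m) | IsTrek E t.1 t.2 i j}
  have hset : {t : List (Fin m) × List (Fin m) | IsTrek E t.1 t.2 i j}
      = ⋃ k, (pathSet E k i) ×ˢ (pathSet E k j) := by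
    ext t
    simp only [Set.mem_setOf_eq, Set.mem_iUnion, Set.mem_prod]
    exact Iff.rfl
  have hpair : Pairwise (Function.onFun Disjoint
      (fun k => (pathSet E k i) ×ˢ (pathSet E k j))) := by
    intro k k' hkk'
    rw [Function.onFun, Set.disjoint_left]
    rintro ⟨p₁, p₂⟩ ⟨h1, -⟩ ⟨h1', -⟩
    have h2 := head?_of_mem_pathSet h1'
    rw [head?_of_mem_pathSet h1] at h2
    exact hkk' (by injection h2)
  have hfin : ∀ k, ((pathSet E k i) ×ˢ (pathSet E k j)).Finite :=
    fun k => (pathSet_finite hE k i).prod (pathSet_finite hE k j)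
  simp only [show (pathMonomial (fun e => X (Sum.inl e)) : List (Fin m) → TrekPoly m) = pmon
    from rfl]
  rw [hsub, hset, finsum_mem_iUnion hpair hfin, finsum_eq_sum_of_fintype]
  have lhs : SigMat m E i j = ∑ k, pSum E k i * X (Sum.inr k) * pSum E k j := by
    unfold SigMat
    rw [lam_inv hE, Matrix.mul_apply]
    simp only [Matrix.mul_diagonal, Matrix.transpose_apply, Matrix.of_apply]
  rw [lhs]
  refine Finset.sum_congr rfl fun k _ => ?_
  rw [key_prod hE i j k]
  ring
end

section
/- Let $X \sim \mathcal{N}(\mu, \Sigma)$ be a multivariate normal random vector with positive definite covariance $\Sigma$, and let $A$, $B$, $C$ be disjoint subsets of the index set $[m]$. Then the conditional independence statement $X_A \perp\!\!\!\perp X_B \mid X_C$ holds if and only if the submatrix $\Sigma_{A\cup C,\, B\cup C}$ has rank exactly $\#C$. -/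
open Matrix

section Aux

variable {l n o p : Type*} [Fintype l] [Fintype n] [Fintype o] [Fintype p]
  [DecidableEq l] [DecidableEq n] [DecidableEq o] [DecidableEq p]

/-- The product of submodules is linearly equivalent to the product. -/
noncomputable def prodSubmoduleEquiv {M N : Type*} [AddCommGroup M] [Module ℝ M]
    [AddCommGroup N] [Module ℝ N] (pp : Submodule ℝ M) (q : Submodule ℝ N) :
    (pp.prod q) ≃ₗ[ℝ] pp × q where
  toFun x := (⟨x.1.1, x.2.1⟩, ⟨x.1.2, x.2.2⟩)
  invFun y := ⟨(y.1.1, y.2.1), ⟨y.1.2, y.2.2⟩⟩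
  map_add' _ _ := rfl
  map_smul' _ _ := rfl
  left_inv _ := rfl
  right_inv _ := rfl

lemma finrank_prod_submodule {M N : Type*} [AddCommGroup M] [Module ℝ M]
    [AddCommGroup N] [Module ℝ N] [FiniteDimensional ℝ M] [FiniteDimensional ℝ N]
    (pp : Submodule ℝ M) (q : Submodule ℝ N) :
    Module.finrank ℝ (pp.prod q) = Module.finrank ℝ pp + Module.finrank ℝ q := by
  rw [(prodSubmoduleEquiv pp q).finrank_eq, Module.finrank_prod]

lemma rank_reindex' {l' n' : Type*} [Fintype n']
    (A : Matrix l n ℝ) (e₁ : l ≃ l') (e₂ : n ≃ n') :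
    (Matrix.reindex e₁ e₂ A).rank = A.rank := by
  rw [rank, rank, mulVecLin_reindex, LinearMap.range_comp, LinearMap.range_comp,
    LinearEquiv.range, Submodule.map_top, LinearEquiv.finrank_map_eq]

lemma rank_submatrix' {l' n' : Type*} [Fintype n] [Fintype n']
    (A : Matrix l n ℝ) (e₁ : l' ≃ l) (e₂ : n' ≃ n) :
    (A.submatrix e₁ e₂).rank = A.rank := by
  have : A.submatrix e₁ e₂ = Matrix.reindex e₁.symm e₂.symm A := rfl
  rw [this, rank_reindex']

lemma rank_fromBlocks_diag (A : Matrix l n ℝ) (D : Matrix o p ℝ) :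
    (fromBlocks A 0 0 D).rank = A.rank + D.rank := by
  have hmap : Submodule.map
      ((LinearEquiv.sumArrowLequivProdArrow l o ℝ ℝ) : (l ⊕ o → ℝ) →ₗ[ℝ] (l → ℝ) × (o → ℝ))
      (LinearMap.range (fromBlocks A 0 0 D).mulVecLin)
      = (LinearMap.range A.mulVecLin).prod (LinearMap.range D.mulVecLin) := by
    ext y
    simp only [Submodule.mem_map, LinearMap.mem_range, Submodule.mem_prod]
    constructor
    · rintro ⟨-, ⟨x, rfl⟩, rfl⟩
      refine ⟨⟨x ∘ Sum.inl, ?_⟩, ⟨x ∘ Sum.inr, ?_⟩⟩ <;>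
      · funext i
        simp [mulVecLin_apply, fromBlocks_mulVec, LinearEquiv.sumArrowLequivProdArrow,
          Equiv.sumArrowEquivProdArrow]
    · rintro ⟨⟨x₁, hx₁⟩, ⟨x₂, hx₂⟩⟩
      refine ⟨(fromBlocks A 0 0 D).mulVec (Sum.elim x₁ x₂), ⟨Sum.elim x₁ x₂, rfl⟩, ?_⟩
      have h1 : (Sum.elim x₁ x₂ : n ⊕ p → ℝ) ∘ Sum.inl = x₁ := rfl
      have h2 : (Sum.elim x₁ x₂ : n ⊕ p → ℝ) ∘ Sum.inr = x₂ := rfl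
      simp only [fromBlocks_mulVec, h1, h2, zero_mulVec, add_zero, zero_add]
      simp only [mulVecLin_apply] at hx₁ hx₂
      ext i <;>
        simp [LinearEquiv.sumArrowLequivProdArrow, Equiv.sumArrowEquivProdArrow, hx₁, hx₂]
  rw [rank, rank, rank,
    ← LinearEquiv.finrank_map_eq (LinearEquiv.sumArrowLequivProdArrow l o ℝ ℝ)
      (LinearMap.range (fromBlocks A 0 0 D).mulVecLin), hmap]
  exact finrank_prod_submodule _ _

lemma rank_eq_zero_iff' (A : Matrix l n ℝ) : A.rank = 0 ↔ A = 0 := by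
  constructor
  · intro h
    have hr : LinearMap.range A.mulVecLin = ⊥ := Submodule.finrank_eq_zero.mp h
    have hz : A.mulVecLin = 0 := LinearMap.range_eq_bot.mp hr
    ext i j
    have := congrFun (LinearMap.congr_fun hz (Pi.single j 1)) i
    simpa [mulVecLin_apply, mulVec_single] using this
  · rintro rfl
    exact rank_zero

/-- rank of a block matrix with invertible bottom-right block. -/
lemma rank_fromBlocks_inv₂₂ (A : Matrix l n ℝ) (B : Matrix l p ℝ) (Cc : Matrix p n ℝ)
    (D : Matrix p p ℝ) (hD : IsUnit D) :
    (fromBlocks A B Cc D).rank = (A - B * D⁻¹ * Cc).rank + Fintype.card p := by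
  have : Invertible D := hD.nonempty_invertible.some
  have hdec := fromBlocks_eq_of_invertible₂₂ A B Cc D
  have hU : IsUnit (fromBlocks (1 : Matrix l l ℝ) (B * ⅟D) 0 (1 : Matrix p p ℝ)).det := by
    rw [det_fromBlocks_zero₂₁, det_one, det_one, one_mul]; exact isUnit_one
  have hL : IsUnit (fromBlocks (1 : Matrix n n ℝ) 0 (⅟D * Cc) (1 : Matrix p p ℝ)).det := by
    rw [det_fromBlocks_zero₁₂, det_one, det_one, one_mul]; exact isUnit_one
  rw [hdec, rank_mul_eq_left_of_isUnit_det _ _ hL, rank_mul_eq_right_of_isUnit_det _ _ hU,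
    rank_fromBlocks_diag, invOf_eq_nonsing_inv]
  congr 1
  exact rank_of_isUnit D hD

end Aux

section Main

variable {m : ℕ}

/-- A principal submatrix (along an injective inclusion) of a positive definite matrix
is positive definite. -/
lemma posDef_submatrix_subtype {Sg : Matrix (Fin m) (Fin m) ℝ} (hSg : Sg.PosDef)
    (C : Finset (Fin m)) :
    (Sg.submatrix (fun c : {x // x ∈ C} => c.1) (fun c : {x // x ∈ C} => c.1)).PosDef := by
  refine Matrix.PosDef.of_dotProduct_mulVec_pos (hSg.1.submatrix _) fun x hx => ?_
  classical
  set y : Fin m → ℝ := fun i => if h : i ∈ C then x ⟨i, h⟩ else 0 with hy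
  have hyne : y ≠ 0 := by
    intro h
    apply hx
    funext c
    have := congrFun h c.1
    simpa [hy, c.2] using this
  have hpos := hSg.dotProduct_mulVec_pos hyne
  have hrw : dotProduct (star x)
      ((Sg.submatrix (fun c : {x // x ∈ C} => c.1) (fun c : {x // x ∈ C} => c.1)) *ᵥ x)
      = dotProduct (star y) (Sg *ᵥ y) := by
    have hmv : ∀ i : Fin m, (Sg *ᵥ y) i
        = ∑ c : {x // x ∈ C}, Sg i c.1 * x c := by
      intro i
      rw [mulVec, dotProduct]
      rw [show (∑ j : Fin m, Sg i j * y j) = ∑ j ∈ C, Sg i j * y j from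
        (Finset.sum_subset C.subset_univ (fun j _ hj => by simp [hy, hj])).symm]
      rw [← Finset.sum_coe_sort]
      refine Finset.sum_congr rfl fun c _ => ?_
      simp [hy, c.2]
    rw [dotProduct, dotProduct,
      show (∑ i : Fin m, star y i * (Sg *ᵥ y) i) = ∑ i ∈ C, star y i * (Sg *ᵥ y) i from
        (Finset.sum_subset C.subset_univ (fun j _ hj => by simp [hy, hj])).symm,
      ← Finset.sum_coe_sort C (fun i => star y i * (Sg *ᵥ y) i)]
    refine Finset.sum_congr rfl fun c _ => ?_
    rw [hmv]
    simp [hy, c.2, mulVec, dotProduct]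
  rw [hrw]
  exact hpos

/-- The union of two disjoint finsets splits as a sum type. -/
def unionEquiv (A C : Finset (Fin m)) (h : Disjoint A C) :
    {x // x ∈ A} ⊕ {x // x ∈ C} ≃ {x : Fin m // x ∈ A ∪ C} where
  toFun := Sum.elim (fun a => ⟨a.1, Finset.mem_union_left _ a.2⟩)
    (fun c => ⟨c.1, Finset.mem_union_right _ c.2⟩)
  invFun x := if hx : x.1 ∈ A then Sum.inl ⟨x.1, hx⟩
    else Sum.inr ⟨x.1, (Finset.mem_union.1 x.2).resolve_left hx⟩
  left_inv := by
    rintro (a | c)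
    · simp [a.2]
    · simp [Finset.disjoint_right.1 h c.2]
  right_inv x := by by_cases hx : x.1 ∈ A <;> simp [hx]

theorem stmt2' (Sg : Matrix (Fin m) (Fin m) ℝ) (hSg : Sg.PosDef)
    (A B C : Finset (Fin m)) (hAB : Disjoint A B) (hAC : Disjoint A C)
    (hBC : Disjoint B C) :
    (Sg.submatrix (fun a : {x // x ∈ A} => a.1) (fun b : {x // x ∈ B} => b.1)
      - Sg.submatrix (fun a : {x // x ∈ A} => a.1) (fun c : {x // x ∈ C} => c.1)
        * (Sg.submatrix (fun c : {x // x ∈ C} => c.1) (fun c : {x // x ∈ C} => c.1))⁻¹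
        * Sg.submatrix (fun c : {x // x ∈ C} => c.1) (fun b : {x // x ∈ B} => b.1) = 0)
    ↔ (Sg.submatrix (fun a : {x // x ∈ A ∪ C} => a.1)
        (fun b : {x // x ∈ B ∪ C} => b.1)).rank = C.card := by
  classical
  set M := Sg.submatrix (fun a : {x // x ∈ A ∪ C} => a.1)
    (fun b : {x // x ∈ B ∪ C} => b.1) with hM
  have hblock : M.submatrix (unionEquiv A C hAC) (unionEquiv B C hBC)
      = fromBlocks
        (Sg.submatrix (fun a : {x // x ∈ A} => a.1) (fun b : {x // x ∈ B} => b.1))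
        (Sg.submatrix (fun a : {x // x ∈ A} => a.1) (fun c : {x // x ∈ C} => c.1))
        (Sg.submatrix (fun c : {x // x ∈ C} => c.1) (fun b : {x // x ∈ B} => b.1))
        (Sg.submatrix (fun c : {x // x ∈ C} => c.1) (fun c : {x // x ∈ C} => c.1)) := by
    ext (i | i) (j | j) <;> rfl
  have hDunit : IsUnit (Sg.submatrix (fun c : {x // x ∈ C} => c.1)
      (fun c : {x // x ∈ C} => c.1)) := (posDef_submatrix_subtype hSg C).isUnit
  have hrank : M.rank
      = (Sg.submatrix (fun a : {x // x ∈ A} => a.1) (fun b : {x // x ∈ B} => b.1)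
      - Sg.submatrix (fun a : {x // x ∈ A} => a.1) (fun c : {x // x ∈ C} => c.1)
        * (Sg.submatrix (fun c : {x // x ∈ C} => c.1) (fun c : {x // x ∈ C} => c.1))⁻¹
        * Sg.submatrix (fun c : {x // x ∈ C} => c.1) (fun b : {x // x ∈ B} => b.1)).rank
      + C.card := by
    rw [← rank_submatrix' M (unionEquiv A C hAC) (unionEquiv B C hBC), hblock,
      rank_fromBlocks_inv₂₂ _ _ _ _ hDunit, Fintype.card_coe]
  rw [hrank, ← rank_eq_zero_iff']
  omega

end Main

/-- **Conditional independence as a rank condition.** For a multivariate normal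
vector with positive definite covariance `Σ` and disjoint index sets `A`, `B`, `C`,
the conditional independence `X_A ⫫ X_B | X_C` (equivalently, the vanishing of the
conditional covariance `Σ_{A,B} - Σ_{A,C} Σ_{C,C}⁻¹ Σ_{C,B}`) holds if and only if
the submatrix `Σ_{A∪C, B∪C}` has rank exactly `#C`. -/
theorem stmt2 (m : ℕ) (Sg : Matrix (Fin m) (Fin m) ℝ) (hSg : Sg.PosDef)
    (A B C : Finset (Fin m)) (hAB : Disjoint A B) (hAC : Disjoint A C)
    (hBC : Disjoint B C) :
    (Sg.submatrix (fun a : {x // x ∈ A} => a.1) (fun b : {x // x ∈ B} => b.1)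
      - Sg.submatrix (fun a : {x // x ∈ A} => a.1) (fun c : {x // x ∈ C} => c.1)
        * (Sg.submatrix (fun c : {x // x ∈ C} => c.1) (fun c : {x // x ∈ C} => c.1))⁻¹
        * Sg.submatrix (fun c : {x // x ∈ C} => c.1) (fun b : {x // x ∈ B} => b.1) = 0)
    ↔ (Sg.submatrix (fun a : {x // x ∈ A ∪ C} => a.1)
        (fun b : {x // x ∈ B ∪ C} => b.1)).rank = C.card := by
  exact stmt2' Sg hSg A B C hAB hAC hBC
end

section
/- Let $\Lambda$ be an invertible $m\times m$ matrix over a field, $\Phi = \mathrm{diag}(\phi_1,\dots,\phi_m)$ a diagonal matrix of independent indeterminates, and $\Sigma = \Lambda^{-\top}\Phi\Lambda^{-1}$ over the polynomial ring. For subsets $A, B \subseteq [m]$ with $\#A = \#B$, the determinant $\det \Sigma_{A,B}$ equals $\sum_{S \subseteq [m],\, \#S = \#A} \det(\Lambda^{-1})_{S,A}\, \det(\Lambda^{-1})_{S,B}\, \phi_S$ where $\phi_S = \prod_{s\in S}\phi_s$. Consequently, $\det\Sigma_{A,B}$ is identically zero if and only if for every subset $S$ with $\#S = \#A$, either $\det(\Lambda^{-1})_{S,A}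 = 0$ or $\det(\Lambda^{-1})_{S,B} = 0$. -/
open Matrix MvPolynomial

/-- The minor of an `m × m` matrix with rows indexed by `A` and columns by `B`
(both listed in increasing order); junk value `0` if `#A ≠ #B`. -/
noncomputable def subdet {m : ℕ} {R : Type*} [CommRing R]
    (M : Matrix (Fin m) (Fin m) R) (A B : Finset (Fin m)) : R :=
  if h : A.card = B.card then
    (M.submatrix (fun i : Fin A.card => ((A.orderIsoOfFin rfl) i).1)
      (fun i : Fin A.card => ((B.orderIsoOfFin h.symm) i).1)).det
  else 0

section helper
open Finset Equiv Equiv.Perm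
open Matrix Finset Equiv Equiv.Perm

private lemma aux_sum_zero {n m' : Type*} [DecidableEq n] [Fintype n] {R : Type*} [CommRing R]
    (M : n → m' → R) (N : m' → n → R) {p : n → m'} (H : ¬Function.Injective p) :
    (∑ σ : Perm n, ((Equiv.Perm.sign σ : ℤ) : R) * ∏ x, M (σ x) (p x) * N (p x) x) = 0 := by
  obtain ⟨i, j, hpij, hij⟩ : ∃ i j, p i = p j ∧ i ≠ j := by
    rw [Function.Injective] at H
    push_neg at H
    exact H
  exact Finset.sum_involution (fun σ _ => σ * Equiv.swap i j)
    (fun σ _ => by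
      have : (∏ x, M (σ x) (p x)) = ∏ x, M ((σ * Equiv.swap i j) x) (p x) :=
        Fintype.prod_equiv (Equiv.swap i j) _ _ (by simp [Equiv.apply_swap_eq_self hpij])
      simp [this, Equiv.Perm.sign_swap hij, prod_mul_distrib])
    (fun σ _ _ => (not_congr Equiv.mul_swap_eq_iff).mpr hij) (fun _ _ => mem_univ _)
    fun σ _ => Equiv.mul_swap_involutive i j σ

private lemma det_mul'' {n : Type*} [DecidableEq n] [Fintype n] {R : Type*} [CommRing R]
    (M N : Matrix n n R) :
    ∑ τ : Perm n, ∑ σ : Perm n, ((Equiv.Perm.sign σ : ℤ) : R) * ∏ i, M (σ i) (τ i) * N (τ i) i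
      = M.det * N.det :=
  calc
    ∑ τ : Perm n, ∑ σ : Perm n, ((Equiv.Perm.sign σ : ℤ) : R) * ∏ i, M (σ i) (τ i) * N (τ i) i
      = ∑ σ : Perm n, ∑ τ : Perm n,
          (∏ i, N (σ i) i) * ((Equiv.Perm.sign τ : ℤ) : R) * ∏ j, M (τ j) (σ j) := by
        simp only [mul_comm, mul_left_comm, prod_mul_distrib, mul_assoc]
    _ = ∑ σ : Perm n, ∑ τ : Perm n,
          (∏ i, N (σ i) i) * (((Equiv.Perm.sign σ : ℤ) : R) * ((Equiv.Perm.sign τ : ℤ) : R))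
            * ∏ i, M (τ i) i :=
      (Finset.sum_congr rfl fun σ _ =>
        Fintype.sum_equiv (Equiv.mulRight σ⁻¹) _ _ fun τ => by
          have : (∏ j, M (τ j) (σ j)) = ∏ j, M ((τ * σ⁻¹) j) j := by
            rw [← (σ⁻¹ : _ ≃ _).prod_comp]
            simp only [Equiv.Perm.coe_mul, Equiv.Perm.inv_def, Equiv.apply_symm_apply, Function.comp_apply]
          have h : ((Equiv.Perm.sign σ : ℤ) : R) * ((Equiv.Perm.sign (τ * σ⁻¹) : ℤ) : R)
              = ((Equiv.Perm.sign τ : ℤ) : R) := by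
            have : σ.sign * (τ * σ⁻¹).sign = τ.sign := by
              rw [mul_comm, ← Equiv.Perm.sign_mul, inv_mul_cancel_right]
            rw [← this]
            push_cast
            ring
          simp_rw [Equiv.coe_mulRight, h]
          simp only [this])
    _ = M.det * N.det := by
      simp only [Matrix.det_apply', Finset.mul_sum, Finset.sum_mul, mul_comm, mul_left_comm,
        mul_assoc]

section
variable {R : Type*} [CommRing R] {m r : ℕ}

private lemma key_image (S : Finset (Fin m)) (hS : S.card = r) (τ : Perm (Fin r)) :
    Finset.image (fun i => S.orderEmbOfFin hS (τ i)) Finset.univ = S := by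
  apply Finset.eq_of_subset_of_card_le
  · intro x hx
    simp only [Finset.mem_image] at hx
    obtain ⟨i, _, rfl⟩ := hx
    exact S.orderEmbOfFin_mem hS _
  · have : (Finset.image (fun i => S.orderEmbOfFin hS (τ i)) Finset.univ).card = r := by
      rw [Finset.card_image_of_injective _
        (fun a b hab => τ.injective ((S.orderEmbOfFin hS).injective hab)),
        card_univ, Fintype.card_fin]
    rw [hS]
    exact this.ge

private lemma cauchyBinet (P Q : Matrix (Fin m) (Fin r) R) (d : Fin m → R) :
    (Pᵀ * Matrix.diagonal d * Q).det
      = ∑ S ∈ (Finset.powersetCard r (Finset.univ : Finset (Fin m))).attach,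
          (P.submatrix (S.1.orderEmbOfFin (Finset.mem_powersetCard.mp S.2).2) id).det
            * (Q.submatrix (S.1.orderEmbOfFin (Finset.mem_powersetCard.mp S.2).2) id).det
            * ∏ s ∈ S.1, d s := by
  classical
  set G : (Fin r → Fin m) → R := fun f =>
    ∑ σ : Perm (Fin r), ((Equiv.Perm.sign σ : ℤ) : R)
      * ∏ i, P (f i) (σ i) * (d (f i) * Q (f i) i) with hG
  have hc : ∀ S : {x // x ∈ Finset.powersetCard r (Finset.univ : Finset (Fin m))},
      S.1.card = r := fun S => (Finset.mem_powersetCard.mp S.2).2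
  have hent : ∀ i j, (Pᵀ * Matrix.diagonal d * Q) i j = ∑ k, P k i * (d k * Q k j) := by
    intro i j
    rw [Matrix.mul_apply]
    refine Finset.sum_congr rfl fun k _ => ?_
    rw [Matrix.mul_diagonal, Matrix.transpose_apply, mul_assoc]
  have h1 : (Pᵀ * Matrix.diagonal d * Q).det = ∑ f : Fin r → Fin m, G f := by
    simp only [Matrix.det_apply', hent, Finset.prod_univ_sum, Finset.mul_sum,
      Fintype.piFinset_univ, hG]
    rw [Finset.sum_comm]
  have h2 : ∑ f : Fin r → Fin m, G f
      = ∑ f ∈ Finset.univ.filter Function.Injective, G f :=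
    (Finset.sum_subset (Finset.filter_subset _ _) fun f _ hf => by
      refine aux_sum_zero (fun a k => P k a) (fun k x => d k * Q k x) ?_
      simpa using hf).symm
  have h3 : ∑ f ∈ Finset.univ.filter Function.Injective, G f
      = ∑ p ∈ (Finset.powersetCard r (Finset.univ : Finset (Fin m))).attach
            ×ˢ (Finset.univ : Finset (Perm (Fin r))),
          G (fun i => p.1.1.orderEmbOfFin (hc p.1) (p.2 i)) := by
    refine (Finset.sum_bij (fun p _ => fun i => p.1.1.orderEmbOfFin (hc p.1) (p.2 i))
      ?_ ?_ ?_ ?_).symm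
    · intro p _
      simp only [Finset.mem_filter, Finset.mem_univ, true_and]
      exact ((p.1.1.orderEmbOfFin (hc p.1)).injective).comp p.2.injective
    · intro p _ q _ h
      have him : p.1.1 = q.1.1 := by
        rw [← key_image p.1.1 (hc p.1) p.2, ← key_image q.1.1 (hc q.1) q.2]
        exact Finset.image_congr (fun i _ => congrFun h i)
      obtain ⟨⟨S₁, hS₁⟩, τ₁⟩ := p
      obtain ⟨⟨S₂, hS₂⟩, τ₂⟩ := q
      simp only at him
      subst him
      have hτ : τ₁ = τ₂ := by
        ext i
        exact Finset.orderEmbOfFin_eq_orderEmbOfFin_iff.mp (congrFun h i)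
      simp [hτ]
    · intro f hf
      rw [Finset.mem_filter] at hf
      have hfi : Function.Injective f := hf.2
      set S : Finset (Fin m) := Finset.image f Finset.univ with hSdef
      have hS : S.card = r := by
        rw [hSdef, Finset.card_image_of_injective _ hfi, card_univ, Fintype.card_fin]
      have hmemS : ∀ j, f j ∈ S := by
        intro j; rw [hSdef]; exact Finset.mem_image_of_mem f (Finset.mem_univ j)
      set g : Fin r → Fin r := fun j => (S.orderIsoOfFin hS).symm ⟨f j, hmemS j⟩ with hg
      have hginj : Function.Injective g := by
        intro a b hab
        have h2 : (⟨f a, hmemS a⟩ : {x // x ∈ S}) = ⟨f b, hmemS b⟩ := by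
          have := congrArg (S.orderIsoOfFin hS) hab
          simpa [hg] using this
        exact hfi (congrArg Subtype.val h2)
      have hgbij : Function.Bijective g := (Finite.injective_iff_bijective).mp hginj
      refine ⟨⟨⟨S, Finset.mem_powersetCard.mpr ⟨Finset.subset_univ S, hS⟩⟩,
        Equiv.ofBijective g hgbij⟩, Finset.mem_product.mpr ⟨Finset.mem_attach _ _,
        Finset.mem_univ _⟩, ?_⟩
      funext j
      have hj : S.orderEmbOfFin hS (g j) = f j := by
        rw [hg]
        have := Finset.coe_orderIsoOfFin_apply S hS ((S.orderIsoOfFin hS).symm ⟨f j, hmemS j⟩)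
        rw [← this, OrderIso.apply_symm_apply]
      exact hj
    · intro p _; rfl
  rw [h1, h2, h3, Finset.sum_product]
  refine Finset.sum_congr rfl fun S _ => ?_
  set e : Fin r → Fin m := ⇑(S.1.orderEmbOfFin (hc S)) with he
  have heinj : Function.Injective e := (S.1.orderEmbOfFin (hc S)).injective
  have hprod_d : ∀ τ : Perm (Fin r), ∏ i, d (e (τ i)) = ∏ s ∈ S.1, d s := by
    intro τ
    rw [← key_image S.1 (hc S) τ, Finset.prod_image]
    intro a _ b _ hab
    exact τ.injective (heinj hab)
  calc ∑ τ : Perm (Fin r), G (fun i => e (τ i))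
      = ∑ τ : Perm (Fin r), ∑ σ : Perm (Fin r), ((Equiv.Perm.sign σ : ℤ) : R)
          * ((∏ i, (P.submatrix e id)ᵀ (σ i) (τ i) * (Q.submatrix e id) (τ i) i)
              * ∏ s ∈ S.1, d s) := by
        refine Finset.sum_congr rfl fun τ _ => ?_
        rw [hG]
        refine Finset.sum_congr rfl fun σ _ => ?_
        rw [← hprod_d τ, ← Finset.prod_mul_distrib]
        congr 1
        refine Finset.prod_congr rfl fun i _ => ?_
        simp [Matrix.submatrix_apply, Matrix.transpose_apply]
        ring
    _ = (∑ τ : Perm (Fin r), ∑ σ : Perm (Fin r), ((Equiv.Perm.sign σ : ℤ) : R)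
          * ∏ i, (P.submatrix e id)ᵀ (σ i) (τ i) * (Q.submatrix e id) (τ i) i)
          * ∏ s ∈ S.1, d s := by
        rw [Finset.sum_mul]
        refine Finset.sum_congr rfl fun τ _ => ?_
        rw [Finset.sum_mul]
        refine Finset.sum_congr rfl fun σ _ => ?_
        ring
    _ = (P.submatrix e id).det * (Q.submatrix e id).det * ∏ s ∈ S.1, d s := by
        rw [det_mul'' ((P.submatrix e id)ᵀ) (Q.submatrix e id), Matrix.det_transpose]
end

section
open Matrix MvPolynomial Finset Equiv

private lemma subdet_eq {R : Type*} [CommRing R] {m r : ℕ} (M : Matrix (Fin m) (Fin m) R)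
    (S A : Finset (Fin m)) (hS : S.card = r) (hA : A.card = r) :
    subdet M S A = (M.submatrix (⇑(S.orderEmbOfFin hS)) (⇑(A.orderEmbOfFin hA))).det := by
  have h : S.card = A.card := hS.trans hA.symm
  rw [subdet, dif_pos h,
    ← Matrix.det_submatrix_equiv_self (finCongr hS)
      (M.submatrix (⇑(S.orderEmbOfFin hS)) (⇑(A.orderEmbOfFin hA)))]
  congr 1

private lemma subdet_map {R S' : Type*} [CommRing R] [CommRing S'] (f : R →+* S')
    {m : ℕ} (M : Matrix (Fin m) (Fin m) R) (A B : Finset (Fin m)) :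
    subdet (M.map f) A B = f (subdet M A B) := by
  unfold subdet
  split_ifs with h
  · rw [Matrix.submatrix_map]
    exact (RingHom.map_det f _).symm
  · simp

private lemma prodX_eq {F : Type*} [CommSemiring F] {m : ℕ} (S : Finset (Fin m)) :
    (∏ s ∈ S, (X s : MvPolynomial (Fin m) F))
      = monomial (∑ s ∈ S, Finsupp.single s 1) 1 := by
  classical
  induction S using Finset.induction with
  | empty => simp
  | @insert a s ha ih =>
      rw [Finset.prod_insert ha, ih, Finset.sum_insert ha,
        MvPolynomial.monomial_single_add (n := a) (e := 1) (s := ∑ x ∈ s, Finsupp.single x 1),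
        pow_one]

private lemma mu_inj {m : ℕ} {S T : Finset (Fin m)}
    (h : (∑ s ∈ S, Finsupp.single s (1 : ℕ)) = ∑ s ∈ T, Finsupp.single s 1) : S = T := by
  classical
  have happ : ∀ (U : Finset (Fin m)) (x : Fin m),
      (∑ s ∈ U, Finsupp.single s (1 : ℕ)) x = if x ∈ U then 1 else 0 := by
    intro U x
    rw [Finsupp.finset_sum_apply]
    simp [Finsupp.single_apply]
  ext x
  have hx : (if x ∈ S then (1 : ℕ) else 0) = if x ∈ T then 1 else 0 := by
    rw [← happ S x, ← happ T x, h]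
  by_cases h1 : x ∈ S <;> by_cases h2 : x ∈ T <;> simp_all

private lemma sum_monomial_zero {F : Type*} [Field F] {m r : ℕ} (c : Finset (Fin m) → F) :
    (∑ S ∈ Finset.powersetCard r (Finset.univ : Finset (Fin m)),
        MvPolynomial.C (c S) * ∏ s ∈ S, (X s : MvPolynomial (Fin m) F)) = 0
      ↔ ∀ S ∈ Finset.powersetCard r (Finset.univ : Finset (Fin m)), c S = 0 := by
  classical
  constructor
  · intro h S₀ hS₀
    have h0 := congrArg (MvPolynomial.coeff (∑ s ∈ S₀, Finsupp.single s 1)) h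
    rw [MvPolynomial.coeff_sum] at h0
    simp only [prodX_eq, MvPolynomial.coeff_C_mul, MvPolynomial.coeff_monomial,
      MvPolynomial.coeff_zero] at h0
    have h1 : ∀ S ∈ Finset.powersetCard r (Finset.univ : Finset (Fin m)),
        c S * (if (∑ s ∈ S, Finsupp.single s 1) = (∑ s ∈ S₀, Finsupp.single s (1:ℕ)) then (1:F) else 0)
          = if S = S₀ then c S else 0 := by
      intro S _
      by_cases hSS : S = S₀
      · subst hSS; simp
      · rw [if_neg hSS, if_neg (fun hc => hSS (mu_inj hc)), mul_zero]
    rw [Finset.sum_congr rfl h1, Finset.sum_ite_eq' _ S₀ c] at h0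
    rwa [if_pos hS₀] at h0
  · intro h
    refine Finset.sum_eq_zero fun S hS => ?_
    rw [h S hS]
    simp
end

end helper

/-- **Cauchy–Binet expansion of `det Σ_{A,B}`.** For an invertible matrix `Λ` over a
field, `Φ = diag(φ₁,…,φ_m)` a diagonal matrix of indeterminates, and
`Σ = Λ⁻ᵀ Φ Λ⁻¹`, one has
`det Σ_{A,B} = ∑_{#S = #A} det(Λ⁻¹)_{S,A} det(Λ⁻¹)_{S,B} φ_S`, and consequently
`det Σ_{A,B} = 0` iff for every `S` with `#S = #A`, `det(Λ⁻¹)_{S,A} = 0` or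
`det(Λ⁻¹)_{S,B} = 0`. -/
theorem stmt3 (m : ℕ) (F : Type*) [Field F] (Λ : Matrix (Fin m) (Fin m) F)
    (hΛ : IsUnit Λ.det) (A B : Finset (Fin m)) (hcard : A.card = B.card) :
    subdet (((Λ⁻¹).map (MvPolynomial.C : F →+* MvPolynomial (Fin m) F))ᵀ
        * Matrix.diagonal (fun v => (X v : MvPolynomial (Fin m) F))
        * (Λ⁻¹).map (MvPolynomial.C : F →+* MvPolynomial (Fin m) F)) A B
      = ∑ S ∈ (Finset.univ : Finset (Fin m)).powersetCard A.card,
          subdet ((Λ⁻¹).map (MvPolynomial.C : F →+* MvPolynomial (Fin m) F)) S A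
            * subdet ((Λ⁻¹).map (MvPolynomial.C : F →+* MvPolynomial (Fin m) F)) S B
            * ∏ s ∈ S, X s
    ∧ (subdet (((Λ⁻¹).map (MvPolynomial.C : F →+* MvPolynomial (Fin m) F))ᵀ
        * Matrix.diagonal (fun v => (X v : MvPolynomial (Fin m) F))
        * (Λ⁻¹).map (MvPolynomial.C : F →+* MvPolynomial (Fin m) F)) A B = 0
      ↔ ∀ S : Finset (Fin m), S.card = A.card →
          subdet ((Λ⁻¹).map (MvPolynomial.C : F →+* MvPolynomial (Fin m) F)) S A = 0
          ∨ subdet ((Λ⁻¹).map (MvPolynomial.C : F →+* MvPolynomial (Fin m) F)) S B = 0) := by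
  classical
  set P : Matrix (Fin m) (Fin m) (MvPolynomial (Fin m) F) :=
    (Λ⁻¹).map (MvPolynomial.C : F →+* MvPolynomial (Fin m) F) with hP
  set dX : Fin m → MvPolynomial (Fin m) F := fun v => X v with hdX
  have hA : A.card = A.card := rfl
  have hB : B.card = A.card := hcard.symm
  have hsub : (Pᵀ * Matrix.diagonal dX * P).submatrix
        (⇑(A.orderEmbOfFin hA)) (⇑(B.orderEmbOfFin hB))
      = ((P.submatrix id (⇑(A.orderEmbOfFin hA)))ᵀ * Matrix.diagonal dX
          * (P.submatrix id (⇑(B.orderEmbOfFin hB)))) := by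
    ext i j
    simp [Matrix.mul_apply, Matrix.mul_diagonal]
  have part1 : subdet (Pᵀ * Matrix.diagonal dX * P) A B
      = ∑ S ∈ Finset.powersetCard A.card (Finset.univ : Finset (Fin m)),
          subdet P S A * subdet P S B * ∏ s ∈ S, (X s : MvPolynomial (Fin m) F) := by
    rw [subdet_eq _ A B hA hB, hsub, cauchyBinet,
      ← Finset.sum_attach (Finset.powersetCard A.card Finset.univ)
        (fun S => subdet P S A * subdet P S B * ∏ s ∈ S, (X s : MvPolynomial (Fin m) F))]
    refine Finset.sum_congr rfl fun S _ => ?_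
    have hS : S.1.card = A.card := (Finset.mem_powersetCard.mp S.2).2
    rw [subdet_eq P S.1 A hS hA, subdet_eq P S.1 B hS hB]
    simp [Matrix.submatrix_submatrix, hdX]
  have hCsub : ∀ (S T : Finset (Fin m)), subdet P S T
      = MvPolynomial.C (subdet Λ⁻¹ S T) := fun S T =>
    subdet_map (MvPolynomial.C : F →+* MvPolynomial (Fin m) F) Λ⁻¹ S T
  have key2 : (∑ S ∈ Finset.powersetCard A.card (Finset.univ : Finset (Fin m)),
        subdet P S A * subdet P S B * ∏ s ∈ S, (X s : MvPolynomial (Fin m) F)) = 0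
      ↔ ∀ S ∈ Finset.powersetCard A.card (Finset.univ : Finset (Fin m)),
          subdet Λ⁻¹ S A * subdet Λ⁻¹ S B = 0 := by
    rw [show (∑ S ∈ Finset.powersetCard A.card (Finset.univ : Finset (Fin m)),
        subdet P S A * subdet P S B * ∏ s ∈ S, (X s : MvPolynomial (Fin m) F))
        = ∑ S ∈ Finset.powersetCard A.card (Finset.univ : Finset (Fin m)),
            MvPolynomial.C (subdet Λ⁻¹ S A * subdet Λ⁻¹ S B)
              * ∏ s ∈ S, (X s : MvPolynomial (Fin m) F) from
      Finset.sum_congr rfl fun S _ => by rw [hCsub, hCsub, _root_.map_mul]]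
    exact sum_monomial_zero _
  refine ⟨part1, ?_⟩
  rw [part1, key2]
  constructor
  · intro h S hScard
    have h0 := h S (Finset.mem_powersetCard.mpr ⟨Finset.subset_univ S, hScard⟩)
    rcases mul_eq_zero.mp h0 with h' | h'
    · left
      rw [hCsub, MvPolynomial.C_eq_zero]
      exact h'
    · right
      rw [hCsub, MvPolynomial.C_eq_zero]
      exact h'
  · intro h S hS
    have hScard := (Finset.mem_powersetCard.mp hS).2
    rcases h S hScard with h' | h' <;> rw [hCsub, MvPolynomial.C_eq_zero] at h'
    · exact mul_eq_zero.mpr (Or.inl h')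
    · exact mul_eq_zero.mpr (Or.inr h')
end

section
/- (Gessel–Viennot–Lindström lemma for DAGs.) Let $G$ be a directed acyclic graph on $[m]$ with edge indeterminates $\lambda_{ij}$, and let $\Lambda = I - L$ as above. Let $R = \{r_1 < \cdots < r_\ell\}$ and $S = \{s_1 < \cdots < s_\ell\}$ be subsets of $[m]$. Then $\det(\Lambda^{-1})_{R,S} = \sum_{\mathbf{P} \in N(R,S)} (-1)^{\mathbf{P}} \lambda^{\mathbf{P}}$, where $N(R,S)$ is the set of systems of $\ell$ pairwise vertex-disjoint directed paths connecting $R$ to $S$, $(-1)^{\mathbf{P}}$ is the sign of the induced permutation from $R$ to $S$, and $\lambda^{\mathbf{P}}$ is the product of edge variables over all paths in the system. -/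
open Matrix MvPolynomial List Finset
open scoped Classical

section Paths
variable {m : ℕ} {E : Fin m → Fin m → Prop}
  (hE : ∀ i j : Fin m, E i j → i < j)

include hE in
lemma isPath_sorted {p : List (Fin m)} (hp : p.Chain' E) : p.Pairwise (· < ·) := by
  have : p.Chain' (· < ·) := hp.imp (fun {a b} h => hE a b h)
  exact List.isChain_iff_pairwise.1 this

lemma isPath_ne_nil {p : List (Fin m)} {i j} (hp : IsPath E p i j) : p ≠ [] := by
  intro h; subst h; simp [IsPath] at hp

include hE in
lemma isPath_le {p : List (Fin m)} {i j} (hp : IsPath E p i j) : i ≤ j := by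
  obtain ⟨h1, h2, h3⟩ := hp
  have hs : p.Pairwise (· ≤ ·) := (isPath_sorted hE h3).imp le_of_lt
  cases p with
  | nil => simp at h1
  | cons a l =>
    simp at h1; subst h1
    have hj : j ∈ a :: l := List.mem_of_mem_getLast? h2
    rcases List.mem_cons.1 hj with rfl | hj
    · exact le_refl _
    · exact (List.pairwise_cons.1 hs).1 _ hj

/-- all paths from i to j, as a finset -/
noncomputable def pathsF (E : Fin m → Fin m → Prop) (i j : Fin m) :
    Finset (List (Fin m)) :=
  ((Finset.univ : Finset (Finset (Fin m))).image (fun T => T.sort (· ≤ ·))).filter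
    (fun p => IsPath E p i j)

include hE in
lemma mem_pathsF {i j : Fin m} {p : List (Fin m)} :
    p ∈ pathsF E i j ↔ IsPath E p i j := by
  constructor
  · intro h; exact (Finset.mem_filter.1 h).2
  · intro h
    refine Finset.mem_filter.2 ⟨Finset.mem_image.2 ⟨p.toFinset, Finset.mem_univ _, ?_⟩, h⟩
    have hs : p.Pairwise (· < ·) := isPath_sorted hE h.2.2
    have hnd : p.Nodup := hs.nodup
    rw [List.toFinset_sort _ hnd]
    exact hs.imp le_of_lt

include hE in
lemma pathsF_self {i : Fin m} : pathsF E i i = {[i]} := by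
  ext p
  rw [mem_pathsF hE, Finset.mem_singleton]
  constructor
  · rintro ⟨h1, h2, h3⟩
    cases p with
    | nil => simp at h1
    | cons a l =>
      simp at h1; subst h1
      cases l with
      | nil => rfl
      | cons b l' =>
        exfalso
        have hs := isPath_sorted hE h3
        have hj : a ∈ b :: l' := by
          have := List.mem_of_mem_getLast? h2
          rcases List.mem_cons.1 this with h | h
          · -- i = getLast? not in tail: getLast of cons cons is getLast of tail
            rw [List.getLast?_cons_cons] at h2
            exact List.mem_of_mem_getLast? h2
          · exact h
        exact absurd ((List.pairwise_cons.1 hs).1 _ hj) (lt_irrefl a)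
  · rintro rfl
    exact ⟨rfl, rfl, List.isChain_singleton i⟩

include hE in
lemma pathsF_empty {i j : Fin m} (h : ¬ i ≤ j) : pathsF E i j = ∅ := by
  ext p
  simp only [mem_pathsF hE, Finset.notMem_empty, iff_false]
  intro hp
  exact h (isPath_le hE hp)

section Monomial
variable {R : Type*} [CommRing R] (w : Fin m × Fin m → R)

@[simp] lemma pathMonomial_nil : pathMonomial w ([] : List (Fin m)) = 1 := by
  simp [pathMonomial]

@[simp] lemma pathMonomial_singleton (a : Fin m) : pathMonomial w [a] = 1 := by
  simp [pathMonomial]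

lemma pathMonomial_cons_cons (a b : Fin m) (l : List (Fin m)) :
    pathMonomial w (a :: b :: l) = w (a, b) * pathMonomial w (b :: l) := by
  simp [pathMonomial]

end Monomial
end Paths

section Shape
variable {m : ℕ} {E : Fin m → Fin m → Prop}

lemma path_shape {p : List (Fin m)} {i j : Fin m} (hij : i ≠ j) (hp : IsPath E p i j) :
    ∃ x q', p = i :: x :: q' ∧ E i x ∧ IsPath E (x :: q') x j := by
  obtain ⟨h1, h2, h3⟩ := hp
  cases p with
  | nil => simp at h1
  | cons a q =>
    simp only [List.head?_cons, Option.some.injEq] at h1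
    subst h1
    cases q with
    | nil => simp only [List.getLast?_singleton, Option.some.injEq] at h2; exact absurd h2 hij
    | cons x q' =>
      rw [List.getLast?_cons_cons] at h2
      replace h3 := List.isChain_cons_cons.1 h3
      exact ⟨x, q', rfl, h3.1, rfl, h2, h3.2⟩

lemma path_cons {q : List (Fin m)} {x i j : Fin m} (hxq : IsPath E q x j) (hix : E i x) :
    IsPath E (i :: q) i j := by
  obtain ⟨h1, h2, h3⟩ := hxq
  cases q with
  | nil => simp at h1
  | cons b q' =>
    simp only [List.head?_cons, Option.some.injEq] at h1
    subst h1
    exact ⟨rfl, by rwa [List.getLast?_cons_cons], List.isChain_cons_cons.2 ⟨hix, h3⟩⟩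

end Shape

section Inverse
variable {m : ℕ} {E : Fin m → Fin m → Prop}
  (hE : ∀ i j : Fin m, E i j → i < j)

noncomputable def Lmat (E : Fin m → Fin m → Prop) :
    Matrix (Fin m) (Fin m) (MvPolynomial (Fin m × Fin m) ℝ) :=
  Matrix.of (fun a b => if E a b then (X (a, b) : MvPolynomial (Fin m × Fin m) ℝ) else 0)

noncomputable def Mmat (E : Fin m → Fin m → Prop) :
    Matrix (Fin m) (Fin m) (MvPolynomial (Fin m × Fin m) ℝ) :=
  Matrix.of (fun i j => ∑ p ∈ pathsF E i j, pathMonomial (fun e => X e) p)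

include hE in
lemma key_recursion (i j : Fin m) (hij : i ≠ j) :
    Mmat E i j = ∑ x, Lmat E i x * Mmat E x j := by
  have hR : ∀ x : Fin m, Lmat E i x * Mmat E x j
      = (if E i x then ∑ q ∈ pathsF E x j,
          (X (i, x) : MvPolynomial (Fin m × Fin m) ℝ) * pathMonomial (fun e => X e) q
          else 0) := by
    intro x
    simp only [Lmat, Mmat, Matrix.of_apply, ite_mul, zero_mul, Finset.mul_sum]
    split <;> simp
  simp only [hR]
  rw [← Finset.sum_filter, Finset.sum_sigma']
  show (∑ p ∈ pathsF E i j, pathMonomial (fun e => X e) p) = _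
  refine Finset.sum_nbij' (fun p => (⟨p.tail.head?.getD i, p.tail⟩ : Σ _ : Fin m, List (Fin m)))
    (fun t => i :: t.2) ?_ ?_ ?_ ?_ ?_
  · intro p hp
    obtain ⟨x, q', rfl, hix, hq⟩ := path_shape hij ((mem_pathsF hE).1 hp)
    simp only [List.tail_cons, List.head?_cons, Option.getD_some]
    exact Finset.mem_sigma.2 ⟨Finset.mem_filter.2 ⟨Finset.mem_univ _, hix⟩, (mem_pathsF hE).2 hq⟩
  · rintro ⟨x, q⟩ ht
    obtain ⟨hx, hq⟩ := Finset.mem_sigma.1 ht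
    exact (mem_pathsF hE).2 (path_cons ((mem_pathsF hE).1 hq) (Finset.mem_filter.1 hx).2)
  · intro p hp
    obtain ⟨x, q', rfl, _, _⟩ := path_shape hij ((mem_pathsF hE).1 hp)
    rfl
  · rintro ⟨x, q⟩ ht
    obtain ⟨hx, hq⟩ := Finset.mem_sigma.1 ht
    have h1 := ((mem_pathsF hE).1 hq).1
    simp only [List.tail_cons, h1, Option.getD_some]
  · intro p hp
    obtain ⟨x, q', rfl, hix, hq⟩ := path_shape hij ((mem_pathsF hE).1 hp)
    simp [pathMonomial_cons_cons, hix]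

include hE in
lemma lambda_mul_M : (1 - Lmat E) * Mmat E = 1 := by
  ext i j
  rw [Matrix.sub_mul, Matrix.one_mul, Matrix.sub_apply]
  by_cases hij : i = j
  · subst hij
    have h1 : Mmat E i i = 1 := by
      simp [Mmat, pathsF_self hE]
    have h2 : (Lmat E * Mmat E) i i = 0 := by
      rw [Matrix.mul_apply]
      refine Finset.sum_eq_zero fun x _ => ?_
      simp only [Lmat, Matrix.of_apply, ite_mul, zero_mul]
      split
      · next h =>
        have : ¬ x ≤ i := not_le.2 (hE _ _ h)
        simp [Mmat, pathsF_empty hE this]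
      · rfl
    rw [h1, h2, Matrix.one_apply_eq]; ring_nf
  · rw [Matrix.mul_apply, ← key_recursion hE i j hij, Matrix.one_apply_ne hij]
    ring_nf

include hE in
lemma inv_lambda : (1 - Lmat E)⁻¹ = Mmat E :=
  Matrix.inv_eq_right_inv (lambda_mul_M hE)

end Inverse

section Split
variable {m : ℕ} {E : Fin m → Fin m → Prop}
  (hE : ∀ i j : Fin m, E i j → i < j)

/-- prefix of `p` strictly before the first occurrence of `v` -/
def preL (v : Fin m) (p : List (Fin m)) : List (Fin m) := p.takeWhile (fun x => x ≠ v)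
/-- suffix of `p` starting at the first occurrence of `v` -/
def sufL (v : Fin m) (p : List (Fin m)) : List (Fin m) := p.dropWhile (fun x => x ≠ v)

lemma preL_append_sufL (v : Fin m) (p : List (Fin m)) : preL v p ++ sufL v p = p :=
  List.takeWhile_append_dropWhile

lemma mem_preL {v x : Fin m} {p : List (Fin m)} (h : x ∈ preL v p) : x ∈ p ∧ x ≠ v := by
  constructor
  · exact (List.takeWhile_prefix _).sublist.mem h
  · have := List.mem_takeWhile_imp h
    simpa using this

lemma mem_sufL {v x : Fin m} {p : List (Fin m)} (h : x ∈ sufL v p) : x ∈ p :=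
  (List.dropWhile_suffix _).sublist.mem h

lemma sufL_ne_nil {v : Fin m} {p : List (Fin m)} (hv : v ∈ p) : sufL v p ≠ [] := by
  intro h
  have hp : p = preL v p := by
    conv_lhs => rw [← preL_append_sufL v p]
    rw [h, List.append_nil]
  have hv2 : v ∈ preL v p := by rw [← hp]; exact hv
  exact (mem_preL hv2).2 rfl

lemma head?_sufL {v : Fin m} {p : List (Fin m)} (hv : v ∈ p) : (sufL v p).head? = some v := by
  have h1 := List.head?_dropWhile_not (fun x => x ≠ v) p
  have h2 := sufL_ne_nil hv
  cases h : (sufL v p).head? with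
  | none => exact absurd (List.head?_eq_none_iff.1 h) h2
  | some a =>
    rw [show (sufL v p) = p.dropWhile (fun x => x ≠ v) from rfl] at h
    rw [h] at h1
    simp only [decide_eq_false_iff_not, not_not] at h1
    rw [h1]

lemma sufL_eq_cons {v : Fin m} {p : List (Fin m)} (hv : v ∈ p) :
    ∃ r, sufL v p = v :: r := by
  have h := head?_sufL hv
  cases hs : sufL v p with
  | nil => rw [hs] at h; simp at h
  | cons a r =>
    rw [hs] at h
    simp only [List.head?_cons, Option.some.injEq] at h
    subst h
    exact ⟨r, rfl⟩

include hE in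
lemma le_of_mem_sufL {v x : Fin m} {p : List (Fin m)} (hc : p.Chain' E) (hv : v ∈ p)
    (h : x ∈ sufL v p) : v ≤ x := by
  have hs : (sufL v p).Pairwise (· < ·) :=
    (isPath_sorted hE hc).sublist (List.dropWhile_suffix _).sublist
  obtain ⟨r, hr⟩ := sufL_eq_cons hv
  rw [hr] at h hs
  rcases List.mem_cons.1 h with rfl | h
  · exact le_refl _
  · exact le_of_lt ((List.pairwise_cons.1 hs).1 _ h)

/-- the crossed path is a path -/
lemma isPath_cross {p q : List (Fin m)} {v i i' jp jq : Fin m}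
    (hp : IsPath E p i jp) (hq : IsPath E q i' jq) (hvp : v ∈ p) (hvq : v ∈ q) :
    IsPath E (preL v p ++ sufL v q) i jq := by
  obtain ⟨hp1, hp2, hp3⟩ := hp
  obtain ⟨hq1, hq2, hq3⟩ := hq
  have hcp : List.Chain' E (preL v p ++ sufL v p) := by rw [preL_append_sufL]; exact hp3
  have hbp := (List.isChain_append.1 hcp).2.2
  refine ⟨?_, ?_, ?_⟩
  · by_cases hpre : preL v p = []
    · have hpv : p.head? = some v := by
        conv_lhs => rw [← preL_append_sufL v p, hpre, List.nil_append]
        exact head?_sufL hvp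
      rw [hpv] at hp1
      rw [hpre, List.nil_append, head?_sufL hvq, hp1]
    · rw [List.head?_append_of_ne_nil _ hpre]
      have : (preL v p ++ sufL v p).head? = (preL v p).head? :=
        List.head?_append_of_ne_nil _ hpre
      rw [preL_append_sufL] at this
      rw [← this, hp1]
  · rw [List.getLast?_append_of_ne_nil _ (sufL_ne_nil hvq)]
    have : (preL v q ++ sufL v q).getLast? = (sufL v q).getLast? :=
      List.getLast?_append_of_ne_nil _ (sufL_ne_nil hvq)
    rw [preL_append_sufL] at this
    rw [← this, hq2]
  · refine List.isChain_append.2 ⟨hp3.prefix (List.takeWhile_prefix _),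
      hq3.suffix (List.dropWhile_suffix _), ?_⟩
    intro x hx y hy
    rw [head?_sufL hvq] at hy
    simp only [Option.mem_def, Option.some.injEq] at hy
    subst hy
    exact hbp x hx v (by rw [head?_sufL hvp]; rfl)

lemma pathMonomial_append_cons {RR : Type*} [CommRing RR] (w : Fin m × Fin m → RR)
    (a : List (Fin m)) (v : Fin m) (r : List (Fin m)) :
    pathMonomial w (a ++ v :: r) = pathMonomial w (a ++ [v]) * pathMonomial w (v :: r) := by
  induction a with
  | nil => simp
  | cons x a' ih =>
    cases a' with
    | nil => simp [pathMonomial_cons_cons]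
    | cons y a'' =>
      simp only [List.cons_append, pathMonomial_cons_cons] at ih ⊢
      rw [ih]; ring

end Split

section Swap
variable {m ℓ : ℕ} {E : Fin m → Fin m → Prop}
  (hE : ∀ i j : Fin m, E i j → i < j)

/-- indices whose path meets another path -/
noncomputable def badIdx (P : Fin ℓ → List (Fin m)) : Finset (Fin ℓ) :=
  Finset.univ.filter (fun i => ∃ v, v ∈ P i ∧ ∃ j, j ≠ i ∧ v ∈ P j)

lemma badIdx_nonempty {P : Fin ℓ → List (Fin m)}
    (h : ¬ (∀ i j, i ≠ j → ∀ v, v ∈ P i → v ∉ P j)) : (badIdx P).Nonempty := by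
  push_neg at h
  obtain ⟨i, j, hij, v, hvi, hvj⟩ := h
  exact ⟨i, Finset.mem_filter.2 ⟨Finset.mem_univ _, v, hvi, j, fun hj => hij hj.symm, hvj⟩⟩

noncomputable def i0 (P : Fin ℓ → List (Fin m)) (hP : (badIdx P).Nonempty) : Fin ℓ :=
  (badIdx P).min' hP

noncomputable def meetV (P : Fin ℓ → List (Fin m)) (hP : (badIdx P).Nonempty) :
    Finset (Fin m) :=
  Finset.univ.filter (fun v => v ∈ P (i0 P hP) ∧ ∃ j, j ≠ i0 P hP ∧ v ∈ P j)

lemma meetV_nonempty (P : Fin ℓ → List (Fin m)) (hP : (badIdx P).Nonempty) :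
    (meetV P hP).Nonempty := by
  have hi := (badIdx P).min'_mem hP
  simp only [badIdx, Finset.mem_filter] at hi
  obtain ⟨-, v, hv1, j, hj1, hj2⟩ := hi
  exact ⟨v, Finset.mem_filter.2 ⟨Finset.mem_univ _, hv1, j, hj1, hj2⟩⟩

noncomputable def v0 (P : Fin ℓ → List (Fin m)) (hP : (badIdx P).Nonempty) : Fin m :=
  (meetV P hP).min' (meetV_nonempty P hP)

noncomputable def meetJ (P : Fin ℓ → List (Fin m)) (hP : (badIdx P).Nonempty) :
    Finset (Fin ℓ) :=
  Finset.univ.filter (fun j => j ≠ i0 P hP ∧ v0 P hP ∈ P j)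

lemma meetJ_nonempty (P : Fin ℓ → List (Fin m)) (hP : (badIdx P).Nonempty) :
    (meetJ P hP).Nonempty := by
  have hv := (meetV P hP).min'_mem (meetV_nonempty P hP)
  simp only [meetV, Finset.mem_filter] at hv
  obtain ⟨-, -, j, hj1, hj2⟩ := hv
  exact ⟨j, Finset.mem_filter.2 ⟨Finset.mem_univ _, hj1, hj2⟩⟩

noncomputable def j0 (P : Fin ℓ → List (Fin m)) (hP : (badIdx P).Nonempty) : Fin ℓ :=
  (meetJ P hP).min' (meetJ_nonempty P hP)

lemma v0_mem_i0 (P : Fin ℓ → List (Fin m)) (hP : (badIdx P).Nonempty) :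
    v0 P hP ∈ P (i0 P hP) := by
  have hv := (meetV P hP).min'_mem (meetV_nonempty P hP)
  simp only [meetV, Finset.mem_filter] at hv
  exact hv.2.1

lemma v0_le {P : Fin ℓ → List (Fin m)} {hP : (badIdx P).Nonempty} {u : Fin m}
    (h1 : u ∈ P (i0 P hP)) (h2 : ∃ j, j ≠ i0 P hP ∧ u ∈ P j) : v0 P hP ≤ u :=
  (meetV P hP).min'_le u (Finset.mem_filter.2 ⟨Finset.mem_univ _, h1, h2⟩)

lemma j0_ne_i0 (P : Fin ℓ → List (Fin m)) (hP : (badIdx P).Nonempty) :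
    j0 P hP ≠ i0 P hP := by
  have hj := (meetJ P hP).min'_mem (meetJ_nonempty P hP)
  simp only [meetJ, Finset.mem_filter] at hj
  exact hj.2.1

lemma v0_mem_j0 (P : Fin ℓ → List (Fin m)) (hP : (badIdx P).Nonempty) :
    v0 P hP ∈ P (j0 P hP) := by
  have hj := (meetJ P hP).min'_mem (meetJ_nonempty P hP)
  simp only [meetJ, Finset.mem_filter] at hj
  exact hj.2.2

lemma i0_le {P : Fin ℓ → List (Fin m)} {hP : (badIdx P).Nonempty} {k : Fin ℓ}
    (hk : k ∈ badIdx P) : i0 P hP ≤ k :=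
  (badIdx P).min'_le k hk

lemma j0_le {P : Fin ℓ → List (Fin m)} {hP : (badIdx P).Nonempty} {k : Fin ℓ}
    (h1 : k ≠ i0 P hP) (h2 : v0 P hP ∈ P k) : j0 P hP ≤ k :=
  (meetJ P hP).min'_le k (Finset.mem_filter.2 ⟨Finset.mem_univ _, h1, h2⟩)

lemma i0_lt_j0 (P : Fin ℓ → List (Fin m)) (hP : (badIdx P).Nonempty) :
    i0 P hP < j0 P hP := by
  refine lt_of_le_of_ne ?_ (Ne.symm (j0_ne_i0 P hP))
  refine i0_le (Finset.mem_filter.2 ⟨Finset.mem_univ _, v0 P hP, v0_mem_j0 P hP, ?_⟩)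
  exact ⟨i0 P hP, Ne.symm (j0_ne_i0 P hP), v0_mem_i0 P hP⟩

/-- the tail-swapped path system -/
noncomputable def swapP (P : Fin ℓ → List (Fin m)) (hP : (badIdx P).Nonempty) :
    Fin ℓ → List (Fin m) :=
  Function.update
    (Function.update P (i0 P hP)
      (preL (v0 P hP) (P (i0 P hP)) ++ sufL (v0 P hP) (P (j0 P hP))))
    (j0 P hP)
    (preL (v0 P hP) (P (j0 P hP)) ++ sufL (v0 P hP) (P (i0 P hP)))

lemma swapP_i0 (P : Fin ℓ → List (Fin m)) (hP : (badIdx P).Nonempty) :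
    swapP P hP (i0 P hP) = preL (v0 P hP) (P (i0 P hP)) ++ sufL (v0 P hP) (P (j0 P hP)) := by
  rw [swapP, Function.update_of_ne (Ne.symm (j0_ne_i0 P hP)), Function.update_self]

lemma swapP_j0 (P : Fin ℓ → List (Fin m)) (hP : (badIdx P).Nonempty) :
    swapP P hP (j0 P hP) = preL (v0 P hP) (P (j0 P hP)) ++ sufL (v0 P hP) (P (i0 P hP)) := by
  rw [swapP, Function.update_self]

lemma swapP_other (P : Fin ℓ → List (Fin m)) (hP : (badIdx P).Nonempty) {k : Fin ℓ}
    (h1 : k ≠ i0 P hP) (h2 : k ≠ j0 P hP) : swapP P hP k = P k := by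
  rw [swapP, Function.update_of_ne h2, Function.update_of_ne h1]

lemma mem_sufL_self {v : Fin m} {p : List (Fin m)} (hv : v ∈ p) : v ∈ sufL v p := by
  obtain ⟨r, hr⟩ := sufL_eq_cons hv
  rw [hr]; exact List.mem_cons_self

lemma v0_mem_swapP_i0 (P : Fin ℓ → List (Fin m)) (hP : (badIdx P).Nonempty) :
    v0 P hP ∈ swapP P hP (i0 P hP) := by
  rw [swapP_i0]
  exact List.mem_append_right _ (mem_sufL_self (v0_mem_j0 P hP))

lemma v0_mem_swapP_j0 (P : Fin ℓ → List (Fin m)) (hP : (badIdx P).Nonempty) :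
    v0 P hP ∈ swapP P hP (j0 P hP) := by
  rw [swapP_j0]
  exact List.mem_append_right _ (mem_sufL_self (v0_mem_i0 P hP))

lemma mem_swapP_cases {P : Fin ℓ → List (Fin m)} {hP : (badIdx P).Nonempty} {k : Fin ℓ}
    {v : Fin m} (h : v ∈ swapP P hP k) :
    v ∈ P k ∨ v ∈ P (i0 P hP) ∨ v ∈ P (j0 P hP) := by
  by_cases h1 : k = i0 P hP
  · subst h1
    rw [swapP_i0] at h
    rcases List.mem_append.1 h with h | h
    · exact Or.inr (Or.inl (mem_preL h).1)
    · exact Or.inr (Or.inr (mem_sufL h))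
  by_cases h2 : k = j0 P hP
  · subst h2
    rw [swapP_j0] at h
    rcases List.mem_append.1 h with h | h
    · exact Or.inr (Or.inr (mem_preL h).1)
    · exact Or.inr (Or.inl (mem_sufL h))
  · rw [swapP_other P hP h1 h2] at h
    exact Or.inl h

lemma badIdx_swapP_nonempty (P : Fin ℓ → List (Fin m)) (hP : (badIdx P).Nonempty) :
    (badIdx (swapP P hP)).Nonempty := by
  refine ⟨i0 P hP, Finset.mem_filter.2 ⟨Finset.mem_univ _, v0 P hP, v0_mem_swapP_i0 P hP,
    j0 P hP, j0_ne_i0 P hP, v0_mem_swapP_j0 P hP⟩⟩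

lemma i0_swapP (P : Fin ℓ → List (Fin m)) (hP : (badIdx P).Nonempty) :
    i0 (swapP P hP) (badIdx_swapP_nonempty P hP) = i0 P hP := by
  refine le_antisymm ?_ ?_
  · refine i0_le (Finset.mem_filter.2 ⟨Finset.mem_univ _, v0 P hP, v0_mem_swapP_i0 P hP,
      j0 P hP, j0_ne_i0 P hP, v0_mem_swapP_j0 P hP⟩)
  · refine Finset.le_min' _ _ _ ?_
    intro k hk
    simp only [badIdx, Finset.mem_filter] at hk
    obtain ⟨-, v, hv1, j, hj1, hj2⟩ := hk
    by_contra hlt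
    push_neg at hlt
    have hki : k ≠ i0 P hP := ne_of_lt hlt
    have hkj : k ≠ j0 P hP := ne_of_lt (lt_trans hlt (i0_lt_j0 P hP))
    rw [swapP_other P hP hki hkj] at hv1
    have : k ∈ badIdx P := by
      rcases mem_swapP_cases hj2 with h | h | h
      · exact Finset.mem_filter.2 ⟨Finset.mem_univ _, v, hv1, j, hj1, h⟩
      · exact Finset.mem_filter.2 ⟨Finset.mem_univ _, v, hv1, i0 P hP, Ne.symm hki, h⟩
      · exact Finset.mem_filter.2 ⟨Finset.mem_univ _, v, hv1, j0 P hP, Ne.symm hkj, h⟩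
    exact absurd (i0_le this) (not_le.2 hlt)

include hE in
lemma v0_swapP (P : Fin ℓ → List (Fin m)) (hP : (badIdx P).Nonempty)
    (hch : ∀ k, (P k).Chain' E) :
    v0 (swapP P hP) (badIdx_swapP_nonempty P hP) = v0 P hP := by
  set hP' := badIdx_swapP_nonempty P hP
  refine le_antisymm ?_ ?_
  · refine (meetV (swapP P hP) hP').min'_le _ ?_
    simp only [meetV, Finset.mem_filter, i0_swapP]
    exact ⟨Finset.mem_univ _, v0_mem_swapP_i0 P hP,
      j0 P hP, j0_ne_i0 P hP, v0_mem_swapP_j0 P hP⟩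
  · refine Finset.le_min' _ _ _ ?_
    intro u hu
    simp only [meetV, Finset.mem_filter, i0_swapP] at hu
    obtain ⟨-, hu1, j, hj1, hj2⟩ := hu
    rw [swapP_i0] at hu1
    rcases List.mem_append.1 hu1 with h | h
    swap
    · exact le_of_mem_sufL hE (hch _) (v0_mem_j0 P hP) h
    · -- u in the prefix of P i0
      obtain ⟨hui0, hune⟩ := mem_preL h
      by_cases hjj : j = j0 P hP
      · subst hjj
        rw [swapP_j0] at hj2
        rcases List.mem_append.1 hj2 with h2 | h2
        · exact v0_le hui0 ⟨j0 P hP, j0_ne_i0 P hP, (mem_preL h2).1⟩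
        · exact le_of_mem_sufL hE (hch _) (v0_mem_i0 P hP) h2
      · rw [swapP_other P hP hj1 hjj] at hj2
        exact v0_le hui0 ⟨j, hj1, hj2⟩

include hE in
lemma j0_swapP (P : Fin ℓ → List (Fin m)) (hP : (badIdx P).Nonempty)
    (hch : ∀ k, (P k).Chain' E) :
    j0 (swapP P hP) (badIdx_swapP_nonempty P hP) = j0 P hP := by
  set hP' := badIdx_swapP_nonempty P hP
  refine le_antisymm ?_ ?_
  · refine (meetJ (swapP P hP) hP').min'_le _ ?_
    simp only [meetJ, Finset.mem_filter, i0_swapP, v0_swapP hE P hP hch]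
    exact ⟨Finset.mem_univ _, j0_ne_i0 P hP, v0_mem_swapP_j0 P hP⟩
  · refine Finset.le_min' _ _ _ ?_
    intro k hk
    simp only [meetJ, Finset.mem_filter, i0_swapP, v0_swapP hE P hP hch] at hk
    obtain ⟨-, hk1, hk2⟩ := hk
    by_cases hkj : k = j0 P hP
    · exact le_of_eq hkj.symm
    · rw [swapP_other P hP hk1 hkj] at hk2
      exact j0_le hk1 hk2

lemma preL_cross {v : Fin m} {a q : List (Fin m)}
    (ha : ∀ x ∈ a, x ≠ v) (hq : v ∈ q) :
    preL v (a ++ sufL v q) = a := by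
  obtain ⟨r, hr⟩ := sufL_eq_cons hq
  rw [hr, preL, List.takeWhile_append_of_pos (by simpa using ha)]
  simp

lemma sufL_cross {v : Fin m} {a q : List (Fin m)}
    (ha : ∀ x ∈ a, x ≠ v) (hq : v ∈ q) :
    sufL v (a ++ sufL v q) = sufL v q := by
  obtain ⟨r, hr⟩ := sufL_eq_cons hq
  rw [hr, sufL, List.dropWhile_append_of_pos (by simpa using ha)]
  simp

include hE in
lemma swapP_swapP (P : Fin ℓ → List (Fin m)) (hP : (badIdx P).Nonempty)
    (hch : ∀ k, (P k).Chain' E) :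
    swapP (swapP P hP) (badIdx_swapP_nonempty P hP) = P := by
  have hpre : ∀ x ∈ preL (v0 P hP) (P (i0 P hP)), x ≠ v0 P hP := fun x hx => (mem_preL hx).2
  have hpre' : ∀ x ∈ preL (v0 P hP) (P (j0 P hP)), x ≠ v0 P hP := fun x hx => (mem_preL hx).2
  have hi := i0_swapP P hP
  have hv := v0_swapP hE P hP hch
  have hj := j0_swapP hE P hP hch
  funext k
  by_cases h1 : k = i0 P hP
  · subst h1
    have e1 : swapP (swapP P hP) (badIdx_swapP_nonempty P hP) (i0 P hP)
        = preL (v0 P hP) (swapP P hP (i0 P hP)) ++ sufL (v0 P hP) (swapP P hP (j0 P hP)) := by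
      conv_lhs => rw [← hi]
      rw [swapP_i0 (swapP P hP) (badIdx_swapP_nonempty P hP), hi, hv, hj]
    rw [e1, swapP_i0, swapP_j0, preL_cross hpre (v0_mem_j0 P hP),
      sufL_cross hpre' (v0_mem_i0 P hP), preL_append_sufL]
  by_cases h2 : k = j0 P hP
  · subst h2
    have e1 : swapP (swapP P hP) (badIdx_swapP_nonempty P hP) (j0 P hP)
        = preL (v0 P hP) (swapP P hP (j0 P hP)) ++ sufL (v0 P hP) (swapP P hP (i0 P hP)) := by
      conv_lhs => rw [← hj]
      rw [swapP_j0 (swapP P hP) (badIdx_swapP_nonempty P hP), hi, hv, hj]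
    rw [e1, swapP_i0, swapP_j0, preL_cross hpre' (v0_mem_i0 P hP),
      sufL_cross hpre (v0_mem_j0 P hP), preL_append_sufL]
  · rw [swapP_other (swapP P hP) (badIdx_swapP_nonempty P hP)
      (by rw [hi]; exact h1) (by rw [hj]; exact h2),
      swapP_other P hP h1 h2]

lemma swapP_isPath_i0 {P : Fin ℓ → List (Fin m)} (hP : (badIdx P).Nonempty)
    {r s' : Fin ℓ → Fin m} (hp : ∀ k, IsPath E (P k) (r k) (s' k)) :
    IsPath E (swapP P hP (i0 P hP)) (r (i0 P hP)) (s' (j0 P hP)) := by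
  rw [swapP_i0]
  exact isPath_cross (hp _) (hp _) (v0_mem_i0 P hP) (v0_mem_j0 P hP)

lemma swapP_isPath_j0 {P : Fin ℓ → List (Fin m)} (hP : (badIdx P).Nonempty)
    {r s' : Fin ℓ → Fin m} (hp : ∀ k, IsPath E (P k) (r k) (s' k)) :
    IsPath E (swapP P hP (j0 P hP)) (r (j0 P hP)) (s' (i0 P hP)) := by
  rw [swapP_j0]
  exact isPath_cross (hp _) (hp _) (v0_mem_j0 P hP) (v0_mem_i0 P hP)

lemma mon_cross_mul {RR : Type*} [CommRing RR] (w : Fin m × Fin m → RR)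
    {v : Fin m} {p q : List (Fin m)} (hvp : v ∈ p) (hvq : v ∈ q) :
    pathMonomial w (preL v p ++ sufL v q) * pathMonomial w (preL v q ++ sufL v p)
      = pathMonomial w p * pathMonomial w q := by
  obtain ⟨rp, hrp⟩ := sufL_eq_cons hvp
  obtain ⟨rq, hrq⟩ := sufL_eq_cons hvq
  have ep : pathMonomial w p
      = pathMonomial w (preL v p ++ [v]) * pathMonomial w (v :: rp) := by
    conv_lhs => rw [← preL_append_sufL v p, hrp]
    exact pathMonomial_append_cons w _ v rp
  have eq' : pathMonomial w q
      = pathMonomial w (preL v q ++ [v]) * pathMonomial w (v :: rq) := by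
    conv_lhs => rw [← preL_append_sufL v q, hrq]
    exact pathMonomial_append_cons w _ v rq
  rw [hrp, hrq, pathMonomial_append_cons w _ v rq, pathMonomial_append_cons w _ v rp,
    ep, eq']
  ring

lemma prod_mon_swapP {RR : Type*} [CommRing RR] (w : Fin m × Fin m → RR)
    (P : Fin ℓ → List (Fin m)) (hP : (badIdx P).Nonempty) :
    ∏ k, pathMonomial w (swapP P hP k) = ∏ k, pathMonomial w (P k) := by
  classical
  have hne : i0 P hP ≠ j0 P hP := Ne.symm (j0_ne_i0 P hP)
  have hcomp : (fun k => pathMonomial w (swapP P hP k))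
      = Function.update (Function.update (fun k => pathMonomial w (P k))
          (i0 P hP) (pathMonomial w (preL (v0 P hP) (P (i0 P hP)) ++ sufL (v0 P hP) (P (j0 P hP)))))
          (j0 P hP) (pathMonomial w (preL (v0 P hP) (P (j0 P hP)) ++ sufL (v0 P hP) (P (i0 P hP)))) := by
    funext k
    by_cases h1 : k = i0 P hP
    · subst h1
      rw [swapP_i0, Function.update_of_ne hne, Function.update_self]
    by_cases h2 : k = j0 P hP
    · subst h2
      rw [swapP_j0, Function.update_self]
    · rw [swapP_other P hP h1 h2, Function.update_of_ne h2, Function.update_of_ne h1]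
  rw [hcomp]
  rw [Finset.prod_update_of_mem (Finset.mem_univ (j0 P hP))]
  have hi0mem : i0 P hP ∈ Finset.univ \ {j0 P hP} := by
    simp [hne]
  rw [Finset.prod_update_of_mem hi0mem]
  have hsplit : ∏ k, pathMonomial w (P k)
      = pathMonomial w (P (j0 P hP)) * (pathMonomial w (P (i0 P hP))
        * ∏ k ∈ (Finset.univ \ {j0 P hP}) \ {i0 P hP}, pathMonomial w (P k)) := by
    rw [← Finset.prod_sdiff (Finset.subset_univ {j0 P hP}), Finset.prod_singleton, mul_comm]
    congr 1
    rw [← Finset.prod_sdiff (Finset.singleton_subset_iff.2 hi0mem),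
      Finset.prod_singleton, mul_comm]
  rw [hsplit]
  linear_combination (∏ k ∈ (Finset.univ \ {j0 P hP}) \ {i0 P hP}, pathMonomial w (P k))
    * mon_cross_mul w (v0_mem_i0 P hP) (v0_mem_j0 P hP)

end Swap

section Main
variable {m ℓ : ℕ} {E : Fin m → Fin m → Prop}
  (hE : ∀ i j : Fin m, E i j → i < j)

noncomputable def sysF (E : Fin m → Fin m → Prop) (rr ss : Fin ℓ → Fin m) :
    Finset (Σ _ : Equiv.Perm (Fin ℓ), (Fin ℓ → List (Fin m))) :=
  (Finset.univ : Finset (Equiv.Perm (Fin ℓ))).sigma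
    (fun σ => Fintype.piFinset (fun i => pathsF E (rr i) (ss (σ i))))

include hE in
lemma mem_sysF {rr ss : Fin ℓ → Fin m}
    {t : Σ _ : Equiv.Perm (Fin ℓ), (Fin ℓ → List (Fin m))} :
    t ∈ sysF E rr ss ↔ ∀ k, IsPath E (t.2 k) (rr k) (ss (t.1 k)) := by
  obtain ⟨σ, P⟩ := t
  simp only [sysF, Finset.mem_sigma, Finset.mem_univ, true_and, Fintype.mem_piFinset]
  exact forall_congr' (fun k => mem_pathsF hE)

include hE in
lemma main_general (rr ss : Fin ℓ → Fin m) :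
    ∑ σ : Equiv.Perm (Fin ℓ), ((Equiv.Perm.sign σ : ℤ) : MvPolynomial (Fin m × Fin m) ℝ)
        * ∏ i, Mmat E (rr i) (ss (σ i))
    = ∑ᶠ PS : {x : Equiv.Perm (Fin ℓ) × (Fin ℓ → List (Fin m)) //
          (∀ i, IsPath E (x.2 i) (rr i) (ss (x.1 i))) ∧
          (∀ i j, i ≠ j → ∀ v, v ∈ x.2 i → v ∉ x.2 j)},
        ((Equiv.Perm.sign PS.1.1 : ℤ) : MvPolynomial (Fin m × Fin m) ℝ)
          * ∏ i, pathMonomial (fun e => X e) (PS.1.2 i) := by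
  classical
  set w : Fin m × Fin m → MvPolynomial (Fin m × Fin m) ℝ := fun e => X e with hw
  set f : (Σ _ : Equiv.Perm (Fin ℓ), (Fin ℓ → List (Fin m))) → MvPolynomial (Fin m × Fin m) ℝ :=
    fun t => ((Equiv.Perm.sign t.1 : ℤ) : MvPolynomial (Fin m × Fin m) ℝ)
      * ∏ i, pathMonomial w (t.2 i) with hf
  set Dp : (Σ _ : Equiv.Perm (Fin ℓ), (Fin ℓ → List (Fin m))) → Prop :=
    fun t => ∀ i j, i ≠ j → ∀ v, v ∈ t.2 i → v ∉ t.2 j with hDp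
  have hbad : ∀ t ∈ (sysF E rr ss).filter (fun t => ¬ Dp t), (badIdx t.2).Nonempty :=
    fun t ht => badIdx_nonempty ((Finset.mem_filter.1 ht).2)
  -- Step 1 : expand the determinant-style sum into a sum over all path systems
  have step1 : (∑ σ : Equiv.Perm (Fin ℓ),
        ((Equiv.Perm.sign σ : ℤ) : MvPolynomial (Fin m × Fin m) ℝ)
        * ∏ i, Mmat E (rr i) (ss (σ i))) = ∑ t ∈ sysF E rr ss, f t := by
    have e1 : ∀ σ : Equiv.Perm (Fin ℓ),
        ((Equiv.Perm.sign σ : ℤ) : MvPolynomial (Fin m × Fin m) ℝ)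
          * ∏ i, Mmat E (rr i) (ss (σ i))
        = ∑ P ∈ Fintype.piFinset (fun i => pathsF E (rr i) (ss (σ i))),
            ((Equiv.Perm.sign σ : ℤ) : MvPolynomial (Fin m × Fin m) ℝ)
              * ∏ i, pathMonomial w (P i) := by
      intro σ
      simp only [Mmat, Matrix.of_apply]
      rw [Finset.prod_univ_sum, Finset.mul_sum]
    rw [Finset.sum_congr rfl (fun σ _ => e1 σ), Finset.sum_sigma']
    rfl
  -- Step 2 : the intersecting systems cancel
  have step2 : ∑ t ∈ (sysF E rr ss).filter (fun t => ¬ Dp t), f t = 0 := by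
    refine Finset.sum_involution
      (fun t ht => ⟨t.1 * Equiv.swap (i0 t.2 (hbad t ht)) (j0 t.2 (hbad t ht)),
        swapP t.2 (hbad t ht)⟩) ?_ ?_ ?_ ?_
    · intro t ht
      have hP := hbad t ht
      have hprod := prod_mon_swapP w t.2 hP
      simp only [hf]
      rw [hprod, Equiv.Perm.sign_mul, Equiv.Perm.sign_swap (Ne.symm (j0_ne_i0 t.2 hP))]
      push_cast
      ring
    · intro t ht _ heq
      have h1 := congrArg Sigma.fst heq
      simp only at h1
      have h2 := congrArg (fun σ : Equiv.Perm (Fin ℓ) => σ (i0 t.2 (hbad t ht))) h1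
      simp only [Equiv.Perm.mul_apply, Equiv.swap_apply_left] at h2
      exact j0_ne_i0 t.2 (hbad t ht) (t.1.injective h2)
    · intro t ht
      have hP := hbad t ht
      obtain ⟨htA, htD⟩ := Finset.mem_filter.1 ht
      have hpaths : ∀ k, IsPath E (t.2 k) (rr k) (ss (t.1 k)) := (mem_sysF hE).1 htA
      refine Finset.mem_filter.2 ⟨(mem_sysF hE).2 ?_, ?_⟩
      · intro k
        show IsPath E (swapP t.2 hP k) (rr k)
          (ss ((t.1 * Equiv.swap (i0 t.2 hP) (j0 t.2 hP)) k))
        by_cases h1 : k = i0 t.2 hP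
        · subst h1
          rw [Equiv.Perm.mul_apply, Equiv.swap_apply_left]
          exact swapP_isPath_i0 hP hpaths
        by_cases h2 : k = j0 t.2 hP
        · subst h2
          rw [Equiv.Perm.mul_apply, Equiv.swap_apply_right]
          exact swapP_isPath_j0 hP hpaths
        · rw [Equiv.Perm.mul_apply, Equiv.swap_apply_of_ne_of_ne h1 h2,
            swapP_other t.2 hP h1 h2]
          exact hpaths k
      · intro hD
        exact (hD (i0 t.2 hP) (j0 t.2 hP) (Ne.symm (j0_ne_i0 t.2 hP)) (v0 t.2 hP)
          (v0_mem_swapP_i0 t.2 hP)) (v0_mem_swapP_j0 t.2 hP)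
    · intro t ht
      have hP := hbad t ht
      obtain ⟨htA, htD⟩ := Finset.mem_filter.1 ht
      have hpaths : ∀ k, IsPath E (t.2 k) (rr k) (ss (t.1 k)) := (mem_sysF hE).1 htA
      have hch : ∀ k, (t.2 k).Chain' E := fun k => (hpaths k).2.2
      have e2 : swapP (swapP t.2 hP) (badIdx_swapP_nonempty t.2 hP) = t.2 :=
        swapP_swapP hE t.2 hP hch
      have e1 : (t.1 * Equiv.swap (i0 t.2 hP) (j0 t.2 hP))
            * Equiv.swap (i0 (swapP t.2 hP) (badIdx_swapP_nonempty t.2 hP))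
              (j0 (swapP t.2 hP) (badIdx_swapP_nonempty t.2 hP)) = t.1 := by
        rw [i0_swapP t.2 hP, j0_swapP hE t.2 hP hch, mul_assoc, Equiv.swap_mul_self,
          mul_one]
      exact Sigma.ext e1 (heq_of_eq e2)
  -- assemble
  have step3 : ∑ t ∈ sysF E rr ss, f t = ∑ t ∈ (sysF E rr ss).filter Dp, f t := by
    rw [← Finset.sum_filter_add_sum_filter_not (sysF E rr ss) Dp f, step2, add_zero]
  rw [step1, step3]
  set Q : Equiv.Perm (Fin ℓ) × (Fin ℓ → List (Fin m)) → Prop :=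
    fun x => (∀ i, IsPath E (x.2 i) (rr i) (ss (x.1 i))) ∧
      (∀ i j, i ≠ j → ∀ v, v ∈ x.2 i → v ∉ x.2 j) with hQ
  set F : Equiv.Perm (Fin ℓ) × (Fin ℓ → List (Fin m)) → MvPolynomial (Fin m × Fin m) ℝ :=
    fun x => ((Equiv.Perm.sign x.1 : ℤ) : MvPolynomial (Fin m × Fin m) ℝ)
      * ∏ i, pathMonomial w (x.2 i) with hF
  set Dprod : Finset (Equiv.Perm (Fin ℓ) × (Fin ℓ → List (Fin m))) :=
    ((sysF E rr ss).filter Dp).image (fun t => (t.1, t.2)) with hDprod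
  have key : ∀ x, Q x ↔ x ∈ Dprod := by
    intro x
    simp only [hQ, hDprod, Finset.mem_image]
    constructor
    · rintro ⟨h1, h2⟩
      exact ⟨⟨x.1, x.2⟩, Finset.mem_filter.2 ⟨(mem_sysF hE).2 h1, h2⟩, rfl⟩
    · rintro ⟨t, ht, rfl⟩
      obtain ⟨htA, htD⟩ := Finset.mem_filter.1 ht
      exact ⟨(mem_sysF hE).1 htA, htD⟩
  have h4 : ∑ x ∈ Dprod, F x = ∑ t ∈ (sysF E rr ss).filter Dp, f t := by
    rw [hDprod, Finset.sum_image]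
    rintro ⟨a, b⟩ - ⟨c, d⟩ - h
    simp only [Prod.mk.injEq] at h
    obtain ⟨rfl, rfl⟩ := h
    rfl
  have h3 : ∑ᶠ (i) (_ : i ∈ (↑Dprod : Set _)), F i = ∑ x ∈ Dprod, F x :=
    finsum_mem_coe_finset F Dprod
  have h2 : (∑ᶠ (i) (_ : Q i), F i) = ∑ᶠ (i) (_ : i ∈ (↑Dprod : Set _)), F i :=
    finsum_congr fun x => finsum_congr_Prop
      (propext ((key x).trans Finset.mem_coe.symm)) (fun _ => rfl)
  have h1 : (∑ᶠ PS : Subtype Q, F PS.1) = ∑ᶠ (i) (_ : Q i), F i :=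
    finsum_subtype_eq_finsum_cond Q
  exact ((h1.trans h2).trans (h3.trans h4)).symm

end Main

/-- **Gessel–Viennot–Lindström lemma for DAGs.** For a DAG `G` on `[m]` with edge
indeterminates and `Λ = I - L`, and `R = {r₁ < ⋯ < r_ℓ}`, `S = {s₁ < ⋯ < s_ℓ}`,
`det (Λ⁻¹)_{R,S}` equals the signed sum, over all systems of `ℓ` pairwise
vertex-disjoint directed paths from `R` to `S`, of the products of the edge
variables of the paths, with sign the sign of the induced permutation. -/
theorem stmt4 (m : ℕ) (E : Fin m → Fin m → Prop) [DecidableRel E]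
    (hE : ∀ i j : Fin m, E i j → i < j) (R S : Finset (Fin m))
    (hRS : R.card = S.card) :
    subdet ((1 - Matrix.of (fun a b =>
        if E a b then (X (a, b) : MvPolynomial (Fin m × Fin m) ℝ) else 0))⁻¹) R S
    = ∑ᶠ PS : {x : Equiv.Perm (Fin R.card) × (Fin R.card → List (Fin m)) //
          (∀ i, IsPath E (x.2 i) ((R.orderIsoOfFin rfl) i).1
            ((S.orderIsoOfFin hRS.symm) (x.1 i)).1) ∧
          (∀ i j, i ≠ j → ∀ v, v ∈ x.2 i → v ∉ x.2 j)},
        ((Equiv.Perm.sign PS.1.1 : ℤ) : MvPolynomial (Fin m × Fin m) ℝ)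
          * ∏ i, pathMonomial (fun e => X e) (PS.1.2 i) := by
  classical
  have hL : (Matrix.of (fun a b =>
      if E a b then (X (a, b) : MvPolynomial (Fin m × Fin m) ℝ) else 0)) = Lmat E := by
    ext a b
    by_cases h : E a b <;> simp [Lmat, h]
  rw [subdet, dif_pos hRS, hL, inv_lambda hE, ← Matrix.det_transpose, Matrix.det_apply']
  simp only [Matrix.transpose_apply, Matrix.submatrix_apply]
  exact main_general hE (fun i => ((R.orderIsoOfFin rfl) i).1)
    (fun i => ((S.orderIsoOfFin hRS.symm) i).1)
end

section
/- Let $G$ be a directed acyclic graph on $[m]$ with edge indeterminates and $\Lambda = I - L$. For $R, S \subseteq [m]$ with $\#R = \#S = \ell$, the minor $\det(\Lambda^{-1})_{R,S}$ is identically zero (as a polynomial) if and only if every system of $\ell$ directed paths from $R$ to $S$ contains two paths that share a vertex. -/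
open Matrix MvPolynomial

namespace GV5

variable {α : Type*}

lemma mem_of_getLast?' {p : List α} {w : α} (hw : p.getLast? = some w) : w ∈ p := by
  obtain ⟨h, rfl⟩ := List.mem_getLast?_eq_getLast hw
  exact List.getLast_mem h

lemma zip_mem_left {p : List α} {u v : α} (h : (u, v) ∈ p.zip p.tail) : u ∈ p := by
  induction p with
  | nil => simp at h
  | cons a t ih =>
    cases t with
    | nil => simp at h
    | cons b t' =>
      simp only [List.tail_cons, List.zip_cons_cons, List.mem_cons, Prod.mk.injEq] at h
      rcases h with ⟨rfl, rfl⟩ | h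
      · exact List.mem_cons_self
      · exact List.mem_cons_of_mem _ (ih h)

lemma zip_mem_tail {p : List α} {u v : α} (h : (u, v) ∈ p.zip p.tail) : v ∈ p.tail := by
  induction p with
  | nil => simp at h
  | cons a t ih =>
    cases t with
    | nil => simp at h
    | cons b t' =>
      simp only [List.tail_cons, List.zip_cons_cons, List.mem_cons, Prod.mk.injEq] at h ⊢
      rcases h with ⟨rfl, rfl⟩ | h
      · exact Or.inl rfl
      · exact Or.inr (by simpa using ih h)

lemma zip_mem_right {p : List α} {u v : α} (h : (u, v) ∈ p.zip p.tail) : v ∈ p :=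
  List.mem_of_mem_tail (zip_mem_tail h)

lemma zip_tail_cons {t : List α} {a u v : α} (h : (u, v) ∈ t.zip t.tail) :
    (u, v) ∈ (a :: t).zip t := by
  cases t with
  | nil => simp at h
  | cons c t' =>
    simp only [List.zip_cons_cons, List.mem_cons]
    exact Or.inr (by simpa using h)

lemma chain'_of_zip {E : α → α → Prop} {p : List α} (hc : p.Chain' E) {u v : α}
    (h : (u, v) ∈ p.zip p.tail) : E u v := by
  induction p with
  | nil => simp at h
  | cons a t ih =>
    cases t with
    | nil => simp at h
    | cons b t' =>
      unfold List.Chain' at hc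
      rw [List.isChain_cons_cons] at hc
      simp only [List.tail_cons, List.zip_cons_cons, List.mem_cons, Prod.mk.injEq] at h
      rcases h with ⟨rfl, rfl⟩ | h
      · exact hc.1
      · exact ih hc.2 h

lemma next_unique {p : List α} (hnd : p.Nodup) {u v v' : α}
    (h : (u, v) ∈ p.zip p.tail) (h' : (u, v') ∈ p.zip p.tail) : v = v' := by
  induction p with
  | nil => simp at h
  | cons a t ih =>
    cases t with
    | nil => simp at h
    | cons b t' =>
      have hna : a ∉ b :: t' := (List.nodup_cons.mp hnd).1
      simp only [List.tail_cons, List.zip_cons_cons, List.mem_cons, Prod.mk.injEq] at h h'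
      rcases h with ⟨rfl, rfl⟩ | h
      · rcases h' with ⟨-, rfl⟩ | h'
        · rfl
        · exact absurd (zip_mem_left h') hna
      · rcases h' with ⟨rfl, rfl⟩ | h'
        · exact absurd (zip_mem_left h) hna
        · exact ih (List.nodup_cons.mp hnd).2 h h'

lemma prev_unique {p : List α} (hnd : p.Nodup) {u u' v : α}
    (h : (u, v) ∈ p.zip p.tail) (h' : (u', v) ∈ p.zip p.tail) : u = u' := by
  induction p with
  | nil => simp at h
  | cons a t ih =>
    cases t with
    | nil => simp at h
    | cons b t' =>
      have hnb : b ∉ t' := (List.nodup_cons.mp (List.nodup_cons.mp hnd).2).1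
      simp only [List.tail_cons, List.zip_cons_cons, List.mem_cons, Prod.mk.injEq] at h h'
      rcases h with ⟨rfl, rfl⟩ | h
      · rcases h' with ⟨rfl, -⟩ | h'
        · rfl
        · exact absurd (by simpa using zip_mem_tail h') hnb
      · rcases h' with ⟨rfl, rfl⟩ | h'
        · exact absurd (by simpa using zip_mem_tail h) hnb
        · exact ih (List.nodup_cons.mp hnd).2 h h'

lemma in_edge_aux {p : List α} {x : α} (hx : x ∈ p) (a : α) :
    (a, x) ∈ (a :: p).zip p ∨ ∃ u, (u, x) ∈ p.zip p.tail := by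
  induction p generalizing a with
  | nil => simp at hx
  | cons b t ih =>
    rcases List.mem_cons.mp hx with rfl | hx
    · left; simp
    · rcases ih hx b with h | h
      · exact Or.inr ⟨b, h⟩
      · obtain ⟨u, hu⟩ := h
        exact Or.inr ⟨u, zip_tail_cons hu⟩

variable [Preorder α]

lemma le_getLast_of_sorted {p : List α} (hs : p.Pairwise (· < ·)) {w x : α}
    (hw : p.getLast? = some w) (hx : x ∈ p) : x ≤ w := by
  induction p with
  | nil => simp at hx
  | cons a t ih =>
    cases t with
    | nil =>
      simp at hw hx; subst hw; subst hx; rfl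
    | cons b t' =>
      rw [List.getLast?_cons_cons] at hw
      rcases List.mem_cons.mp hx with rfl | hx
      · exact le_of_lt ((List.pairwise_cons.mp hs).1 w (mem_of_getLast?' hw))
      · exact ih (List.pairwise_cons.mp hs).2 hw hx

lemma head_le_of_sorted {p : List α} (hs : p.Pairwise (· < ·)) {h x : α}
    (hh : p.head? = some h) (hx : x ∈ p) : h ≤ x := by
  cases p with
  | nil => simp at hx
  | cons a t =>
    simp only [List.head?_cons, Option.some.injEq] at hh
    subst hh
    rcases List.mem_cons.mp hx with rfl | hx
    · rfl
    · exact le_of_lt ((List.pairwise_cons.mp hs).1 x hx)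

set_option linter.unusedSectionVars false in
lemma in_edge_of_ne_head {p : List α} {x h : α} (hx : x ∈ p) (hh : p.head? = some h)
    (hne : x ≠ h) : ∃ u, (u, x) ∈ p.zip p.tail := by
  cases p with
  | nil => simp at hx
  | cons a t =>
    simp only [List.head?_cons, Option.some.injEq] at hh
    subst hh
    rcases List.mem_cons.mp hx with rfl | hx
    · exact absurd rfl hne
    · rcases in_edge_aux hx a with h1 | h1
      · exact ⟨_, h1⟩
      · obtain ⟨u, hu⟩ := h1
        exact ⟨u, zip_tail_cons hu⟩

set_option linter.unusedSectionVars false in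
lemma out_edge_of_ne_last {p : List α} {x w : α} (hx : x ∈ p) (hw : p.getLast? = some w)
    (hne : x ≠ w) : ∃ v, (x, v) ∈ p.zip p.tail := by
  induction p with
  | nil => simp at hx
  | cons a t ih =>
    cases t with
    | nil =>
      simp at hx hw; exact absurd (hx.trans hw) hne
    | cons b t' =>
      rw [List.getLast?_cons_cons] at hw
      rcases List.mem_cons.mp hx with rfl | hx
      · exact ⟨b, by simp⟩
      · obtain ⟨v, hv⟩ := ih hx hw
        exact ⟨v, zip_tail_cons hv⟩

end GV5
namespace GV5T
set_option linter.unusedSectionVars false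

variable {m : ℕ} (Sm : Fin m → Prop) [DecidablePred Sm] (nxt : Fin m → Fin m)

def walk : ℕ → Fin m → List (Fin m)
  | 0, v => [v]
  | n+1, v => if Sm v then [v] else v :: walk n (nxt v)

variable {E : Fin m → Fin m → Prop} {Good : Fin m → Prop}
  (hstep : ∀ v, Good v → ¬ Sm v → E v (nxt v) ∧ Good (nxt v))
  (hlt : ∀ u v, E u v → u < v)

lemma walk_ne_nil (n : ℕ) (v : Fin m) : walk Sm nxt n v ≠ [] := by
  cases n with
  | zero => simp [walk]
  | succ n => unfold walk; split <;> simp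

lemma walk_head (n : ℕ) (v : Fin m) : (walk Sm nxt n v).head? = some v := by
  cases n with
  | zero => simp [walk]
  | succ n => unfold walk; split <;> simp

lemma walk_self_mem (n : ℕ) (v : Fin m) : v ∈ walk Sm nxt n v := by
  have h := walk_head Sm nxt n v
  cases hw : walk Sm nxt n v with
  | nil => exact absurd hw (walk_ne_nil Sm nxt n v)
  | cons a t => rw [hw] at h; simp at h; subst h; exact List.mem_cons_self

include hstep in
lemma walk_good (n : ℕ) (v : Fin m) (hg : Good v) : ∀ w ∈ walk Sm nxt n v, Good w := by
  induction n generalizing v with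
  | zero => intro w hw; simp [walk] at hw; subst hw; exact hg
  | succ n ih =>
    intro w hw
    unfold walk at hw
    split at hw
    · simp at hw; subst hw; exact hg
    · rcases List.mem_cons.mp hw with rfl | hw
      · exact hg
      · exact ih (nxt v) (hstep v hg (by assumption)).2 w hw

include hstep in
lemma walk_chain (n : ℕ) (v : Fin m) (hg : Good v) : (walk Sm nxt n v).Chain' E := by
  induction n generalizing v with
  | zero => simp [walk, List.Chain']
  | succ n ih =>
    unfold walk
    split
    · simp [List.Chain']
    · unfold List.Chain'
      rw [List.isChain_cons]
      refine ⟨?_, ih (nxt v) (hstep v hg (by assumption)).2⟩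
      intro y hy
      rw [walk_head] at hy
      simp at hy; subst hy
      exact (hstep v hg (by assumption)).1

include hstep hlt in
lemma walk_last (n : ℕ) (v : Fin m) (hg : Good v) (hn : m - v.1 ≤ n) :
    ∃ w, (walk Sm nxt n v).getLast? = some w ∧ Sm w := by
  induction n generalizing v with
  | zero => exact absurd hn (by have := v.isLt; omega)
  | succ n ih =>
    unfold walk
    split
    · exact ⟨v, by simp, by assumption⟩
    · have hlt' : v < nxt v := hlt _ _ (hstep v hg (by assumption)).1
      obtain ⟨w, hw, hSw⟩ := ih (nxt v) (hstep v hg (by assumption)).2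
        (by have := hlt'; have : v.1 < (nxt v).1 := this; omega)
      refine ⟨w, ?_, hSw⟩
      rw [show ∀ (l : List (Fin m)) (a : Fin m), l ≠ [] → (a :: l).getLast? = l.getLast?
        from fun l a hl => by cases l with | nil => exact absurd rfl hl | cons b t => simp]
      · exact hw
      · exact walk_ne_nil Sm nxt n (nxt v)

lemma walk_mem (n : ℕ) (v : Fin m) {w : Fin m} (hw : w ∈ walk Sm nxt n v) :
    w = v ∨ ∃ u, u ∈ walk Sm nxt n v ∧ ¬ Sm u ∧ w = nxt u := by
  induction n generalizing v with
  | zero => simp [walk] at hw; exact Or.inl hw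
  | succ n ih =>
    unfold walk at hw ⊢
    split at hw
    · simp at hw; exact Or.inl hw
    · rcases List.mem_cons.mp hw with rfl | hw
      · exact Or.inl rfl
      · rcases ih (nxt v) hw with rfl | ⟨u, hu, hSu, rfl⟩
        · right
          refine ⟨v, ?_, by assumption, rfl⟩
          rw [if_neg (by assumption)]
          exact List.mem_cons_self
        · right
          refine ⟨u, ?_, hSu, rfl⟩
          rw [if_neg (by assumption)]
          exact List.mem_cons_of_mem _ hu

end GV5T
namespace GV5A

lemma sum_single_apply {ι β : Type*} [DecidableEq β] (s : Finset ι) (f : ι → β) (a : β) :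
    (∑ i ∈ s, Finsupp.single (f i) (1 : ℕ)) a = (s.filter (fun i => f i = a)).card := by
  rw [Finset.sum_apply']
  rw [Finset.card_filter]
  exact Finset.sum_congr rfl fun i _ => by rw [Finsupp.single_apply]

lemma prod_X_eq_monomial {ι σ R : Type*} [CommSemiring R] [DecidableEq σ]
    (s : Finset ι) (f : ι → σ) :
    (∏ i ∈ s, (X (f i) : MvPolynomial σ R)) =
      monomial (∑ i ∈ s, Finsupp.single (f i) 1) 1 := by
  classical
  induction s using Finset.induction_on with
  | empty => simp [MvPolynomial.monomial_zero']
  | @insert a s hni ih =>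
    rw [Finset.prod_insert hni, Finset.sum_insert hni, ih,
      show (X (f a) : MvPolynomial σ R) = monomial (Finsupp.single (f a) 1) 1 from by
        rw [← MvPolynomial.X_pow_eq_monomial, pow_one],
      MvPolynomial.monomial_mul, one_mul]

lemma prod_neg {ι R : Type*} [CommRing R] (s : Finset ι) (f : ι → R) :
    (∏ i ∈ s, (-f i)) = (-1) ^ s.card * ∏ i ∈ s, f i := by
  classical
  induction s using Finset.induction_on with
  | empty => simp
  | insert _ _ hni ih =>
    rw [Finset.prod_insert hni, Finset.prod_insert hni, ih, Finset.card_insert_of_notMem hni,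
      pow_succ]
    ring

end GV5A
namespace GV5J

lemma jacobi_aux {Rg : Type*} [CommRing Rg] {n : ℕ} {ι₁ ι₂ : Type*}
    [Fintype ι₁] [Fintype ι₂] [DecidableEq ι₁] [DecidableEq ι₂]
    (A : Matrix (Fin n) (Fin n) Rg) (hA : A.det = 1) (eR eS : ι₁ ⊕ ι₂ ≃ Fin n) :
    (((A⁻¹).submatrix (fun i : ι₁ => eR (Sum.inl i)) (fun i : ι₁ => eS (Sum.inl i))).det = 0 ↔
      (A.submatrix (fun j : ι₂ => eS (Sum.inr j)) (fun j : ι₂ => eR (Sum.inr j))).det = 0) := by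
  have hu : IsUnit A.det := hA ▸ isUnit_one
  have hAB : A * A⁻¹ = 1 := Matrix.mul_nonsing_inv A hu
  set B := A⁻¹ with hB
  set M : Matrix (ι₁ ⊕ ι₂) (ι₁ ⊕ ι₂) Rg :=
    Matrix.of fun p q => Sum.elim (fun i => B (eR p) (eS (Sum.inl i)))
      (fun j => if p = Sum.inr j then (1 : Rg) else 0) q with hM
  have hMblocks : M = Matrix.fromBlocks
      (B.submatrix (fun i : ι₁ => eR (Sum.inl i)) (fun i : ι₁ => eS (Sum.inl i))) 0
      (Matrix.of fun (j : ι₂) (i : ι₁) => B (eR (Sum.inr j)) (eS (Sum.inl i))) 1 := by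
    ext p q
    cases p <;> cases q <;>
      simp [hM, Matrix.one_apply]
  have hMdet : M.det =
      ((A⁻¹).submatrix (fun i : ι₁ => eR (Sum.inl i)) (fun i : ι₁ => eS (Sum.inl i))).det := by
    rw [hMblocks, Matrix.det_fromBlocks_zero₁₂, Matrix.det_one, mul_one]
  set N : Matrix (ι₁ ⊕ ι₂) (ι₁ ⊕ ι₂) Rg :=
    Matrix.of fun p q => Sum.elim (fun i => if eR p = eS (Sum.inl i) then (1 : Rg) else 0)
      (fun j => A (eR p) (eR (Sum.inr j))) q with hN
  have hprod : (A.submatrix eR eR) * M = N := by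
    ext p q
    cases q with
    | inl i =>
      have : ∑ r, A (eR p) (eR r) * B (eR r) (eS (Sum.inl i)) =
          ∑ v, A (eR p) v * B v (eS (Sum.inl i)) :=
        Fintype.sum_equiv eR _ _ (fun r => rfl)
      simp only [Matrix.mul_apply, Matrix.submatrix_apply, hM, hN, Matrix.of_apply, Sum.elim_inl]
      rw [this, ← Matrix.mul_apply, hAB, Matrix.one_apply]
    | inr j =>
      simp only [Matrix.mul_apply, Matrix.submatrix_apply, hM, hN, Matrix.of_apply, Sum.elim_inr,
        mul_ite, mul_one, mul_zero]
      rw [Finset.sum_ite_eq' Finset.univ (Sum.inr j : ι₁ ⊕ ι₂) (fun r => A (eR p) (eR r))]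
      simp
  have hNdet : N.det = M.det := by
    rw [← hprod, Matrix.det_mul, Matrix.det_submatrix_equiv_self, hA, one_mul]
  set N' : Matrix (ι₁ ⊕ ι₂) (ι₁ ⊕ ι₂) Rg :=
    Matrix.of fun p q => Sum.elim (fun i => if eS p = eS (Sum.inl i) then (1 : Rg) else 0)
      (fun j => A (eS p) (eR (Sum.inr j))) q with hN'
  have hN'sub : N' = N.submatrix (eS.trans eR.symm) id := by
    ext p q
    cases q <;> simp [hN, hN', Equiv.apply_symm_apply]
  have hN'blocks : N' = Matrix.fromBlocks 1
      (Matrix.of fun (i : ι₁) (j : ι₂) => A (eS (Sum.inl i)) (eR (Sum.inr j))) 0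
      (A.submatrix (fun j : ι₂ => eS (Sum.inr j)) (fun j : ι₂ => eR (Sum.inr j))) := by
    ext p q
    cases p <;> cases q <;>
      simp [hN', Matrix.one_apply, eS.injective.eq_iff]
  have hN'det : N'.det =
      (A.submatrix (fun j : ι₂ => eS (Sum.inr j)) (fun j : ι₂ => eR (Sum.inr j))).det := by
    rw [hN'blocks, Matrix.det_fromBlocks_zero₂₁, Matrix.det_one, one_mul]
  have hsign : N'.det = (Equiv.Perm.sign ((eS.trans eR.symm : Equiv.Perm (ι₁ ⊕ ι₂))) : ℤ) * N.det := by
    rw [hN'sub]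
    rw [Matrix.det_permute]
  rw [← hMdet, ← hNdet, ← hN'det, hsign]
  rcases Int.units_eq_one_or (Equiv.Perm.sign ((eS.trans eR.symm : Equiv.Perm (ι₁ ⊕ ι₂)))) with h | h <;>
    rw [h] <;> simp

end GV5J


namespace GV5M

lemma mem_of_head?' {α : Type*} {p : List α} {h : α} (hh : p.head? = some h) : h ∈ p := by
  cases p with
  | nil => simp at hh
  | cons a t => simp at hh; subst hh; exact List.mem_cons_self

lemma directionII (m : ℕ) (E : Fin m → Fin m → Prop) [DecidableRel E]
    (hE : ∀ i j : Fin m, E i j → i < j) (R S : Finset (Fin m))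
    (hRS : R.card = S.card) (hax : Sᶜ.card = Rᶜ.card)
    (hdet : ((1 - Matrix.of (fun a b =>
        if E a b then (X (a, b) : MvPolynomial (Fin m × Fin m) ℝ) else 0)).submatrix
        (fun j : Fin Rᶜ.card => ((Sᶜ.orderIsoOfFin hax) j).1)
        (fun j : Fin Rᶜ.card => ((Rᶜ.orderIsoOfFin rfl) j).1)).det ≠ 0) :
    ∃ (τ : Equiv.Perm (Fin R.card)) (P : Fin R.card → List (Fin m)),
      (∀ i, IsPath E (P i) ((R.orderIsoOfFin rfl) i).1 ((S.orderIsoOfFin hRS.symm) (τ i)).1) ∧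
      ∀ i j v, v ∈ P i → v ∈ P j → i = j := by
  classical
  set A : Matrix (Fin m) (Fin m) (MvPolynomial (Fin m × Fin m) ℝ) :=
    1 - Matrix.of (fun a b =>
      if E a b then (X (a, b) : MvPolynomial (Fin m × Fin m) ℝ) else 0) with hA
  set σ' : Fin Rᶜ.card → Fin m := fun j => ((Sᶜ.orderIsoOfFin hax) j).1 with hσ'
  set ρ' : Fin Rᶜ.card → Fin m := fun j => ((Rᶜ.orderIsoOfFin rfl) j).1 with hρ'
  set ρ : Fin R.card → Fin m := fun i => ((R.orderIsoOfFin rfl) i).1 with hρ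
  set σl : Fin R.card → Fin m := fun i => ((S.orderIsoOfFin hRS.symm) i).1 with hσl
  have hA0 : ∀ u w : Fin m, u ≠ w → ¬ E u w → A u w = 0 := by
    intro u w h1 h2
    simp [hA, Matrix.sub_apply, Matrix.one_apply_ne h1, h2]
  -- find a nonzero permutation term
  have hπ : ∃ π : Equiv.Perm (Fin Rᶜ.card), ∀ j, A (σ' (π j)) (ρ' j) ≠ 0 := by
    by_contra hcon
    push_neg at hcon
    apply hdet
    rw [Matrix.det_apply]
    refine Finset.sum_eq_zero fun π _ => ?_
    obtain ⟨j, hj⟩ := hcon π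
    rw [Finset.prod_eq_zero (Finset.mem_univ j) (by simpa using hj), smul_zero]
  obtain ⟨π, hπ⟩ := hπ
  have dichot : ∀ j, σ' (π j) = ρ' j ∨ E (σ' (π j)) (ρ' j) := by
    intro j
    by_contra hcon
    push_neg at hcon
    exact hπ j (hA0 _ _ hcon.1 hcon.2)
  -- the next-vertex function
  set nxt : Fin m → Fin m := fun v =>
    if h : v ∈ S then v
    else ρ' (π.symm ((Sᶜ.orderIsoOfFin hax).symm ⟨v, Finset.mem_compl.mpr h⟩)) with hnxt
  have hnxt_eq : ∀ v (hv : v ∉ S),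
      nxt v = ρ' (π.symm ((Sᶜ.orderIsoOfFin hax).symm ⟨v, Finset.mem_compl.mpr hv⟩)) := by
    intro v hv; simp [hnxt, hv]
  have hσ'v : ∀ v (hv : v ∉ S),
      σ' (π (π.symm ((Sᶜ.orderIsoOfFin hax).symm ⟨v, Finset.mem_compl.mpr hv⟩))) = v := by
    intro v hv
    rw [Equiv.apply_symm_apply]
    exact congrArg Subtype.val
      (OrderIso.apply_symm_apply (Sᶜ.orderIsoOfFin hax) ⟨v, Finset.mem_compl.mpr hv⟩)
  have hdich : ∀ v, v ∉ S → v = nxt v ∨ E v (nxt v) := by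
    intro v hv
    rw [hnxt_eq v hv]
    have := dichot (π.symm ((Sᶜ.orderIsoOfFin hax).symm ⟨v, Finset.mem_compl.mpr hv⟩))
    rwa [hσ'v v hv] at this
  have hnxtR : ∀ v, v ∉ S → nxt v ∉ R := by
    intro v hv
    rw [hnxt_eq v hv]
    exact Finset.mem_compl.mp ((Rᶜ.orderIsoOfFin rfl) _).2
  have hnxtinj : ∀ v v', v ∉ S → v' ∉ S → nxt v = nxt v' → v = v' := by
    intro v v' hv hv' hee
    rw [hnxt_eq v hv, hnxt_eq v' hv'] at hee
    simp only [hρ'] at hee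
    have h1 := (Rᶜ.orderIsoOfFin rfl).injective (Subtype.coe_injective hee)
    have h2 := (Sᶜ.orderIsoOfFin hax).symm.injective (π.symm.injective h1)
    exact congrArg Subtype.val h2
  set Good : Fin m → Prop := fun v => v ∈ R ∨ ∃ u, u ∉ S ∧ nxt u = v ∧ u ≠ v with hGood
  have hstep : ∀ v, Good v → ¬ (v ∈ S) → E v (nxt v) ∧ Good (nxt v) := by
    intro v hg hv
    have hne : nxt v ≠ v := by
      intro heq
      rcases hg with hvR | ⟨u, hu1, hu2, hu3⟩
      · exact hnxtR v hv (by rw [heq]; exact hvR)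
      · exact hu3 (hnxtinj u v hu1 hv (hu2.trans heq.symm))
    have hEv : E v (nxt v) := (hdich v hv).resolve_left fun h => hne h.symm
    exact ⟨hEv, Or.inr ⟨v, hv, rfl, fun h => hne h.symm⟩⟩
  -- the paths
  set P : Fin R.card → List (Fin m) := fun i => GV5T.walk (· ∈ S) nxt m (ρ i) with hP
  have hρmem : ∀ i, ρ i ∈ R := fun i => ((R.orderIsoOfFin rfl) i).2
  have hρinj : Function.Injective ρ := fun a b h =>
    (R.orderIsoOfFin rfl).injective (Subtype.coe_injective h)
  have hGoodρ : ∀ i, Good (ρ i) := fun i => Or.inl (hρmem i)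
  have hhead : ∀ i, (P i).head? = some (ρ i) := fun i => GV5T.walk_head _ _ _ _
  have hchain : ∀ i, (P i).Chain' E := fun i => GV5T.walk_chain _ _ hstep _ _ (hGoodρ i)
  have hlast : ∀ i, ∃ w, (P i).getLast? = some w ∧ w ∈ S := by
    intro i
    exact GV5T.walk_last _ _ hstep hE m (ρ i) (hGoodρ i) (by omega)
  choose wl hwl hwlS using hlast
  -- disjointness
  have keyN : ∀ (n : ℕ) (w : Fin m), w.1 < n → ∀ i i', w ∈ P i → w ∈ P i' → i = i' := by
    intro n
    induction n with
    | zero => exact fun w hw => absurd hw (by omega)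
    | succ n ih =>
      intro w hwn i i' hw hw'
      rcases GV5T.walk_mem _ _ _ _ hw with h1 | ⟨u, hu, hSu, h1⟩ <;>
        rcases GV5T.walk_mem _ _ _ _ hw' with h2 | ⟨u', hu', hSu', h2⟩
      · exact hρinj (h1.symm.trans h2 : ρ i = ρ i')
      · exact absurd (h1 ▸ hρmem i) (h2 ▸ hnxtR u' hSu')
      · exact absurd (h2 ▸ hρmem i') (h1 ▸ hnxtR u hSu)
      · have huu : u = u' := hnxtinj u u' hSu hSu' (h1.symm.trans h2)
        subst huu
        have hGu : Good u := GV5T.walk_good _ _ hstep _ _ (hGoodρ i) u hu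
        have hlt : u < w := h1 ▸ hE _ _ (hstep u hGu hSu).1
        exact ih u (by omega) i i' hu hu'
  have key : ∀ w : Fin m, ∀ i i', w ∈ P i → w ∈ P i' → i = i' :=
    fun w => keyN (w.1 + 1) w (Nat.lt_succ_self _)
  -- endpoints give the permutation
  have hτinj : Function.Injective (fun i => (S.orderIsoOfFin hRS.symm).symm ⟨wl i, hwlS i⟩) := by
    intro i i' h
    have h1 : wl i = wl i' :=
      congrArg Subtype.val ((S.orderIsoOfFin hRS.symm).symm.injective h)
    exact key (wl i) i i' (GV5.mem_of_getLast?' (hwl i))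
      (h1 ▸ GV5.mem_of_getLast?' (hwl i'))
  set τ : Equiv.Perm (Fin R.card) :=
    Equiv.ofBijective _ (Finite.injective_iff_bijective.mp hτinj) with hτ
  refine ⟨τ, P, fun i => ⟨hhead i, ?_, hchain i⟩, fun i j v hv hv' => key v i j hv hv'⟩
  rw [hwl i]
  have hτapp : τ i = (S.orderIsoOfFin hRS.symm).symm ⟨wl i, hwlS i⟩ := rfl
  have hgoal : σl (τ i) = wl i := by
    simp only [hσl, hτapp]
    exact congrArg Subtype.val (OrderIso.apply_symm_apply _ _)
  simp only [hσl] at hgoal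
  rw [← hgoal]

end GV5M

set_option maxHeartbeats 1000000 in
lemma directionI (m : ℕ) (E : Fin m → Fin m → Prop) [DecidableRel E]
    (hE : ∀ i j : Fin m, E i j → i < j) (R S : Finset (Fin m))
    (hRS : R.card = S.card) (hax : Sᶜ.card = Rᶜ.card)
    (τ : Equiv.Perm (Fin R.card)) (P : Fin R.card → List (Fin m))
    (hP : ∀ i, IsPath E (P i) ((R.orderIsoOfFin rfl) i).1 ((S.orderIsoOfFin hRS.symm) (τ i)).1)
    (hdisj : ∀ i j v, v ∈ P i → v ∈ P j → i = j) :
    ((1 - Matrix.of (fun a b =>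
        if E a b then (X (a, b) : MvPolynomial (Fin m × Fin m) ℝ) else 0)).submatrix
        (fun j : Fin Rᶜ.card => ((Sᶜ.orderIsoOfFin hax) j).1)
        (fun j : Fin Rᶜ.card => ((Rᶜ.orderIsoOfFin rfl) j).1)).det ≠ 0 := by
  classical
  set A : Matrix (Fin m) (Fin m) (MvPolynomial (Fin m × Fin m) ℝ) :=
    1 - Matrix.of (fun a b =>
      if E a b then (X (a, b) : MvPolynomial (Fin m × Fin m) ℝ) else 0) with hA
  set σ' : Fin Rᶜ.card → Fin m := fun j => ((Sᶜ.orderIsoOfFin hax) j).1 with hσ'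
  set ρ' : Fin Rᶜ.card → Fin m := fun j => ((Rᶜ.orderIsoOfFin rfl) j).1 with hρ'
  set ρ : Fin R.card → Fin m := fun i => ((R.orderIsoOfFin rfl) i).1 with hρ
  set σl : Fin R.card → Fin m := fun i => ((S.orderIsoOfFin hRS.symm) i).1 with hσl
  -- matrix entry facts
  have hA1 : ∀ u : Fin m, A u u = 1 := by
    intro u
    have : ¬ E u u := fun h => absurd (hE u u h) (lt_irrefl u)
    simp [hA, Matrix.sub_apply, Matrix.one_apply, this]
  have hA0 : ∀ u w : Fin m, u ≠ w → ¬ E u w → A u w = 0 := by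
    intro u w h1 h2
    simp [hA, Matrix.sub_apply, Matrix.one_apply_ne h1, h2]
  have hAX : ∀ u w : Fin m, E u w → A u w = - X (u, w) := by
    intro u w h
    have hne : u ≠ w := fun he => absurd (hE u w h) (he ▸ lt_irrefl u)
    simp [hA, Matrix.sub_apply, Matrix.one_apply_ne hne, h]
  -- injectivity and membership facts
  have hρ'inj : Function.Injective ρ' := fun a b h =>
    (Rᶜ.orderIsoOfFin rfl).injective (Subtype.coe_injective h)
  have hσ'inj : Function.Injective σ' := fun a b h =>
    (Sᶜ.orderIsoOfFin hax).injective (Subtype.coe_injective h)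
  have hρ'mem : ∀ j, ρ' j ∉ R := fun j => Finset.mem_compl.mp ((Rᶜ.orderIsoOfFin rfl) j).2
  have hρmem : ∀ i, ρ i ∈ R := fun i => ((R.orderIsoOfFin rfl) i).2
  have hσlmem : ∀ i, σl i ∈ S := fun i => ((S.orderIsoOfFin hRS.symm) i).2
  have hρsurj : ∀ v ∈ R, ∃ i, ρ i = v := by
    intro v hv
    refine ⟨(R.orderIsoOfFin rfl).symm ⟨v, hv⟩, ?_⟩
    simp only [hρ]
    exact congrArg Subtype.val (OrderIso.apply_symm_apply _ _)
  have hσlsurj : ∀ v ∈ S, ∃ i, σl i = v := by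
    intro v hv
    refine ⟨(S.orderIsoOfFin hRS.symm).symm ⟨v, hv⟩, ?_⟩
    simp only [hσl]
    exact congrArg Subtype.val (OrderIso.apply_symm_apply _ _)
  have hρ'surj : ∀ v, v ∉ R → ∃ j, ρ' j = v := by
    intro v hv
    refine ⟨(Rᶜ.orderIsoOfFin rfl).symm ⟨v, Finset.mem_compl.mpr hv⟩, ?_⟩
    simp only [hρ']
    exact congrArg Subtype.val (OrderIso.apply_symm_apply _ _)
  -- path facts
  have hhead : ∀ i, (P i).head? = some (ρ i) := fun i => (hP i).1
  have hlast : ∀ i, (P i).getLast? = some (σl (τ i)) := fun i => (hP i).2.1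
  have hchain : ∀ i, (P i).Chain' E := fun i => (hP i).2.2
  have hsorted : ∀ i, (P i).Pairwise (· < ·) := by
    intro i
    rw [← List.isChain_iff_pairwise]
    exact List.IsChain.imp (fun a b h => hE a b h) (hchain i)
  have hnodup : ∀ i, (P i).Nodup := fun i => (hsorted i).imp (fun h => ne_of_lt h)
  -- the edge set of the path system
  set edges : Fin R.card → List (Fin m × Fin m) := fun i => (P i).zip (P i).tail with hedges
  set Fsys : Finset (Fin m × Fin m) :=
    Finset.univ.filter (fun e => ∃ i, e ∈ edges i) with hFsysdef
  have hFsys : ∀ e, e ∈ Fsys ↔ ∃ i, e ∈ edges i := by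
    intro e; simp [hFsysdef]
  have fE : ∀ {u v : Fin m}, (u, v) ∈ Fsys → E u v := by
    intro u v h
    obtain ⟨i, hi⟩ := (hFsys _).mp h
    exact GV5.chain'_of_zip (hchain i) hi
  have flt : ∀ {u v : Fin m}, (u, v) ∈ Fsys → u < v := fun h => hE _ _ (fE h)
  -- targets of edges are not in R
  have F1 : ∀ {u v : Fin m}, (u, v) ∈ Fsys → v ∉ R := by
    intro u v h hvR
    obtain ⟨i, hi⟩ := (hFsys _).mp h
    obtain ⟨a, ha⟩ := hρsurj v hvR
    have hva : v ∈ P a := ha ▸ GV5M.mem_of_head?' (hhead a)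
    have hia : i = a := hdisj i a v (GV5.zip_mem_right hi) hva
    subst hia
    have : v ≤ u := by
      have := GV5.head_le_of_sorted (hsorted i) (hhead i) (GV5.zip_mem_left hi)
      rw [ha] at this
      exact this
    exact absurd (hE _ _ (GV5.chain'_of_zip (hchain i) hi)) (not_lt.mpr this)
  -- sources of edges are not in S
  have F2 : ∀ {u v : Fin m}, (u, v) ∈ Fsys → u ∉ S := by
    intro u v h huS
    obtain ⟨i, hi⟩ := (hFsys _).mp h
    obtain ⟨a, ha⟩ := hσlsurj u huS
    have hl : (P (τ.symm a)).getLast? = some u := by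
      have := hlast (τ.symm a)
      rw [Equiv.apply_symm_apply, ha] at this
      exact this
    have hua : u ∈ P (τ.symm a) := GV5.mem_of_getLast?' hl
    have hia : i = τ.symm a := hdisj i (τ.symm a) u (GV5.zip_mem_left hi) hua
    have hvu : v ≤ u :=
      GV5.le_getLast_of_sorted (hsorted _) hl (GV5.zip_mem_right (hia ▸ hi))
    exact absurd (hE _ _ (GV5.chain'_of_zip (hchain i) hi)) (not_lt.mpr hvu)
  -- unique successor / predecessor
  have F3 : ∀ {u v v' : Fin m}, (u, v) ∈ Fsys → (u, v') ∈ Fsys → v = v' := by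
    intro u v v' h h'
    obtain ⟨i, hi⟩ := (hFsys _).mp h
    obtain ⟨j, hj⟩ := (hFsys _).mp h'
    have hij : i = j := hdisj i j u (GV5.zip_mem_left hi) (GV5.zip_mem_left hj)
    subst hij
    exact GV5.next_unique (hnodup i) hi hj
  have F4 : ∀ {u u' v : Fin m}, (u, v) ∈ Fsys → (u', v) ∈ Fsys → u = u' := by
    intro u u' v h h'
    obtain ⟨i, hi⟩ := (hFsys _).mp h
    obtain ⟨j, hj⟩ := (hFsys _).mp h'
    have hij : i = j := hdisj i j v (GV5.zip_mem_right hi) (GV5.zip_mem_right hj)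
    subst hij
    exact GV5.prev_unique (hnodup i) hi hj
  -- every vertex of S \ R has an incoming edge
  have F5 : ∀ v : Fin m, v ∉ R → v ∈ S → ∃ u, (u, v) ∈ Fsys := by
    intro v hvR hvS
    obtain ⟨a, ha⟩ := hσlsurj v hvS
    have hl : (P (τ.symm a)).getLast? = some v := by
      have := hlast (τ.symm a)
      rw [Equiv.apply_symm_apply, ha] at this
      exact this
    have hvne : v ≠ ρ (τ.symm a) := by
      intro h
      exact hvR (h ▸ hρmem _)
    obtain ⟨u, hu⟩ := GV5.in_edge_of_ne_head (GV5.mem_of_getLast?' hl) (hhead _) hvne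
    exact ⟨u, (hFsys _).mpr ⟨_, hu⟩⟩
  -- a source not in R has an incoming edge
  have F6 : ∀ {u w : Fin m}, (u, w) ∈ Fsys → u ∉ R → ∃ x, (x, u) ∈ Fsys := by
    intro u w h huR
    obtain ⟨i, hi⟩ := (hFsys _).mp h
    have hune : u ≠ ρ i := fun he => huR (he ▸ hρmem i)
    obtain ⟨x, hx⟩ := GV5.in_edge_of_ne_head (GV5.zip_mem_left hi) (hhead i) hune
    exact ⟨x, (hFsys _).mpr ⟨i, hx⟩⟩
  -- construct the distinguished permutation
  have htv : ∀ j : Fin Rᶜ.card, ∃ t : Fin m, t ∉ S ∧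
      ((∃ u, (u, ρ' j) ∈ Fsys) → (t, ρ' j) ∈ Fsys) ∧
      ((¬ ∃ u, (u, ρ' j) ∈ Fsys) → t = ρ' j) := by
    intro j
    by_cases h : ∃ u, (u, ρ' j) ∈ Fsys
    · obtain ⟨u, hu⟩ := h
      exact ⟨u, F2 hu, fun _ => hu, fun hn => absurd ⟨u, hu⟩ hn⟩
    · refine ⟨ρ' j, ?_, fun h' => absurd h' h, fun _ => rfl⟩
      intro hvS
      exact h (F5 (ρ' j) (hρ'mem j) hvS)
  choose tv htvS htvE htvI using htv
  set g0 : Fin Rᶜ.card → Fin Rᶜ.card :=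
    fun j => (Sᶜ.orderIsoOfFin hax).symm ⟨tv j, Finset.mem_compl.mpr (htvS j)⟩ with hg0
  have hσ'g0 : ∀ j, σ' (g0 j) = tv j := by
    intro j
    simp only [hσ', hg0]
    exact congrArg Subtype.val (OrderIso.apply_symm_apply _ _)
  have hg0inj : Function.Injective g0 := by
    intro j j' h
    have htveq : tv j = tv j' := by rw [← hσ'g0 j, ← hσ'g0 j', h]
    by_cases hj : ∃ u, (u, ρ' j) ∈ Fsys <;> by_cases hj' : ∃ u, (u, ρ' j') ∈ Fsys
    · exact hρ'inj (F3 (htvE j hj) (htveq ▸ htvE j' hj'))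
    · exfalso
      have h1 : tv j' = ρ' j' := htvI j' hj'
      have h2 : (tv j, ρ' j) ∈ Fsys := htvE j hj
      rw [htveq, h1] at h2
      obtain ⟨x, hx⟩ := F6 h2 (hρ'mem j')
      exact hj' ⟨x, hx⟩
    · exfalso
      have h1 : tv j = ρ' j := htvI j hj
      have h2 : (tv j', ρ' j') ∈ Fsys := htvE j' hj'
      rw [← htveq, h1] at h2
      obtain ⟨x, hx⟩ := F6 h2 (hρ'mem j)
      exact hj ⟨x, hx⟩
    · exact hρ'inj ((htvI j hj).symm.trans (htveq.trans (htvI j' hj')))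
  set π₀ : Equiv.Perm (Fin Rᶜ.card) :=
    Equiv.ofBijective g0 (Finite.injective_iff_bijective.mp hg0inj) with hπ₀
  have hπ₀app : ∀ j, σ' (π₀ j) = tv j := fun j => hσ'g0 j
  -- the target exponent
  set d : (Fin m × Fin m) →₀ ℕ := ∑ e ∈ Fsys, Finsupp.single e 1 with hd
  -- value of a permutation term as a monomial
  have hval : ∀ π : Equiv.Perm (Fin Rᶜ.card),
      (∀ j, E (σ' (π j)) (ρ' j) ∨ σ' (π j) = ρ' j) →
      (∏ j, A (σ' (π j)) (ρ' j)) =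
        monomial (∑ j ∈ Finset.univ.filter (fun j => σ' (π j) ≠ ρ' j),
            Finsupp.single (σ' (π j), ρ' j) 1)
          ((-1 : ℝ) ^ (Finset.univ.filter (fun j => σ' (π j) ≠ ρ' j)).card) := by
    intro π hdi
    rw [← Finset.prod_filter_mul_prod_filter_not Finset.univ (fun j => σ' (π j) ≠ ρ' j)]
    have h2 : ∏ j ∈ Finset.univ.filter (fun j => ¬ σ' (π j) ≠ ρ' j),
        A (σ' (π j)) (ρ' j) = 1 := by
      refine Finset.prod_eq_one fun j hj => ?_
      rw [Finset.mem_filter] at hj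
      have := not_not.mp hj.2
      rw [this]
      exact hA1 _
    have h1 : ∏ j ∈ Finset.univ.filter (fun j => σ' (π j) ≠ ρ' j),
        A (σ' (π j)) (ρ' j) =
        ∏ j ∈ Finset.univ.filter (fun j => σ' (π j) ≠ ρ' j),
          (- X (σ' (π j), ρ' j) : MvPolynomial (Fin m × Fin m) ℝ) := by
      refine Finset.prod_congr rfl fun j hj => ?_
      rw [Finset.mem_filter] at hj
      exact hAX _ _ ((hdi j).resolve_right hj.2)
    rw [h2, mul_one, h1, GV5A.prod_neg, GV5A.prod_X_eq_monomial]
    have hC : (C ((-1 : ℝ) ^ (Finset.univ.filter (fun j => σ' (π j) ≠ ρ' j)).card) :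
        MvPolynomial (Fin m × Fin m) ℝ) =
        (-1) ^ (Finset.univ.filter (fun j => σ' (π j) ≠ ρ' j)).card := by
      rw [_root_.map_pow, _root_.map_neg, _root_.map_one]
    rw [← hC, C_mul_monomial, mul_one]
  -- π₀'s filter set is in bijection with Fsys
  have hT₀ : Finset.univ.filter (fun j => σ' (π₀ j) ≠ ρ' j) =
      Finset.univ.filter (fun j => ∃ u, (u, ρ' j) ∈ Fsys) := by
    refine Finset.filter_congr fun j _ => ?_
    rw [hπ₀app j]
    constructor
    · intro hne
      by_contra hno
      exact hne (htvI j hno)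
    · intro hex
      have := flt (htvE j hex)
      exact fun he => absurd this (he ▸ lt_irrefl _)
  have hbij : ∀ (f : (Fin m × Fin m) → ((Fin m × Fin m) →₀ ℕ)),
      ∑ j ∈ Finset.univ.filter (fun j => σ' (π₀ j) ≠ ρ' j), f (σ' (π₀ j), ρ' j) =
      ∑ e ∈ Fsys, f e := by
    intro f
    rw [hT₀]
    refine Finset.sum_bij (fun j _ => (tv j, ρ' j)) ?_ ?_ ?_ ?_
    · intro j hj
      rw [Finset.mem_filter] at hj
      exact htvE j hj.2
    · intro j hj j' hj' he
      exact hρ'inj (congrArg Prod.snd he)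
    · rintro ⟨u, v⟩ he
      obtain ⟨j, rfl⟩ := hρ'surj v (F1 he)
      refine ⟨j, Finset.mem_filter.mpr ⟨Finset.mem_univ _, ⟨u, he⟩⟩, ?_⟩
      have := htvE j ⟨u, he⟩
      show (tv j, ρ' j) = (u, ρ' j)
      rw [F4 this he]
    · intro j hj
      rw [hπ₀app j]
  have hcard₀ : (Finset.univ.filter (fun j => σ' (π₀ j) ≠ ρ' j)).card = Fsys.card := by
    rw [hT₀]
    refine Finset.card_bij (fun j _ => (tv j, ρ' j)) ?_ ?_ ?_
    · intro j hj
      rw [Finset.mem_filter] at hj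
      exact htvE j hj.2
    · intro j hj j' hj' he
      exact hρ'inj (congrArg Prod.snd he)
    · rintro ⟨u, v⟩ he
      obtain ⟨j, rfl⟩ := hρ'surj v (F1 he)
      refine ⟨j, Finset.mem_filter.mpr ⟨Finset.mem_univ _, ⟨u, he⟩⟩, ?_⟩
      have := htvE j ⟨u, he⟩
      show (tv j, ρ' j) = (u, ρ' j)
      rw [F4 this he]
  have hdich₀ : ∀ j, E (σ' (π₀ j)) (ρ' j) ∨ σ' (π₀ j) = ρ' j := by
    intro j
    by_cases h : ∃ u, (u, ρ' j) ∈ Fsys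
    · left
      rw [hπ₀app j]
      exact fE (htvE j h)
    · right
      rw [hπ₀app j]
      exact htvI j h
  have hval₀ : (∏ j, A (σ' (π₀ j)) (ρ' j)) = monomial d ((-1 : ℝ) ^ Fsys.card) := by
    rw [hval π₀ hdich₀, hcard₀]
    congr 1
    rw [hd, ← hbij (fun e => Finsupp.single e 1)]
  -- uniqueness: any other permutation contributes 0 to the coefficient of d
  have huniq : ∀ π : Equiv.Perm (Fin Rᶜ.card), π ≠ π₀ →
      coeff d (∏ j, A (σ' (π j)) (ρ' j)) = 0 := by
    intro π hne
    by_contra hc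
    have hprodne : (∏ j, A (σ' (π j)) (ρ' j)) ≠ 0 := by
      intro h; rw [h] at hc; simp at hc
    have hdich' : ∀ j, E (σ' (π j)) (ρ' j) ∨ σ' (π j) = ρ' j := by
      intro j
      by_contra hcon
      push_neg at hcon
      exact hprodne (Finset.prod_eq_zero (Finset.mem_univ j) (hA0 _ _ hcon.2 hcon.1))
    rw [hval π hdich'] at hc
    rw [coeff_monomial] at hc
    have hDd : (∑ j ∈ Finset.univ.filter (fun j => σ' (π j) ≠ ρ' j),
        Finsupp.single (σ' (π j), ρ' j) 1) = d := by
      by_contra h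
      rw [if_neg h] at hc
      exact hc rfl
    -- membership correspondence
    have hmem : ∀ e : Fin m × Fin m,
        (∃ j, σ' (π j) ≠ ρ' j ∧ (σ' (π j), ρ' j) = e) ↔ e ∈ Fsys := by
      intro e
      have h1 := congrArg (fun f => f e) hDd
      simp only [hd] at h1
      rw [GV5A.sum_single_apply, GV5A.sum_single_apply] at h1
      rw [Finset.filter_filter] at h1
      constructor
      · intro ⟨j, hj1, hj2⟩
        have : (Finset.filter (fun j => σ' (π j) ≠ ρ' j ∧ (σ' (π j), ρ' j) = e)
            Finset.univ).Nonempty := ⟨j, by simp [hj1, hj2]⟩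
        have h2 := Finset.card_pos.mpr this
        rw [h1] at h2
        obtain ⟨e', he'⟩ := Finset.card_pos.mp h2
        rw [Finset.mem_filter] at he'
        exact he'.2 ▸ he'.1
      · intro he
        have : (Finset.filter (fun e' => e' = e) Fsys).Nonempty :=
          ⟨e, Finset.mem_filter.mpr ⟨he, rfl⟩⟩
        have h2 := Finset.card_pos.mpr this
        rw [← h1] at h2
        obtain ⟨j, hj⟩ := Finset.card_pos.mp h2
        rw [Finset.mem_filter] at hj
        exact ⟨j, hj.2⟩
    -- determination of π
    have hdet : ∀ j, σ' (π j) = tv j := by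
      intro j
      by_cases h : ∃ u, (u, ρ' j) ∈ Fsys
      · have h2 : (tv j, ρ' j) ∈ Fsys := htvE j h
        obtain ⟨j', hj'1, hj'2⟩ := (hmem (tv j, ρ' j)).mpr h2
        have : j' = j := hρ'inj (congrArg Prod.snd hj'2)
        subst this
        exact congrArg Prod.fst hj'2
      · rw [htvI j h]
        by_contra hcon
        have := (hmem (σ' (π j), ρ' j)).mp ⟨j, hcon, rfl⟩
        exact h ⟨σ' (π j), this⟩
    exact hne (Equiv.ext fun j => hσ'inj ((hdet j).trans (hπ₀app j).symm))
  -- put it together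
  intro hdet0
  have hco := congrArg (coeff d) hdet0
  rw [Matrix.det_apply] at hco
  rw [coeff_sum] at hco
  have hterm : ∀ π : Equiv.Perm (Fin Rᶜ.card),
      coeff d (Equiv.Perm.sign π •
        ∏ j, (A.submatrix σ' ρ') (π j) j) =
      (Equiv.Perm.sign π : ℤ) • coeff d (∏ j, A (σ' (π j)) (ρ' j)) := by
    intro π
    rw [Units.smul_def, coeff_smul]
    congr 2
  rw [Finset.sum_congr rfl (fun π _ => hterm π)] at hco
  rw [Finset.sum_eq_single π₀ (fun π _ hne => by rw [huniq π hne, smul_zero])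
    (fun h => absurd (Finset.mem_univ π₀) h)] at hco
  rw [hval₀, coeff_monomial, if_pos rfl] at hco
  rcases Int.units_eq_one_or (Equiv.Perm.sign π₀) with h | h <;> rw [h] at hco <;>
    simp at hco <;>
    exact absurd hco (pow_ne_zero _ (by norm_num))

lemma detA_one (m : ℕ) (E : Fin m → Fin m → Prop) [DecidableRel E]
    (hE : ∀ i j : Fin m, E i j → i < j) :
    (1 - Matrix.of (fun a b =>
      if E a b then (X (a, b) : MvPolynomial (Fin m × Fin m) ℝ) else 0)).det = 1 := by
  set A : Matrix (Fin m) (Fin m) (MvPolynomial (Fin m × Fin m) ℝ) :=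
    1 - Matrix.of (fun a b =>
      if E a b then (X (a, b) : MvPolynomial (Fin m × Fin m) ℝ) else 0) with hA
  have ht : A.BlockTriangular id := by
    intro i j hji
    have hne : i ≠ j := fun h => absurd (h ▸ hji) (lt_irrefl _)
    have hnE : ¬ E i j := fun h => absurd (hE i j h) (not_lt.mpr (le_of_lt hji))
    simp [hA, Matrix.sub_apply, Matrix.one_apply_ne hne, hnE]
  rw [Matrix.det_of_upperTriangular ht]
  refine Finset.prod_eq_one fun i _ => ?_
  have hnE : ¬ E i i := fun h => absurd (hE i i h) (lt_irrefl _)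
  simp [hA, Matrix.sub_apply, Matrix.one_apply, hnE]



open GV5M in
theorem stmt5' (m : ℕ) (E : Fin m → Fin m → Prop) [DecidableRel E]
    (hE : ∀ i j : Fin m, E i j → i < j) (R S : Finset (Fin m))
    (hRS : R.card = S.card) :
    (if h : R.card = S.card then
      ((((1 - Matrix.of (fun a b =>
        if E a b then (X (a, b) : MvPolynomial (Fin m × Fin m) ℝ) else 0))⁻¹).submatrix
        (fun i : Fin R.card => ((R.orderIsoOfFin rfl) i).1)
        (fun i : Fin R.card => ((S.orderIsoOfFin h.symm) i).1)).det) else 0) = 0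
    ↔ ∀ (τ : Equiv.Perm (Fin R.card)) (P : Fin R.card → List (Fin m)),
        (∀ i, IsPath E (P i) ((R.orderIsoOfFin rfl) i).1
          ((S.orderIsoOfFin hRS.symm) (τ i)).1) →
        ∃ i j, i ≠ j ∧ ∃ v, v ∈ P i ∧ v ∈ P j := by
  classical
  rw [dif_pos hRS]
  have hax : Sᶜ.card = Rᶜ.card := by
    simp [Finset.card_compl, hRS]
  set A : Matrix (Fin m) (Fin m) (MvPolynomial (Fin m × Fin m) ℝ) :=
    1 - Matrix.of (fun a b =>
      if E a b then (X (a, b) : MvPolynomial (Fin m × Fin m) ℝ) else 0) with hA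
  -- the two sum-equivs
  set eR : Fin R.card ⊕ Fin Rᶜ.card ≃ Fin m :=
    (Equiv.sumCongr (R.orderIsoOfFin rfl).toEquiv
      (((Rᶜ).orderIsoOfFin rfl).toEquiv.trans
        (Equiv.subtypeEquivRight (fun x => Finset.mem_compl)))).trans
      (Equiv.sumCompl (· ∈ R)) with heR
  set eS : Fin R.card ⊕ Fin Rᶜ.card ≃ Fin m :=
    (Equiv.sumCongr (S.orderIsoOfFin hRS.symm).toEquiv
      (((Sᶜ).orderIsoOfFin hax).toEquiv.trans
        (Equiv.subtypeEquivRight (fun x => Finset.mem_compl)))).trans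
      (Equiv.sumCompl (· ∈ S)) with heS
  have heRl : ∀ i, eR (Sum.inl i) = ((R.orderIsoOfFin rfl) i).1 := by
    intro i; simp [heR]
  have heRr : ∀ j, eR (Sum.inr j) = ((Rᶜ.orderIsoOfFin rfl) j).1 := by
    intro j; simp [heR]
  have heSl : ∀ i, eS (Sum.inl i) = ((S.orderIsoOfFin hRS.symm) i).1 := by
    intro i; simp [heS]
  have heSr : ∀ j, eS (Sum.inr j) = ((Sᶜ.orderIsoOfFin hax) j).1 := by
    intro j; simp [heS]
  have hjac := GV5J.jacobi_aux A (detA_one m E hE) eR eS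
  have hfun1 : (fun i : Fin R.card => eR (Sum.inl i)) =
      (fun i : Fin R.card => ((R.orderIsoOfFin rfl) i).1) := funext heRl
  have hfun2 : (fun i : Fin R.card => eS (Sum.inl i)) =
      (fun i : Fin R.card => ((S.orderIsoOfFin hRS.symm) i).1) := funext heSl
  have hfun3 : (fun j : Fin Rᶜ.card => eS (Sum.inr j)) =
      (fun j : Fin Rᶜ.card => ((Sᶜ.orderIsoOfFin hax) j).1) := funext heSr
  have hfun4 : (fun j : Fin Rᶜ.card => eR (Sum.inr j)) =
      (fun j : Fin Rᶜ.card => ((Rᶜ.orderIsoOfFin rfl) j).1) := funext heRr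
  rw [hfun1, hfun2, hfun3, hfun4] at hjac
  rw [hjac]
  constructor
  · intro h0 τ P hPs
    by_contra hcon
    push_neg at hcon
    have hdisj : ∀ i j v, v ∈ P i → v ∈ P j → i = j := by
      intro i j v hv hv'
      by_contra hij
      exact hcon i j hij v hv hv'
    exact directionI m E hE R S hRS hax τ P hPs hdisj h0
  · intro hall
    by_contra h0
    obtain ⟨τ, P, hPs, hdisj⟩ := GV5M.directionII m E hE R S hRS hax h0
    obtain ⟨i, j, hij, v, hv1, hv2⟩ := hall τ P hPs
    exact hij (hdisj i j v hv1 hv2)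


/-- **Vanishing criterion from the Gessel–Viennot–Lindström lemma.** For a DAG on
`[m]` with edge indeterminates and `Λ = I - L`, the minor `det (Λ⁻¹)_{R,S}` is
identically zero iff every system of `ℓ = #R = #S` directed paths from `R` to `S`
contains two paths that share a vertex. -/
theorem stmt5 (m : ℕ) (E : Fin m → Fin m → Prop) [DecidableRel E]
    (hE : ∀ i j : Fin m, E i j → i < j) (R S : Finset (Fin m))
    (hRS : R.card = S.card) :
    subdet ((1 - Matrix.of (fun a b =>
        if E a b then (X (a, b) : MvPolynomial (Fin m × Fin m) ℝ) else 0))⁻¹) R S = 0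
    ↔ ∀ (τ : Equiv.Perm (Fin R.card)) (P : Fin R.card → List (Fin m)),
        (∀ i, IsPath E (P i) ((R.orderIsoOfFin rfl) i).1
          ((S.orderIsoOfFin hRS.symm) (τ i)).1) →
        ∃ i j, i ≠ j ∧ ∃ v, v ∈ P i ∧ v ∈ P j := by
  unfold subdet
  exact stmt5' m E hE R S hRS
end

section
/- Let $G$ be a DAG. A set $C$ d-separates disjoint sets $A$ and $B$ in $G$ if and only if there is a partition $C = C_A \cup C_B$ such that $(C_A, C_B)$ trek-separates $A\cup C$ from $B\cup C$. -/
/-- `(C_A, C_B)` trek-separates `A` from `B`. -/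
def TSep {V : Type*} (E : V → V → Prop) (A B CA CB : Finset V) : Prop :=
  ∀ a ∈ A, ∀ b ∈ B, ∀ P₁ P₂ : List V,
    (∃ k, IsPath E P₁ k a ∧ IsPath E P₂ k b) →
    (∃ v ∈ CA, v ∈ P₁) ∨ (∃ v ∈ CB, v ∈ P₂)

/-- The vertex at position `t` of the (undirected) path `p` is a collider: both
adjacent path edges point into it. -/
def IsColliderAt {V : Type*} (E : V → V → Prop) (p : List V) (t : ℕ) : Prop :=
  1 ≤ t ∧ ∃ x y z, p[t - 1]? = some x ∧ p[t]? = some y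
    ∧ p[t + 1]? = some z ∧ E x y ∧ E z y

/-- `C` d-separates `A` and `B`: every (undirected) path in `G` from `A` to `B`
contains a non-collider belonging to `C`, or a collider that is not in `C` and has
no descendant in `C`. -/
def DSep {m : ℕ} (E : Fin m → Fin m → Prop) (A B C : Finset (Fin m)) : Prop :=
  ∀ p : List (Fin m), ∀ a ∈ A, ∀ b ∈ B,
    p.head? = some a → p.getLast? = some b → p.Chain' (fun x y => E x y ∨ E y x) →
    ∃ t : ℕ, ∃ v : Fin m, p[t]? = some v ∧
      ((¬ IsColliderAt E p t ∧ v ∈ C)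
        ∨ (IsColliderAt E p t ∧ v ∉ C ∧ ∀ d ∈ C, ¬ ∃ q : List (Fin m), IsPath E q v d))

namespace DT
open List

lemma get?_append_left {α : Type*} {l₁ l₂ : List α} {n : ℕ} (h : n < l₁.length) :
    (l₁ ++ l₂)[n]? = l₁[n]? := by
  exact getElem?_append_left h

lemma get?_append_right {α : Type*} {l₁ l₂ : List α} {n : ℕ} (h : l₁.length ≤ n) :
    (l₁ ++ l₂)[n]? = l₂[n - l₁.length]? := by
  exact getElem?_append_right h

lemma getLast?_eq_get? {α : Type*} (l : List α) : l.getLast? = l[l.length - 1]? := by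
  simp [getLast?_eq_getElem?]

lemma get?_some_lt {α : Type*} {l : List α} {n : ℕ} {a : α} (h : l[n]? = some a) :
    n < l.length := by
  by_contra hn
  rw [List.getElem?_eq_none (le_of_not_gt hn)] at h
  exact absurd h (by simp)

lemma chain'_rel {α : Type*} {R : α → α → Prop} {l : List α} (h : l.Chain' R) {i : ℕ}
    {x y : α} (hx : l[i]? = some x) (hy : l[i+1]? = some y) : R x y := by
  have hi : i + 1 < l.length := get?_some_lt hy
  have h' := (List.isChain_iff_getElem.1 h) i (by omega)
  rw [List.getElem?_eq_getElem (by omega)] at hx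
  rw [List.getElem?_eq_getElem hi] at hy
  obtain rfl := Option.some_inj.1 hx
  obtain rfl := Option.some_inj.1 hy
  exact h'

lemma isPath_ne_nil {V : Type*} {E : V → V → Prop} {p : List V} {i j : V}
    (h : IsPath E p i j) : p ≠ [] := by
  intro hp; rw [hp] at h; exact absurd h.1 (by simp)

lemma isPath_singleton {V : Type*} (E : V → V → Prop) (x : V) : IsPath E [x] x x := by
  refine ⟨rfl, rfl, List.isChain_singleton x⟩

lemma head?_mem {α : Type*} {l : List α} {a : α} (h : l.head? = some a) : a ∈ l := by
  cases l with
  | nil => exact absurd h (by simp)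
  | cons b t => rw [List.head?_cons, Option.some_inj] at h; rw [← h]; exact List.mem_cons_self

lemma getLast?_mem {α : Type*} {l : List α} {a : α} (h : l.getLast? = some a) : a ∈ l := by
  have := List.mem_getLast?_eq_getLast h
  obtain ⟨h1, h2⟩ := this
  rw [h2]; exact List.getLast_mem h1

lemma isPath_append {V : Type*} {E : V → V → Prop} {P Q : List V} {u v w : V}
    (hP : IsPath E P u v) (hQ : IsPath E Q v w) : IsPath E (P ++ Q.tail) u w := by
  obtain ⟨hP1, hP2, hP3⟩ := hP
  obtain ⟨hQ1, hQ2, hQ3⟩ := hQ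
  have hPne : P ≠ [] := by intro h; rw [h] at hP1; exact absurd hP1 (by simp)
  constructor
  · rw [List.head?_append, hP1]; rfl
  constructor
  · cases hQt : Q.tail with
    | nil =>
      have : Q = [v] := by
        cases Q with
        | nil => exact absurd hQ1 (by simp)
        | cons a t =>
          simp only [List.tail_cons] at hQt
          rw [List.head?_cons, Option.some_inj] at hQ1
          rw [hQt, hQ1]
      rw [this] at hQ2
      simp only [List.getLast?_singleton, Option.some_inj] at hQ2
      rw [List.append_nil, hP2, hQ2]
    | cons a t =>
      rw [List.getLast?_append_of_ne_nil _ (List.cons_ne_nil a t)]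
      rw [← hQt]
      cases Q with
      | nil => exact absurd hQ1 (by simp)
      | cons b s =>
        simp only [List.tail_cons]
        rw [← hQ2]
        cases s with
        | nil => simp at hQt
        | cons c r => simp [List.getLast?_cons_cons]
  · rw [List.Chain', List.isChain_append]
    refine ⟨hP3, List.IsChain.tail hQ3, ?_⟩
    intro x hx y hy
    rw [hP2, Option.mem_def, Option.some_inj] at hx
    cases Q with
    | nil => exact absurd hQ1 (by simp)
    | cons b s =>
      simp only [List.tail_cons] at hy
      rw [List.head?_cons, Option.some_inj] at hQ1
      subst hQ1
      cases s with
      | nil => simp at hy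
      | cons c r =>
        simp only [List.head?_cons, Option.mem_def, Option.some_inj] at hy
        subst hx; subst hy
        exact (List.isChain_cons_cons.1 hQ3).1


variable {m : ℕ} {E : Fin m → Fin m → Prop}

/-- In a chain for `E` (increasing), every element of `dropLast` is `< last`. -/
lemma dropLast_lt_getLast (hE : ∀ i j : Fin m, E i j → i < j) :
    ∀ {P : List (Fin m)} {x : Fin m}, P.Chain' E → P.getLast? = some x →
      ∀ v ∈ P.dropLast, v < x := by
  intro P
  induction P with
  | nil => intro x _ _ v hv; simp at hv
  | cons a t ih =>
    intro x hc hl v hv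
    cases t with
    | nil => simp at hv
    | cons b s =>
      rw [List.Chain', List.isChain_cons_cons] at hc
      have hbx : b = x ∨ b < x := by
        cases s with
        | nil =>
          simp only [List.getLast?_cons_cons, List.getLast?_singleton, Option.some_inj] at hl
          exact Or.inl hl
        | cons c r =>
          right
          refine ih hc.2 ?_ b ?_
          · rw [List.getLast?_cons_cons] at hl; exact hl
          · simp
      simp only [List.dropLast_cons₂, List.mem_cons] at hv
      cases hv with
      | inl h =>
        subst h
        have := hE _ _ hc.1
        rcases hbx with h | h
        · rw [← h]; exact this
        · exact lt_trans this h
      | inr h =>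
        refine ih hc.2 ?_ v ?_
        · rw [List.getLast?_cons_cons] at hl; exact hl
        · exact h

lemma isPath_two_le {P : List (Fin m)} {u v : Fin m} (h : IsPath E P u v) (huv : u ≠ v) :
    2 ≤ P.length := by
  obtain ⟨h1, h2, _⟩ := h
  match P with
  | [] => exact absurd h1 (by simp)
  | [a] =>
    exfalso
    simp only [List.head?_cons, Option.some_inj] at h1
    simp only [List.getLast?_singleton, Option.some_inj] at h2
    exact huv (h1 ▸ h2 ▸ rfl)
  | a :: b :: t => simp

/-- Truncate a path at the first vertex of `C`. -/
lemma truncate {C : Finset (Fin m)} :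
    ∀ (q : List (Fin m)) (v z : Fin m), IsPath E q v z → (∃ u ∈ q, u ∈ C) →
      ∃ (q' : List (Fin m)) (c : Fin m), IsPath E q' v c ∧ c ∈ C ∧
        (∀ u ∈ q'.dropLast, u ∉ C) ∧ (∀ u ∈ q', u ∈ q) := by
  intro q
  induction q with
  | nil => intro v z h _; exact absurd h.1 (by simp)
  | cons a t ih =>
    intro v z h hex
    obtain ⟨h1, h2, h3⟩ := h
    simp only [List.head?_cons, Option.some_inj] at h1
    subst h1
    by_cases hv : a ∈ C
    · exact ⟨[a], a, ⟨rfl, rfl, List.isChain_singleton a⟩, hv, by simp, by simp⟩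
    · have ht : t ≠ [] := by
        intro hnil
        obtain ⟨u, hu, huC⟩ := hex
        rw [hnil] at hu
        simp only [List.mem_singleton] at hu
        subst hu; exact hv huC
      obtain ⟨b, s, rfl⟩ := List.exists_cons_of_ne_nil ht
      have hex' : ∃ u ∈ b :: s, u ∈ C := by
        obtain ⟨u, hu, huC⟩ := hex
        simp only [List.mem_cons] at hu
        rcases hu with rfl | hu
        · exact absurd huC hv
        · exact ⟨u, List.mem_cons.2 hu, huC⟩
      rw [List.Chain', List.isChain_cons_cons] at h3
      have hbz : IsPath E (b :: s) b z := ⟨rfl, by rw [← h2]; simp [List.getLast?_cons_cons], h3.2⟩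
      obtain ⟨q', c, hq', hc, hfree, hsub⟩ := ih b z hbz hex'
      obtain ⟨hq1, hq2, hq3⟩ := hq'
      obtain ⟨b', s', rfl⟩ := List.exists_cons_of_ne_nil (show q' ≠ [] by intro hh; rw [hh] at hq1; exact absurd hq1 (by simp))
      simp only [List.head?_cons, Option.some_inj] at hq1
      subst hq1
      refine ⟨a :: b' :: s', c, ⟨rfl, ?_, List.isChain_cons_cons.2 ⟨h3.1, hq3⟩⟩, hc, ?_, ?_⟩
      · rw [← hq2]; simp [List.getLast?_cons_cons]
      · intro u hu
        rw [List.dropLast_cons_of_ne_nil (List.cons_ne_nil b' s'), List.mem_cons] at hu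
        rcases hu with rfl | hu
        · exact hv
        · exact hfree u hu
      · intro u hu
        simp only [List.mem_cons] at hu ⊢
        rcases hu with rfl | hu
        · exact Or.inl rfl
        · rcases hu with rfl | hu
          · exact Or.inr (Or.inl rfl)
          · have := hsub u (List.mem_cons.2 (Or.inr hu))
            simp only [List.mem_cons] at this
            exact Or.inr this

lemma mem_dropLast_or_getLast {α : Type*} {l : List α} {v : α} (h : v ∈ l) :
    v ∈ l.dropLast ∨ l.getLast? = some v := by
  obtain ⟨l', a, rfl⟩ := List.eq_nil_or_concat l |>.resolve_left (by rintro rfl; simp at h)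
  rw [List.concat_eq_append] at h ⊢
  rw [List.mem_append] at h
  rcases h with h | h
  · left; rw [List.dropLast_concat]; exact h
  · right; simp only [List.mem_singleton] at h; subst h; simp

/-- If a vertex has an edge pointing OUT to one of its path-neighbours,
it is not a collider there. -/
lemma not_collider_of_out (hE : ∀ i j : Fin m, E i j → i < j) {p : List (Fin m)} {t : ℕ}
    {v : Fin m} (hv : p[t]? = some v)
    (h : (∃ u, p[t - 1]? = some u ∧ E v u) ∨ (∃ u, p[t + 1]? = some u ∧ E v u)) :
    ¬ IsColliderAt E p t := by
  rintro ⟨ht, x, y, z, hx, hy, hz, hxy, hzy⟩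
  rw [hv, Option.some_inj] at hy
  subst hy
  rcases h with ⟨u, hu, hvu⟩ | ⟨u, hu, hvu⟩
  · rw [hx, Option.some_inj] at hu; subst hu
    exact absurd (hE _ _ hvu) (not_lt.2 (le_of_lt (hE _ _ hxy)))
  · rw [hz, Option.some_inj] at hu; subst hu
    exact absurd (hE _ _ hvu) (not_lt.2 (le_of_lt (hE _ _ hzy)))

/-- Collider status only depends on the three gets. -/
lemma collider_congr {p q : List (Fin m)} {t s : ℕ} (hts : 1 ≤ t ↔ 1 ≤ s)
    (h1 : p[t - 1]? = q[s - 1]?) (h2 : p[t]? = q[s]?)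
    (h3 : p[t + 1]? = q[s + 1]?) :
    IsColliderAt E p t ↔ IsColliderAt E q s := by
  unfold IsColliderAt
  rw [hts, h1, h2, h3]


lemma get?_tail' {α : Type*} (l : List α) (n : ℕ) : l.tail[n]? = l[n + 1]? := by
  simp [getElem?_tail]

lemma get?_eq_some_of_lt {α : Type*} {l : List α} {n : ℕ} (h : n < l.length) :
    ∃ a, l[n]? = some a := ⟨l.get ⟨n, h⟩, List.getElem?_eq_getElem h⟩

lemma mem_dropLast_of_get? {α : Type*} {l : List α} {n : ℕ} {a : α}
    (h : l[n]? = some a) (hn : n + 1 < l.length) : a ∈ l.dropLast := by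
  have : l.dropLast[n]? = some a := by
    rw [List.dropLast_eq_take, List.getElem?_take_of_lt (by omega)]
    exact h
  exact List.mem_of_getElem? this

section Piece

variable {P Q : List (Fin m)} {l x y : Fin m}

/-- number stuff about the glued piece `P.reverse ++ Q.tail`. -/
lemma piece_length (hP : IsPath E P l x) (hQ : IsPath E Q l y) :
    (P.reverse ++ Q.tail).length = P.length + Q.length - 1 := by
  have h1 : P.length ≥ 1 := List.length_pos_iff.2 (by intro h; rw [h] at hP; exact absurd hP.1 (by simp))
  have h2 : Q.length ≥ 1 := List.length_pos_iff.2 (by intro h; rw [h] at hQ; exact absurd hQ.1 (by simp))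
  simp only [List.length_append, List.length_reverse, List.length_tail]
  omega

lemma piece_get_low {s : ℕ} (hs : s < P.length) :
    (P.reverse ++ Q.tail)[s]? = P[P.length - 1 - s]? := by
  rw [get?_append_left (by simpa using hs)]
  exact List.getElem?_reverse hs

lemma piece_get_high {s : ℕ} (hs : P.length ≤ s) :
    (P.reverse ++ Q.tail)[s]? = Q[s - P.length + 1]? := by
  rw [get?_append_right (by simpa using hs), get?_tail']
  simp

lemma piece_get_zero (hP : IsPath E P l x) :
    (P.reverse ++ Q.tail)[0]? = some x := by
  have h1 : P.length ≥ 1 := List.length_pos_iff.2 (by intro h; rw [h] at hP; exact absurd hP.1 (by simp))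
  rw [piece_get_low (by omega), Nat.sub_zero, ← getLast?_eq_get?]
  exact hP.2.1

lemma piece_head (hP : IsPath E P l x) :
    (P.reverse ++ Q.tail).head? = some x := by
  rw [List.head?_eq_getElem?]; exact piece_get_zero hP

lemma piece_getLast (hP : IsPath E P l x) (hQ : IsPath E Q l y) :
    (P.reverse ++ Q.tail).getLast? = some y := by
  cases hQt : Q.tail with
  | nil =>
    have hQy : Q = [l] := by
      cases Q with
      | nil => exact absurd hQ.1 (by simp)
      | cons a t => simp only [List.tail_cons] at hQt; subst hQt
                    have := hQ.1; simp only [List.head?_cons, Option.some_inj] at this; rw [this]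
    have : l = y := by
      rw [hQy] at hQ; simpa using hQ.2.1
    rw [List.append_nil, List.getLast?_reverse, hP.1, this]
  | cons a t =>
    rw [List.getLast?_append_of_ne_nil _ (List.cons_ne_nil a t), ← hQt]
    rw [← hQ.2.1]
    cases Q with
    | nil => exact absurd hQ.1 (by simp)
    | cons b s =>
      simp only [List.tail_cons] at hQt ⊢
      subst hQt
      simp [List.getLast?_cons_cons]

lemma piece_chain (hE : ∀ i j : Fin m, E i j → i < j)
    (hP : IsPath E P l x) (hQ : IsPath E Q l y) :
    (P.reverse ++ Q.tail).Chain' (fun a b => E a b ∨ E b a) := by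
  rw [List.Chain', List.isChain_append]
  refine ⟨?_, ?_, ?_⟩
  · rw [List.isChain_reverse]
    exact List.IsChain.imp (fun {a b} h => (Or.inr h : E b a ∨ E a b)) hP.2.2
  · exact (List.IsChain.imp (fun h => Or.inl h : ∀ {a b}, E a b → E a b ∨ E b a) hQ.2.2).tail
  · intro u hu w hw
    rw [List.getLast?_reverse, hP.1, Option.mem_def, Option.some_inj] at hu
    rw [List.head?_eq_getElem?, get?_tail', Option.mem_def] at hw
    left
    have h0 : Q[0]? = some u := by rw [← List.head?_eq_getElem?, hQ.1, hu]
    exact chain'_rel hQ.2.2 h0 hw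

/-- membership of interior piece vertices. -/
lemma piece_mem_interior (hP : IsPath E P l x) (hQ : IsPath E Q l y) {s : ℕ} {v : Fin m}
    (hs1 : 1 ≤ s) (hs2 : s + 1 < (P.reverse ++ Q.tail).length)
    (hv : (P.reverse ++ Q.tail)[s]? = some v) :
    v ∈ P.dropLast ∨ v ∈ Q.dropLast := by
  have hlen := piece_length hP hQ
  by_cases hlow : s < P.length
  · left
    rw [piece_get_low hlow] at hv
    exact mem_dropLast_of_get? hv (by omega)
  · right
    push_neg at hlow
    rw [piece_get_high hlow] at hv
    refine mem_dropLast_of_get? hv ?_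
    have := get?_some_lt hv
    omega

/-- every interior piece vertex has an outgoing edge to a neighbour. -/
lemma piece_out (hP : IsPath E P l x) (hQ : IsPath E Q l y) {s : ℕ} {v : Fin m}
    (hs1 : 1 ≤ s) (hs2 : s + 1 < (P.reverse ++ Q.tail).length)
    (hv : (P.reverse ++ Q.tail)[s]? = some v) :
    (∃ u, (P.reverse ++ Q.tail)[s - 1]? = some u ∧ E v u)
      ∨ (∃ u, (P.reverse ++ Q.tail)[s + 1]? = some u ∧ E v u) := by
  have hlen := piece_length hP hQ
  by_cases hlow : s < P.length
  · left
    have hvP : P[P.length - 1 - s]? = some v := by rw [← piece_get_low hlow]; exact hv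
    have hidx : P.length - 1 - s + 1 = P.length - 1 - (s - 1) := by omega
    have hlt : P.length - 1 - (s - 1) < P.length := by omega
    obtain ⟨u, hu⟩ := get?_eq_some_of_lt (l := P) hlt
    refine ⟨u, ?_, ?_⟩
    · rw [piece_get_low (by omega)]; exact hu
    · exact chain'_rel hP.2.2 hvP (by rw [hidx]; exact hu)
  · right
    push_neg at hlow
    have hvQ : Q[s - P.length + 1]? = some v := by rw [← piece_get_high hlow]; exact hv
    have hltQ : s - P.length + 1 + 1 < Q.length := by
      have := get?_some_lt hvQ
      omega
    obtain ⟨u, hu⟩ := get?_eq_some_of_lt (l := Q) hltQ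
    refine ⟨u, ?_, ?_⟩
    · rw [piece_get_high (by omega)]
      have : s + 1 - P.length + 1 = s - P.length + 1 + 1 := by omega
      rw [this]; exact hu
    · exact chain'_rel hQ.2.2 hvQ hu

lemma piece_second (hP : IsPath E P l x) (hPlen : 2 ≤ P.length) :
    ∃ z, (P.reverse ++ Q.tail)[1]? = some z ∧ E z x := by
  have hlt : P.length - 2 < P.length := by omega
  obtain ⟨z, hz⟩ := get?_eq_some_of_lt (l := P) hlt
  refine ⟨z, ?_, ?_⟩
  · rw [piece_get_low (by omega)]
    have : P.length - 1 - 1 = P.length - 2 := by omega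
    rw [this]; exact hz
  · have hx : P[P.length - 2 + 1]? = some x := by
      have : P.length - 2 + 1 = P.length - 1 := by omega
      rw [this, ← getLast?_eq_get?]; exact hP.2.1
    exact chain'_rel hP.2.2 hz hx

lemma piece_penult (hP : IsPath E P l x) (hQ : IsPath E Q l y) (hQlen : 2 ≤ Q.length) :
    ∃ z, (P.reverse ++ Q.tail)[(P.reverse ++ Q.tail).length - 2]? = some z ∧ E z y := by
  have hlen := piece_length hP hQ
  have h1 : P.length ≥ 1 := List.length_pos_iff.2 (by intro h; rw [h] at hP; exact absurd hP.1 (by simp))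
  have hylast : Q[Q.length - 1]? = some y := by rw [← getLast?_eq_get?]; exact hQ.2.1
  by_cases hq : 3 ≤ Q.length
  · have hidx : P.length ≤ P.length + Q.length - 1 - 2 := by omega
    obtain ⟨z, hz⟩ := get?_eq_some_of_lt (l := Q) (show Q.length - 2 < Q.length by omega)
    refine ⟨z, ?_, ?_⟩
    · rw [hlen, piece_get_high hidx]
      have : P.length + Q.length - 1 - 2 - P.length + 1 = Q.length - 2 := by omega
      rw [this]; exact hz
    · refine chain'_rel hQ.2.2 hz ?_
      have : Q.length - 2 + 1 = Q.length - 1 := by omega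
      rw [this]; exact hylast
  · -- Q.length = 2
    have hq2 : Q.length = 2 := by omega
    have hidx : P.length + Q.length - 1 - 2 = P.length - 1 := by omega
    have hl0 : Q[0]? = some l := by rw [← List.head?_eq_getElem?]; exact hQ.1
    refine ⟨l, ?_, ?_⟩
    · rw [hlen, hidx, piece_get_low (by omega)]
      have : P.length - 1 - (P.length - 1) = 0 := by omega
      rw [this, ← List.head?_eq_getElem?]; exact hP.1
    · have : Q[1]? = some y := by rw [← hylast, hq2]
      exact chain'_rel hQ.2.2 hl0 this

end Piece

end DT

namespace DT
variable {m : ℕ} {E : Fin m → Fin m → Prop}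

/-- The walk invariant: interior colliders are exactly the vertices in `C`. -/
def Inv (E : Fin m → Fin m → Prop) (C : Finset (Fin m)) (w : List (Fin m)) : Prop :=
  ∀ t v, t + 1 < w.length → w[t]? = some v → (IsColliderAt E w t ↔ v ∈ C)

lemma base_walk (hE : ∀ i j : Fin m, E i j → i < j) {C : Finset (Fin m)}
    {P Q : List (Fin m)} {l a x : Fin m}
    (hP : IsPath E P l a) (hQ : IsPath E Q l x) (haC : a ∉ C)
    (hPfree : ∀ v ∈ P.dropLast, v ∉ C) (hQfree : ∀ v ∈ Q.dropLast, v ∉ C) :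
    Inv E C (P.reverse ++ Q.tail) := by
  intro t v ht hv
  rcases Nat.eq_zero_or_pos t with rfl | htpos
  · rw [piece_get_zero hP, Option.some_inj] at hv
    subst hv
    constructor
    · rintro ⟨h1, -⟩; omega
    · intro h; exact absurd h haC
  · have hmem := piece_mem_interior hP hQ htpos ht hv
    have hout := piece_out hP hQ htpos ht hv
    have hnc : ¬ IsColliderAt E (P.reverse ++ Q.tail) t := not_collider_of_out hE hv hout
    constructor
    · intro h; exact absurd h hnc
    · intro h
      rcases hmem with hm | hm
      · exact absurd h (hPfree v hm)
      · exact absurd h (hQfree v hm)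

lemma glue_walk (hE : ∀ i j : Fin m, E i j → i < j) {C : Finset (Fin m)}
    {w : List (Fin m)} {x : Fin m}
    (hw2 : 2 ≤ w.length) (hwlast : w.getLast? = some x) (hxC : x ∈ C)
    (hinc : ∃ z, w[w.length - 2]? = some z ∧ E z x)
    (hchain : w.Chain' (fun a b => E a b ∨ E b a)) (hinv : Inv E C w)
    {P Q : List (Fin m)} {l y : Fin m}
    (hP : IsPath E P l x) (hQ : IsPath E Q l y) (hPlen : 2 ≤ P.length)
    (hPfree : ∀ v ∈ P.dropLast, v ∉ C) (hQfree : ∀ v ∈ Q.dropLast, v ∉ C) :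
    (w ++ (P.reverse ++ Q.tail).tail).head? = w.head?
    ∧ (w ++ (P.reverse ++ Q.tail).tail).getLast? = some y
    ∧ 2 ≤ (w ++ (P.reverse ++ Q.tail).tail).length
    ∧ (w ++ (P.reverse ++ Q.tail).tail).Chain' (fun a b => E a b ∨ E b a)
    ∧ Inv E C (w ++ (P.reverse ++ Q.tail).tail)
    ∧ (2 ≤ Q.length → ∃ z,
        (w ++ (P.reverse ++ Q.tail).tail)[
          (w ++ (P.reverse ++ Q.tail).tail).length - 2]? = some z ∧ E z y) := by
  set piece := P.reverse ++ Q.tail with hpiece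
  set w' := w ++ piece.tail with hw'
  have hQ1 : 1 ≤ Q.length := List.length_pos_iff.2 (isPath_ne_nil hQ)
  have hplen : piece.length = P.length + Q.length - 1 := piece_length hP hQ
  have hplen2 : 2 ≤ piece.length := by omega
  have hlen' : w'.length = w.length + piece.length - 1 := by
    simp only [hw', List.length_append, List.length_tail]
    omega
  have hT1 : ∀ t, t < w.length → w'[t]? = w[t]? := fun t h => get?_append_left h
  have hT2 : ∀ t, w.length - 1 ≤ t → w'[t]? = piece[t - (w.length - 1)]? := by
    intro t hle
    rcases Nat.lt_or_ge t w.length with h | h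
    · have : t = w.length - 1 := by omega
      subst this
      rw [hT1 _ h, ← getLast?_eq_get?, hwlast]
      have : w.length - 1 - (w.length - 1) = 0 := by omega
      rw [this, piece_get_zero hP]
    · rw [get?_append_right h, get?_tail']
      congr 1
      omega
  have hwne : w ≠ [] := by intro h; rw [h] at hw2; simp at hw2
  have hsecond := piece_second (Q := Q) hP hPlen
  obtain ⟨z2, hz2, hz2E⟩ := hsecond
  refine ⟨?_, ?_, ?_, ?_, ?_, ?_⟩
  · exact List.head?_append_of_ne_nil _ hwne
  · -- getLast
    have hptne : piece.tail ≠ [] := by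
      intro h
      have := List.length_tail (l := piece)
      rw [h] at this
      simp at this
      omega
    rw [List.getLast?_append_of_ne_nil _ hptne]
    rw [getLast?_eq_get?, get?_tail', List.length_tail]
    have : piece.length - 1 - 1 + 1 = piece.length - 1 := by omega
    rw [this, ← getLast?_eq_get?]
    exact piece_getLast hP hQ
  · rw [hlen']; omega
  · -- chain
    rw [List.Chain', List.isChain_append]
    refine ⟨hchain, List.IsChain.tail (piece_chain hE hP hQ), ?_⟩
    intro u hu v hv
    rw [hwlast, Option.mem_def, Option.some_inj] at hu
    rw [List.head?_eq_getElem?, get?_tail', Option.mem_def, hz2] at hv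
    rw [Option.some_inj] at hv
    subst hu
    rw [← hv]
    exact Or.inr hz2E
  · -- Inv
    intro t v ht hv
    rcases lt_trichotomy t (w.length - 1) with hcase | hcase | hcase
    · -- inside w
      have h1 : t - 1 < w.length := by omega
      have h2 : t < w.length := by omega
      have h3 : t + 1 < w.length := by omega
      have hcc : IsColliderAt E w' t ↔ IsColliderAt E w t :=
        collider_congr Iff.rfl (hT1 _ h1) (hT1 _ h2) (hT1 _ h3)
      rw [hT1 _ h2] at hv
      rw [hcc]
      exact hinv t v (by omega) hv
    · -- junction
      subst hcase
      have hvx : v = x := by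
        rw [hT1 _ (by omega), ← getLast?_eq_get?, hwlast, Option.some_inj] at hv
        exact hv.symm
      subst hvx
      obtain ⟨z, hz, hzE⟩ := hinc
      constructor
      · intro _; exact hxC
      · intro _
        refine ⟨by omega, z, v, z2, ?_, hv, ?_, hzE, hz2E⟩
        · rw [hT1 _ (by omega)]
          have : w.length - 1 - 1 = w.length - 2 := by omega
          rw [this]; exact hz
        · rw [hT2 _ (by omega)]
          have : w.length - 1 + 1 - (w.length - 1) = 1 := by omega
          rw [this]; exact hz2
    · -- inside piece
      set s := t - (w.length - 1) with hs
      have hs1 : 1 ≤ s := by omega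
      have hs2 : s + 1 < piece.length := by
        rw [hlen'] at ht; omega
      have hvp : piece[s]? = some v := by rw [← hT2 _ (by omega)]; exact hv
      have hmem := piece_mem_interior hP hQ hs1 hs2 hvp
      have hout := piece_out hP hQ hs1 hs2 hvp
      have hout' : (∃ u, w'[t - 1]? = some u ∧ E v u)
          ∨ (∃ u, w'[t + 1]? = some u ∧ E v u) := by
        rcases hout with ⟨u, hu, huE⟩ | ⟨u, hu, huE⟩
        · left
          refine ⟨u, ?_, huE⟩
          rw [hT2 _ (by omega)]
          have : t - 1 - (w.length - 1) = s - 1 := by omega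
          rw [this]; exact hu
        · right
          refine ⟨u, ?_, huE⟩
          rw [hT2 _ (by omega)]
          have : t + 1 - (w.length - 1) = s + 1 := by omega
          rw [this]; exact hu
      have hnc : ¬ IsColliderAt E w' t := not_collider_of_out hE hv hout'
      constructor
      · intro h; exact absurd h hnc
      · intro h
        rcases hmem with hm | hm
        · exact absurd h (hPfree v hm)
        · exact absurd h (hQfree v hm)
  · -- penult
    intro hQlen
    obtain ⟨z, hz, hzE⟩ := piece_penult hP hQ hQlen
    refine ⟨z, ?_, hzE⟩
    rw [hlen']
    rw [hT2 _ (by omega)]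
    have : w.length + piece.length - 1 - 2 - (w.length - 1) = piece.length - 2 := by omega
    rw [this]
    exact hz

end DT



namespace DT
variable {m : ℕ} {E : Fin m → Fin m → Prop}

inductive Reach (E : Fin m → Fin m → Prop) (A C : Finset (Fin m)) : Fin m → Prop
  | base {a l x : Fin m} {P Q : List (Fin m)} : a ∈ A → a ∉ C → x ∈ C →
      IsPath E P l a → IsPath E Q l x → 2 ≤ Q.length →
      (∀ v ∈ P.dropLast, v ∉ C) → (∀ v ∈ Q.dropLast, v ∉ C) → Reach E A C x
  | step {x y l : Fin m} {P Q : List (Fin m)} : Reach E A C x → y ∈ C →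
      IsPath E P l x → IsPath E Q l y → 2 ≤ P.length → 2 ≤ Q.length →
      (∀ v ∈ P.dropLast, v ∉ C) → (∀ v ∈ Q.dropLast, v ∉ C) → Reach E A C y

lemma reach_mem {A C : Finset (Fin m)} {x : Fin m} (h : Reach E A C x) : x ∈ C := by
  cases h with
  | base _ _ hxC _ _ _ _ _ => exact hxC
  | step _ hyC _ _ _ _ _ _ => exact hyC

lemma reach_to_walk (hE : ∀ i j : Fin m, E i j → i < j) {A C : Finset (Fin m)} {x : Fin m}
    (h : Reach E A C x) :
    ∃ a ∈ A, a ∉ C ∧ ∃ w : List (Fin m), w.head? = some a ∧ w.getLast? = some x ∧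
      2 ≤ w.length ∧ w.Chain' (fun u v => E u v ∨ E v u) ∧ Inv E C w ∧
      ∃ z, w[w.length - 2]? = some z ∧ E z x := by
  induction h with
  | base ha haC hxC hP hQ hQlen hPfree hQfree =>
    rename_i a l x' P Q
    refine ⟨a, ha, haC, P.reverse ++ Q.tail, piece_head hP, piece_getLast hP hQ, ?_,
      piece_chain hE hP hQ, base_walk hE hP hQ haC hPfree hQfree, ?_⟩
    · rw [piece_length hP hQ]
      have : 1 ≤ P.length := List.length_pos_iff.2 (isPath_ne_nil hP)
      omega
    · obtain ⟨z, hz, hzE⟩ := piece_penult hP hQ hQlen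
      exact ⟨z, by rw [piece_length hP hQ] at hz ⊢; exact hz, hzE⟩
  | step hx hyC hP hQ hPlen hQlen hPfree hQfree ih =>
    obtain ⟨a, ha, haC, w, hwh, hwl, hw2, hwc, hwi, hwz⟩ := ih
    obtain ⟨hh, hl, h2, hc, hi, hz⟩ :=
      glue_walk hE hw2 hwl (reach_mem hx) hwz hwc hwi hP hQ hPlen hPfree hQfree
    exact ⟨a, ha, haC, _, by rw [hh]; exact hwh, hl, h2, hc, hi, hz hQlen⟩

lemma no_dsep_walk {A B C : Finset (Fin m)} (hD : DSep E A B C)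
    {w : List (Fin m)} {a b : Fin m} (ha : a ∈ A) (hb : b ∈ B)
    (hwh : w.head? = some a) (hwl : w.getLast? = some b) (hbC : b ∉ C)
    (hwc : w.Chain' (fun u v => E u v ∨ E v u)) (hwi : Inv E C w) : False := by
  obtain ⟨t, v, hv, hblock⟩ := hD w a ha b hb hwh hwl hwc
  have htlt : t < w.length := get?_some_lt hv
  rcases Nat.lt_or_ge (t + 1) w.length with ht | ht
  · have := hwi t v ht hv
    rcases hblock with ⟨hnc, hvC⟩ | ⟨hc, hvC, -⟩
    · exact hnc (this.2 hvC)
    · exact hvC (this.1 hc)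
  · have htb : v = b := by
      have : t = w.length - 1 := by omega
      subst this
      rw [← getLast?_eq_get?, hwl, Option.some_inj] at hv
      exact hv.symm
    subst htb
    have hnc : ¬ IsColliderAt E w t := by
      rintro ⟨-, x, y, z, -, -, hz, -⟩
      have := get?_some_lt hz
      omega
    rcases hblock with ⟨-, hvC⟩ | ⟨hc, -, -⟩
    · exact hbC hvC
    · exact hnc hc

lemma forward (hE : ∀ i j : Fin m, E i j → i < j) {A B C : Finset (Fin m)}
    (hD : DSep E A B C) :
    ∃ CA CB : Finset (Fin m), Disjoint CA CB ∧ CA ∪ CB = C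
      ∧ TSep E (A ∪ C) (B ∪ C) CA CB := by
  classical
  set CB := C.filter (fun c => Reach E A C c) with hCB
  set CA := C \ CB with hCA
  refine ⟨CA, CB, Finset.sdiff_disjoint, Finset.sdiff_union_of_subset (Finset.filter_subset _ _), ?_⟩
  rintro a ha b hb P₁ P₂ ⟨k, hP1, hP2⟩
  by_contra hcon
  push_neg at hcon
  obtain ⟨h1, h2⟩ := hcon
  -- every vertex of P₁ in C is Reachable
  have hmem1 : ∀ v ∈ P₁, v ∈ C → v ∈ CB := by
    intro v hv hvC
    by_contra hvCB
    exact h1 v (Finset.mem_sdiff.2 ⟨hvC, hvCB⟩) hv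
  have hmem2 : ∀ v ∈ P₂, v ∉ CB := fun v hv hvCB => h2 v hvCB hv
  by_cases hkC : k ∈ C
  · exact hmem2 k (head?_mem hP2.1) (hmem1 k (head?_mem hP1.1) hkC)
  · by_cases hc1 : ∃ v ∈ P₁, v ∈ C
    · obtain ⟨T1, c1, hT1, hc1C, hT1free, hT1sub⟩ := truncate P₁ k a hP1 hc1
      have hc1CB : c1 ∈ CB := hmem1 c1 (hT1sub c1 (getLast?_mem hT1.2.1)) hc1C
      have hreach1 : Reach E A C c1 := by
        rw [hCB] at hc1CB
        exact (Finset.mem_filter.1 hc1CB).2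
      have hT1len : 2 ≤ T1.length :=
        isPath_two_le hT1 (by rintro rfl; exact hkC hc1C)
      by_cases hc2 : ∃ v ∈ P₂, v ∈ C
      · obtain ⟨T2, c2, hT2, hc2C, hT2free, hT2sub⟩ := truncate P₂ k b hP2 hc2
        have hT2len : 2 ≤ T2.length :=
          isPath_two_le hT2 (by rintro rfl; exact hkC hc2C)
        have : Reach E A C c2 :=
          Reach.step hreach1 hc2C hT1 hT2 hT1len hT2len hT1free hT2free
        exact hmem2 c2 (hT2sub c2 (getLast?_mem hT2.2.1))
          (Finset.mem_filter.2 ⟨hc2C, this⟩)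
      · -- P₂ is C-free
        push_neg at hc2
        have hbC : b ∉ C := hc2 b (getLast?_mem hP2.2.1)
        have hbB : b ∈ B := (Finset.mem_union.1 hb).resolve_right hbC
        obtain ⟨a0, ha0, ha0C, w, hwh, hwl, hw2, hwc, hwi, hwz⟩ := reach_to_walk hE hreach1
        obtain ⟨hh, hl, hlen2, hc, hi, -⟩ :=
          glue_walk hE hw2 hwl hc1C hwz hwc hwi hT1 hP2 hT1len hT1free
            (fun v hv => hc2 v (List.dropLast_subset _ hv))
        exact no_dsep_walk hD ha0 hbB (by rw [hh]; exact hwh) hl hbC hc hi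
    · -- P₁ is C-free
      push_neg at hc1
      have haC : a ∉ C := hc1 a (getLast?_mem hP1.2.1)
      have haA : a ∈ A := (Finset.mem_union.1 ha).resolve_right haC
      by_cases hc2 : ∃ v ∈ P₂, v ∈ C
      · obtain ⟨T2, c2, hT2, hc2C, hT2free, hT2sub⟩ := truncate P₂ k b hP2 hc2
        have hT2len : 2 ≤ T2.length :=
          isPath_two_le hT2 (by rintro rfl; exact hkC hc2C)
        have : Reach E A C c2 :=
          Reach.base haA haC hc2C hP1 hT2 hT2len
            (fun v hv => hc1 v (List.dropLast_subset _ hv)) hT2free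
        exact hmem2 c2 (hT2sub c2 (getLast?_mem hT2.2.1))
          (Finset.mem_filter.2 ⟨hc2C, this⟩)
      · push_neg at hc2
        have hbC : b ∉ C := hc2 b (getLast?_mem hP2.2.1)
        have hbB : b ∈ B := (Finset.mem_union.1 hb).resolve_right hbC
        exact no_dsep_walk hD haA hbB (piece_head hP1) (piece_getLast hP1 hP2) hbC
          (piece_chain hE hP1 hP2)
          (base_walk hE hP1 hP2 haC (fun v hv => hc1 v (List.dropLast_subset _ hv))
            (fun v hv => hc2 v (List.dropLast_subset _ hv)))

end DT

namespace DT
variable {m : ℕ} {E : Fin m → Fin m → Prop}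

/-- The segment of vertices `p_s, …, p_e`. -/
def seg {α : Type*} (p : List α) (s e : ℕ) : List α := (p.drop s).take (e - s + 1)

lemma seg_get? {α : Type*} {p : List α} {s e i : ℕ} (h : i < e - s + 1) :
    (seg p s e)[i]? = p[s + i]? := by
  rw [seg, List.getElem?_take_of_lt h]
  simp [List.getElem?_drop]

lemma seg_length {α : Type*} {p : List α} {s e : ℕ} (hse : s ≤ e) (he : e < p.length) :
    (seg p s e).length = e - s + 1 := by
  rw [seg, List.length_take, List.length_drop]
  omega

lemma seg_head? {α : Type*} {p : List α} {s e : ℕ} (hse : s ≤ e) (he : e < p.length) :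
    (seg p s e).head? = p[s]? := by
  rw [List.head?_eq_getElem?, seg_get? (by omega), Nat.add_zero]

lemma seg_getLast? {α : Type*} {p : List α} {s e : ℕ} (hse : s ≤ e) (he : e < p.length) :
    (seg p s e).getLast? = p[e]? := by
  rw [getLast?_eq_get?, seg_length hse he]
  rw [seg_get? (i := e - s + 1 - 1) (by omega)]
  congr 1
  omega

lemma seg_mem {α : Type*} {p : List α} {s e : ℕ} {v : α} (hse : s ≤ e) (he : e < p.length)
    (h : v ∈ seg p s e) : ∃ u, s ≤ u ∧ u ≤ e ∧ p[u]? = some v := by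
  obtain ⟨i, hi⟩ := List.mem_iff_getElem?.1 h
  have hilt : i < (seg p s e).length := get?_some_lt hi
  rw [seg_length hse he] at hilt
  refine ⟨s + i, by omega, by omega, ?_⟩
  rw [seg_get? (show i < e - s + 1 by omega)] at hi
  exact hi

lemma seg_chain_fwd {p : List (Fin m)} {s e : ℕ} (hse : s ≤ e) (he : e < p.length)
    (h : ∀ u, s ≤ u → u < e → ∃ x y, p[u]? = some x ∧ p[u+1]? = some y ∧ E x y) :
    (seg p s e).Chain' E := by
  rw [List.Chain', List.isChain_iff_getElem]
  intro i hi
  rw [seg_length hse he] at hi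
  obtain ⟨x, y, hx, hy, hxy⟩ := h (s + i) (by omega) (by omega)
  have h1 : (seg p s e)[i]? = some x := by rw [seg_get? (by omega)]; exact hx
  have h2 : (seg p s e)[i+1]? = some y := by
    rw [seg_get? (by omega)]
    have : s + (i + 1) = s + i + 1 := by omega
    rw [this]; exact hy
  rw [List.getElem?_eq_getElem (by omega), Option.some_inj] at h1
  rw [List.getElem?_eq_getElem (by omega), Option.some_inj] at h2
  rw [h1, h2]
  exact hxy

lemma seg_chain_bwd {p : List (Fin m)} {s e : ℕ} (hse : s ≤ e) (he : e < p.length)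
    (h : ∀ u, s ≤ u → u < e → ∃ x y, p[u]? = some x ∧ p[u+1]? = some y ∧ E y x) :
    (seg p s e).reverse.Chain' E := by
  rw [List.Chain', List.isChain_reverse]
  rw [List.isChain_iff_getElem]
  intro i hi
  rw [seg_length hse he] at hi
  obtain ⟨x, y, hx, hy, hxy⟩ := h (s + i) (by omega) (by omega)
  have h1 : (seg p s e)[i]? = some x := by rw [seg_get? (by omega)]; exact hx
  have h2 : (seg p s e)[i+1]? = some y := by
    rw [seg_get? (by omega)]
    have : s + (i + 1) = s + i + 1 := by omega
    rw [this]; exact hy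
  rw [List.getElem?_eq_getElem (by omega), Option.some_inj] at h1
  rw [List.getElem?_eq_getElem (by omega), Option.some_inj] at h2
  rw [h1, h2]
  exact hxy

lemma segment_trek (hE : ∀ i j : Fin m, E i j → i < j) {p : List (Fin m)}
    (hchain : p.Chain' (fun x y => E x y ∨ E y x))
    {s e : ℕ} (hse : s < e) (he : e < p.length)
    (hnocol : ∀ u, s < u → u < e → ¬ IsColliderAt E p u) :
    ∃ k, s ≤ k ∧ k ≤ e ∧
      (IsColliderAt E p s → s < k) ∧ (IsColliderAt E p e → k < e) ∧
      ∃ vk vs ve, p[k]? = some vk ∧ p[s]? = some vs ∧ p[e]? = some ve ∧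
        IsPath E (seg p s k).reverse vk vs ∧ IsPath E (seg p k e) vk ve := by
  classical
  -- forward / backward orientation of each edge
  set Fwd : ℕ → Prop := fun u => ∃ x y, p[u]? = some x ∧ p[u+1]? = some y ∧ E x y
    with hFwd
  set Bwd : ℕ → Prop := fun u => ∃ x y, p[u]? = some x ∧ p[u+1]? = some y ∧ E y x
    with hBwd
  have hfb : ∀ u, u + 1 < p.length → Fwd u ∨ Bwd u := by
    intro u hu
    obtain ⟨x, hx⟩ := get?_eq_some_of_lt (l := p) (show u < p.length by omega)
    obtain ⟨y, hy⟩ := get?_eq_some_of_lt (l := p) hu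
    rcases chain'_rel hchain hx hy with h | h
    · exact Or.inl ⟨x, y, hx, hy, h⟩
    · exact Or.inr ⟨x, y, hx, hy, h⟩
  have hnotboth : ∀ u, Fwd u → Bwd u → False := by
    rintro u ⟨x, y, hx, hy, hxy⟩ ⟨x', y', hx', hy', hyx⟩
    rw [hx, Option.some_inj] at hx'
    rw [hy, Option.some_inj] at hy'
    subst hx'; subst hy'
    exact absurd (hE _ _ hyx) (not_lt.2 (le_of_lt (hE _ _ hxy)))
  by_cases hS : ∃ u, s ≤ u ∧ u < e ∧ Fwd u
  · obtain ⟨k, hks, hke, hkF, hmin, hmin'⟩ :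
        ∃ k, s ≤ k ∧ k < e ∧ Fwd k ∧ (∀ u, u < k → ¬ (s ≤ u ∧ u < e ∧ Fwd u))
          ∧ (∀ u, s ≤ u → u < e → Fwd u → k ≤ u) := by
      refine ⟨Nat.find hS, (Nat.find_spec hS).1, (Nat.find_spec hS).2.1,
        (Nat.find_spec hS).2.2, fun u hu => Nat.find_min hS hu,
        fun u h1 h2 h3 => Nat.find_le ⟨h1, h2, h3⟩⟩
    have hbwd : ∀ u, s ≤ u → u < k → Bwd u := by
      intro u hu1 hu2
      rcases hfb u (by omega) with h | h
      · exact absurd ⟨hu1, by omega, h⟩ (hmin u hu2)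
      · exact h
    have hfwd : ∀ u, k ≤ u → u < e → Fwd u := by
      have key : ∀ d, k + d < e → Fwd (k + d) := by
        intro d
        induction d with
        | zero => intro _; simpa using hkF
        | succ n ih =>
          intro hlt
          rcases hfb (k + (n+1)) (by omega) with h | h
          · exact h
          · exfalso
            have hF := ih (by omega)
            obtain ⟨x, y, hx, hy, hxy⟩ := hF
            obtain ⟨x', y', hx', hy', hyx⟩ := h
            rw [show k + n + 1 = k + (n+1) by omega] at hy
            rw [hy, Option.some_inj] at hx'
            subst hx'
            refine hnocol (k + (n+1)) (by omega) (by omega)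
              ⟨by omega, x, y, y', ?_, hy, hy', ?_, hyx⟩
            · rw [show k + (n+1) - 1 = k + n by omega]; exact hx
            · exact hxy
      intro u hu1 hu2
      have : u = k + (u - k) := by omega
      rw [this]
      exact key _ (by omega)
    have hsk : IsColliderAt E p s → s < k := by
      intro hcol
      obtain ⟨hs1, x, y, z, hx, hy, hz, hxy, hzy⟩ := hcol
      rcases Nat.lt_or_ge s k with h | h
      · exact h
      · exfalso
        have hkF' := hkF
        rw [show k = s by omega] at hkF'
        exact hnotboth s hkF' ⟨y, z, hy, hz, hzy⟩
    have hke' : IsColliderAt E p e → k < e := by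
      intro hcol
      obtain ⟨he1, x, y, z, hx, hy, hz, hxy, hzy⟩ := hcol
      have hF : Fwd (e - 1) := by
        refine ⟨x, y, hx, ?_, hxy⟩
        rw [show e - 1 + 1 = e by omega]
        exact hy
      have := hmin' (e-1) (by omega) (by omega) hF
      omega
    obtain ⟨vk, hvk⟩ := get?_eq_some_of_lt (l := p) (show k < p.length by omega)
    obtain ⟨vs, hvs⟩ := get?_eq_some_of_lt (l := p) (show s < p.length by omega)
    obtain ⟨ve, hve⟩ := get?_eq_some_of_lt (l := p) he
    refine ⟨k, hks, by omega, hsk, hke', vk, vs, ve, hvk, hvs, hve, ?_, ?_⟩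
    · refine ⟨?_, ?_, ?_⟩
      · rw [List.head?_reverse, seg_getLast? hks (by omega)]; exact hvk
      · rw [List.getLast?_reverse, seg_head? hks (by omega)]; exact hvs
      · exact seg_chain_bwd hks (by omega) (fun u h1 h2 => hbwd u h1 h2)
    · refine ⟨?_, ?_, ?_⟩
      · rw [seg_head? (by omega) he]; exact hvk
      · rw [seg_getLast? (by omega) he]; exact hve
      · exact seg_chain_fwd (by omega) he (fun u h1 h2 => hfwd u (by omega) h2)
  · -- no forward edge: k = e
    push_neg at hS
    have hbwd : ∀ u, s ≤ u → u < e → Bwd u := by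
      intro u h1 h2
      rcases hfb u (by omega) with h | h
      · exact absurd h (hS u h1 h2)
      · exact h
    have hnoe : ¬ IsColliderAt E p e := by
      intro hcol
      obtain ⟨he1, x, y, z, hx, hy, hz, hxy, hzy⟩ := hcol
      have hF : Fwd (e - 1) := by
        refine ⟨x, y, hx, ?_, hxy⟩
        rw [show e - 1 + 1 = e by omega]
        exact hy
      exact hS (e-1) (by omega) (by omega) hF
    obtain ⟨vs, hvs⟩ := get?_eq_some_of_lt (l := p) (show s < p.length by omega)
    obtain ⟨ve, hve⟩ := get?_eq_some_of_lt (l := p) he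
    refine ⟨e, by omega, le_refl e, fun _ => hse, fun h => absurd h hnoe,
      ve, vs, ve, hve, hvs, hve, ?_, ?_⟩
    · refine ⟨?_, ?_, ?_⟩
      · rw [List.head?_reverse, seg_getLast? (by omega) he]; exact hve
      · rw [List.getLast?_reverse, seg_head? (by omega) he]; exact hvs
      · exact seg_chain_bwd (by omega) he (fun u h1 h2 => hbwd u h1 h2)
    · refine ⟨?_, ?_, ?_⟩
      · rw [seg_head? (le_refl e) he]; exact hve
      · rw [seg_getLast? (le_refl e) he]; exact hve
      · rw [List.Chain', List.isChain_iff_getElem]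
        intro i hi
        rw [seg_length (le_refl e) he] at hi
        omega
end DT

namespace DT
variable {m : ℕ} {E : Fin m → Fin m → Prop}

lemma desc_head_C {C : Finset (Fin m)} {D : List (Fin m)} {v c : Fin m}
    (h : IsPath E D v c) (hfree : ∀ u ∈ D.dropLast, u ∉ C) (hvC : v ∈ C) : v = c := by
  rcases Nat.lt_or_ge D.length 2 with hlen | hlen
  · have h1 : 1 ≤ D.length := List.length_pos_iff.2 (isPath_ne_nil h)
    have : D.length = 1 := by omega
    obtain ⟨x, hx⟩ := List.length_eq_one_iff.1 this
    subst hx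
    have hv : x = v := by simpa using h.1
    have hc : x = c := by simpa using h.2.1
    rw [← hv, ← hc]
  · exfalso
    have hv0 : D[0]? = some v := by rw [← List.head?_eq_getElem?]; exact h.1
    exact hfree v (mem_dropLast_of_get? hv0 (by omega)) hvC

lemma backward (hE : ∀ i j : Fin m, E i j → i < j) {A B C CA CB : Finset (Fin m)}
    (hAB : Disjoint A B) (hdisj : Disjoint CA CB) (hun : CA ∪ CB = C)
    (hT : TSep E (A ∪ C) (B ∪ C) CA CB) : DSep E A B C := by
  classical
  intro p a ha b hb hhead hlast hchain
  by_contra hno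
  have hCA : CA ⊆ C := hun ▸ Finset.subset_union_left
  have hCB : CB ⊆ C := hun ▸ Finset.subset_union_right
  have hnc : ∀ t v, p[t]? = some v → ¬ IsColliderAt E p t → v ∉ C :=
    fun t v hv h hvC => hno ⟨t, v, hv, Or.inl ⟨h, hvC⟩⟩
  have hdesc : ∀ t v, p[t]? = some v → IsColliderAt E p t →
      ∃ D c, IsPath E D v c ∧ c ∈ C ∧ ∀ u ∈ D.dropLast, u ∉ C := by
    intro t v hv hcol
    by_cases hvC : v ∈ C
    · exact ⟨[v], v, isPath_singleton E v, hvC, by simp⟩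
    · by_cases hq : ∃ d ∈ C, ∃ q, IsPath E q v d
      · obtain ⟨d, hd, q, hq⟩ := hq
        obtain ⟨D, c, h1, h2, h3, -⟩ := truncate q v d hq ⟨d, getLast?_mem hq.2.1, hd⟩
        exact ⟨D, c, h1, h2, h3⟩
      · exfalso
        push_neg at hq
        exact hno ⟨t, v, hv, Or.inr ⟨hcol, hvC, fun d hd hqq => by
          obtain ⟨q', hq'⟩ := hqq; exact hq d hd q' hq'⟩⟩
  have hget0 : p[0]? = some a := by rw [← List.head?_eq_getElem?]; exact hhead
  have haC : a ∉ C := hnc 0 a hget0 (by rintro ⟨h, -⟩; omega)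
  have hab : a ≠ b := fun h => Finset.disjoint_left.1 hAB ha (h ▸ hb)
  have hn2 : 2 ≤ p.length := by
    rcases Nat.lt_or_ge p.length 2 with h | h
    · exfalso
      have h1 : 1 ≤ p.length := List.length_pos_iff.2 (by intro hh; rw [hh] at hhead; exact absurd hhead (by simp))
      have hl1 : p.length = 1 := by omega
      obtain ⟨x, hx⟩ := List.length_eq_one_iff.1 hl1
      subst hx
      have h1 : x = a := by simpa using hhead
      have h2 : x = b := by simpa using hlast
      exact hab (h1 ▸ h2 ▸ rfl)
    · exact h
  have hgetb : p[p.length - 1]? = some b := by rw [← getLast?_eq_get?]; exact hlast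
  have hbC : b ∉ C := by
    refine hnc (p.length - 1) b hgetb ?_
    rintro ⟨-, x, y, z, -, -, hz, -, -⟩
    have := get?_some_lt hz
    omega
  -- the main loop
  have loop : ∀ fuel s, p.length - s ≤ fuel → s + 1 < p.length →
      (s = 0 ∨ (IsColliderAt E p s ∧ ∃ vs D c, p[s]? = some vs ∧ IsPath E D vs c ∧
        c ∈ C ∧ (∀ u ∈ D.dropLast, u ∉ C) ∧ c ∈ CB)) → False := by
    intro fuel
    induction fuel with
    | zero => intro s h1 h2 _; omega
    | succ f ih =>
      intro s hfuel hs hgood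
      by_cases hex : ∃ u, s < u ∧ IsColliderAt E p u
      · -- there is a next collider e
        obtain ⟨e, hse, hecol, hmin⟩ : ∃ e, s < e ∧ IsColliderAt E p e ∧
            ∀ u, s < u → u < e → ¬ IsColliderAt E p u :=
          ⟨Nat.find hex, (Nat.find_spec hex).1, (Nat.find_spec hex).2,
            fun u h1 h2 hc => Nat.find_min hex h2 ⟨h1, hc⟩⟩
        have hen : e + 1 < p.length := by
          obtain ⟨-, x, y, z, -, -, hz, -, -⟩ := hecol
          exact get?_some_lt hz
        obtain ⟨k, hsk, hke, hskc, hkec, vk, vs, ve, hvk, hvs, hve, hL, hR⟩ :=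
          segment_trek hE hchain hse (by omega) hmin
        have hklte : k < e := hkec hecol
        obtain ⟨De, ce, hDe, hceC, hDefree⟩ := hdesc e ve hve hecol
        have hInt : ∀ u v', s < u → u < e → p[u]? = some v' → v' ∉ C :=
          fun u v' h1 h2 hv' => hnc u v' hv' (hmin u h1 h2)
        -- the right path of the trek
        have hRfull : IsPath E (seg p k e ++ De.tail) vk ce := isPath_append hR hDe
        -- analyze a CB-hit of the right path
        have hright : ∀ v, v ∈ CB → v ∈ seg p k e ++ De.tail → v = ce := by
          intro v hvCB hv
          have hvC : v ∈ C := hCB hvCB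
          rcases List.mem_append.1 hv with hv | hv
          · obtain ⟨u, hu1, hu2, huv⟩ := seg_mem (by omega) (by omega) hv
            rcases Nat.lt_or_ge u e with hue | hue
            · exfalso
              rcases Nat.eq_or_lt_of_le hu1 with h | h
              · -- u = k
                rcases hgood with rfl | ⟨hscol, -⟩
                · rcases Nat.eq_zero_or_pos k with rfl | hk0
                  · rw [← h] at huv
                    rw [hget0] at huv
                    exact haC (Option.some_inj.1 huv ▸ hvC)
                  · exact hInt u v (by omega) hue huv hvC
                · have := hskc hscol
                  exact hInt u v (by omega) hue huv hvC
              · exact hInt u v (by omega) hue huv hvC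
            · have hue' : u = e := by omega
              subst hue'
              rw [hve, Option.some_inj] at huv
              subst huv
              exact (desc_head_C hDe hDefree hvC).symm ▸ rfl
          · have hvDe : v ∈ De := List.mem_of_mem_tail hv
            rcases mem_dropLast_or_getLast hvDe with h | h
            · exact absurd hvC (hDefree v h)
            · rw [hDe.2.1, Option.some_inj] at h
              exact h.symm
        -- build the left trek path and apply trek separation
        rcases hgood with rfl | ⟨hscol, vs', Ds, cs, hvs', hDs, hcsC, hDsfree, hcsCB⟩
        · -- s = 0, left endpoint is a
          have hvsa : vs = a := by rw [hget0, Option.some_inj] at hvs; exact hvs.symm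
          rw [hvsa] at hL
          have hhit := hT a (Finset.mem_union_left _ ha) ce (Finset.mem_union_right _ hceC)
            _ _ ⟨vk, hL, hRfull⟩
          rcases hhit with ⟨v, hvCA, hv⟩ | ⟨v, hvCB, hv⟩
          · -- hit on the left: impossible
            have hvC : v ∈ C := hCA hvCA
            rw [List.mem_reverse] at hv
            obtain ⟨u, hu1, hu2, huv⟩ := seg_mem (by omega) (by omega) hv
            rcases Nat.eq_zero_or_pos u with rfl | hu0
            · rw [hget0, Option.some_inj] at huv
              exact haC (huv ▸ hvC)
            · exact hInt u v (by omega) (by omega) huv hvC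
          · -- hit on the right gives ce ∈ CB, continue
            have hvce := hright v hvCB hv
            rw [hvce] at hvCB
            exact ih e (by omega) hen (Or.inr ⟨hecol, ve, De, ce, hve, hDe, hceC, hDefree, hvCB⟩)
        · -- s is a collider with data
          have hvs'' : vs' = vs := by rw [hvs, Option.some_inj] at hvs'; exact hvs'.symm
          subst hvs''
          have hLfull : IsPath E ((seg p s k).reverse ++ Ds.tail) vk cs := isPath_append hL hDs
          have hhit := hT cs (Finset.mem_union_right _ hcsC) ce (Finset.mem_union_right _ hceC)
            _ _ ⟨vk, hLfull, hRfull⟩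
          rcases hhit with ⟨v, hvCA, hv⟩ | ⟨v, hvCB, hv⟩
          · -- hit on the left: contradiction with cs ∈ CB
            exfalso
            have hvC : v ∈ C := hCA hvCA
            rcases List.mem_append.1 hv with hv | hv
            · rw [List.mem_reverse] at hv
              obtain ⟨u, hu1, hu2, huv⟩ := seg_mem (by omega) (by omega) hv
              rcases Nat.eq_or_lt_of_le hu1 with h | h
              · -- u = s : v = vs' then v = cs
                rw [← h] at huv
                rw [hvs, Option.some_inj] at huv
                subst huv
                have := desc_head_C hDs hDsfree hvC
                subst this
                exact Finset.disjoint_left.1 hdisj hvCA hcsCB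
              · have hk := hskc hscol
                exact hInt u v h (by omega) huv hvC
            · have hvDs : v ∈ Ds := List.mem_of_mem_tail hv
              rcases mem_dropLast_or_getLast hvDs with h | h
              · exact absurd hvC (hDsfree v h)
              · rw [hDs.2.1, Option.some_inj] at h
                subst h
                exact Finset.disjoint_left.1 hdisj hvCA hcsCB
          · have hvce := hright v hvCB hv
            rw [hvce] at hvCB
            exact ih e (by omega) hen (Or.inr ⟨hecol, ve, De, ce, hve, hDe, hceC, hDefree, hvCB⟩)
      · -- no more colliders: final segment to b
        push_neg at hex
        have hse : s < p.length - 1 := by omega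
        obtain ⟨k, hsk, hke, hskc, hkec, vk, vs, ve, hvk, hvs, hve, hL, hR⟩ :=
          segment_trek hE hchain hse (by omega) (fun u h1 _ => hex u h1)
        have hveb : ve = b := by rw [hgetb, Option.some_inj] at hve; exact hve.symm
        rw [hveb] at hR
        have hInt : ∀ u v', s < u → u < p.length - 1 → p[u]? = some v' → v' ∉ C :=
          fun u v' h1 h2 hv' => hnc u v' hv' (hex u h1)
        -- right-hit analysis
        have hright : ∀ v, v ∈ CB → v ∈ seg p k (p.length - 1) → False := by
          intro v hvCB hv
          have hvC : v ∈ C := hCB hvCB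
          obtain ⟨u, hu1, hu2, huv⟩ := seg_mem (by omega) (by omega) hv
          rcases Nat.lt_or_ge u (p.length - 1) with hue | hue
          · rcases Nat.eq_zero_or_pos u with rfl | hu0
            · rw [hget0, Option.some_inj] at huv
              exact haC (huv ▸ hvC)
            · rcases hgood with rfl | ⟨hscol, -⟩
              · exact hInt u v (by omega) hue huv hvC
              · have : s < u := by
                  rcases Nat.eq_or_lt_of_le (le_trans hsk hu1) with h | h
                  · exfalso
                    have := hskc hscol
                    omega
                  · omega
                exact hInt u v this hue huv hvC
          · have : u = p.length - 1 := by omega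
            subst this
            rw [hgetb, Option.some_inj] at huv
            exact hbC (huv ▸ hvC)
        rcases hgood with rfl | ⟨hscol, vs', Ds, cs, hvs', hDs, hcsC, hDsfree, hcsCB⟩
        · have hvsa : vs = a := by rw [hget0, Option.some_inj] at hvs; exact hvs.symm
          rw [hvsa] at hL
          have hhit := hT a (Finset.mem_union_left _ ha) b (Finset.mem_union_left _ hb)
            _ _ ⟨vk, hL, hR⟩
          rcases hhit with ⟨v, hvCA, hv⟩ | ⟨v, hvCB, hv⟩
          · have hvC : v ∈ C := hCA hvCA
            rw [List.mem_reverse] at hv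
            obtain ⟨u, hu1, hu2, huv⟩ := seg_mem (by omega) (by omega) hv
            rcases Nat.eq_zero_or_pos u with rfl | hu0
            · rw [hget0, Option.some_inj] at huv
              exact haC (huv ▸ hvC)
            · rcases Nat.lt_or_ge u (p.length - 1) with hue | hue
              · exact hInt u v (by omega) hue huv hvC
              · have : u = p.length - 1 := by omega
                subst this
                rw [hgetb, Option.some_inj] at huv
                exact hbC (huv ▸ hvC)
          · exact hright v hvCB hv
        · have hvs'' : vs' = vs := by rw [hvs, Option.some_inj] at hvs'; exact hvs'.symm
          subst hvs''
          have hLfull : IsPath E ((seg p s k).reverse ++ Ds.tail) vk cs := isPath_append hL hDs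
          have hhit := hT cs (Finset.mem_union_right _ hcsC) b (Finset.mem_union_left _ hb)
            _ _ ⟨vk, hLfull, hR⟩
          rcases hhit with ⟨v, hvCA, hv⟩ | ⟨v, hvCB, hv⟩
          · have hvC : v ∈ C := hCA hvCA
            rcases List.mem_append.1 hv with hv | hv
            · rw [List.mem_reverse] at hv
              obtain ⟨u, hu1, hu2, huv⟩ := seg_mem (by omega) (by omega) hv
              rcases Nat.eq_or_lt_of_le hu1 with h | h
              · rw [← h] at huv
                rw [hvs, Option.some_inj] at huv
                subst huv
                have := desc_head_C hDs hDsfree hvC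
                subst this
                exact Finset.disjoint_left.1 hdisj hvCA hcsCB
              · rcases Nat.lt_or_ge u (p.length - 1) with hue | hue
                · exact hInt u v h hue huv hvC
                · have : u = p.length - 1 := by omega
                  subst this
                  rw [hgetb, Option.some_inj] at huv
                  exact hbC (huv ▸ hvC)
            · have hvDs : v ∈ Ds := List.mem_of_mem_tail hv
              rcases mem_dropLast_or_getLast hvDs with h | h
              · exact absurd hvC (hDsfree v h)
              · rw [hDs.2.1, Option.some_inj] at h
                subst h
                exact Finset.disjoint_left.1 hdisj hvCA hcsCB
          · exact hright v hvCB hv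
  exact loop p.length 0 (by omega) (by omega) (Or.inl rfl)

end DT

/-- **d-separation is a special case of trek separation.** In a DAG `G`, a set `C`
d-separates disjoint sets `A` and `B` iff there is a partition `C = C_A ∪ C_B`
such that `(C_A, C_B)` trek-separates `A ∪ C` from `B ∪ C`. -/
theorem stmt11 (m : ℕ) (E : Fin m → Fin m → Prop)
    (hE : ∀ i j : Fin m, E i j → i < j) (A B C : Finset (Fin m))
    (hAB : Disjoint A B) :
    DSep E A B C
    ↔ ∃ CA CB : Finset (Fin m), Disjoint CA CB ∧ CA ∪ CB = C
        ∧ TSep E (A ∪ C) (B ∪ C) CA CB := by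
  constructor
  · intro hD
    exact DT.forward hE hD
  · rintro ⟨CA, CB, h1, h2, h3⟩
    exact DT.backward hE hAB h1 h2 h3
end
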